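/- arXiv:1205.5779 — 2 statements merged into one kernel-verified Lean document; each statement's English description precedes it below -/
import Mathlib

section
/- For all integers s, t ≥ 2 and every quartet q ∈ Q_{s,t}, the set Q_{s,t} \ {q} is compatible: there exists an unrooted phylogenetic tree on L_{s,t} displaying every quartet of Q_{s,t} other than q. -/
open SimpleGraph

universe u

/-- A quartet `xy|zw`: an unordered pair of unordered pairs of labels. -/
def quartet {L : Type u} (x y z w : L) : Sym2 (Sym2 L) := s(s(x, y), s(z, w))

/-- `q` is a genuine quartet: four pairwise distinct labels. -/
def IsQuartet {L : Type u} (q : Sym2 (Sym2 L)) : Prop :=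
  ∃ x y z w : L, x ≠ y ∧ x ≠ z ∧ x ≠ w ∧ y ≠ z ∧ y ≠ w ∧ z ≠ w ∧ q = quartet x y z w

/-- The label set `L(Q)` of a set of quartets. -/
def qLabelSet {L : Type u} (Q : Set (Sym2 (Sym2 L))) : Set L :=
  {x | ∃ q ∈ Q, ∃ p, p ∈ q ∧ x ∈ p}

/-- An unrooted phylogenetic tree whose leaves are in bijection with the label set `S`:
a finite tree with no degree-2 vertex, whose degree-1 vertices are exactly the labeled ones. -/
structure UTree (L : Type u) (S : Set L) where
  V : Type
  fV : Fintype V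
  G : SimpleGraph V
  isTree : G.IsTree
  label : S → V
  labelInj : Function.Injective label
  leafIff : ∀ v : V, (∃ l : S, label l = v) ↔ (G.neighborSet v).ncard = 1
  noDeg2 : ∀ v : V, (G.neighborSet v).ncard ≠ 2

/-- `T` displays the quartet `xy|zw`: the path between the leaves labeled `x` and `y`
is vertex-disjoint from the path between the leaves labeled `z` and `w`. -/
def UTree.displays4 {L : Type u} {S : Set L} (T : UTree L S) (x y z w : L) : Prop :=
  ∃ (hx : x ∈ S) (hy : y ∈ S) (hz : z ∈ S) (hw : w ∈ S)
    (p : T.G.Walk (T.label ⟨x, hx⟩) (T.label ⟨y, hy⟩))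
    (p' : T.G.Walk (T.label ⟨z, hz⟩) (T.label ⟨w, hw⟩)),
    p.IsPath ∧ p'.IsPath ∧ ∀ v, v ∈ p.support → v ∉ p'.support

def UTree.displays {L : Type u} {S : Set L} (T : UTree L S) (q : Sym2 (Sym2 L)) : Prop :=
  ∀ x y z w : L, q = quartet x y z w → T.displays4 x y z w

/-- A set of quartets is compatible over label set `S` if a single tree displays all of them. -/
def QCompat {L : Type u} (S : Set L) (Q : Set (Sym2 (Sym2 L))) : Prop :=
  ∃ T : UTree L S, ∀ q ∈ Q, T.displays q

/-- `χ` is a partition of the label set `S` (a character on `S`). -/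
def IsPartitionOn {L : Type u} (S : Set L) (χ : Set (Set L)) : Prop :=
  (∀ B ∈ χ, B.Nonempty ∧ B ⊆ S) ∧ ∀ x ∈ S, ∃! B, B ∈ χ ∧ x ∈ B

/-- The vertex set of the minimal subtree of `T` spanning the leaves labeled by `B`. -/
def UTree.span {L : Type u} {S : Set L} (T : UTree L S) (B : Set L) : Set T.V :=
  {v | ∃ (x y : L) (hx : x ∈ S) (hy : y ∈ S), x ∈ B ∧ y ∈ B ∧
    ∃ p : T.G.Walk (T.label ⟨x, hx⟩) (T.label ⟨y, hy⟩), p.IsPath ∧ v ∈ p.support}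

/-- The character `χ` is convex on `T`: spanning subtrees of distinct blocks are disjoint. -/
def UTree.convexOn {L : Type u} {S : Set L} (T : UTree L S) (χ : Set (Set L)) : Prop :=
  ∀ B ∈ χ, ∀ B' ∈ χ, B ≠ B' → ∀ v ∈ T.span B, v ∉ T.span B'

/-- A set of characters is compatible over `S` if a single tree makes all of them convex. -/
def CCompat {L : Type u} (S : Set L) (C : Set (Set (Set L))) : Prop :=
  ∃ T : UTree L S, ∀ χ ∈ C, T.convexOn χ

/-- The character `χ_q` corresponding to the quartet `xy|zw`:
blocks `{x,y}`, `{z,w}` and a singleton for every other label of `S`. -/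
def chiQ {L : Type u} (S : Set L) (x y z w : L) : Set (Set L) :=
  {{x, y}, {z, w}} ∪ {B | ∃ l ∈ S, l ≠ x ∧ l ≠ y ∧ l ≠ z ∧ l ≠ w ∧ B = {l}}

/-- The set of characters corresponding to a set of quartets. -/
def CQ {L : Type u} (S : Set L) (Q : Set (Sym2 (Sym2 L))) : Set (Set (Set L)) :=
  {χ | ∃ q ∈ Q, ∃ x y z w : L, q = quartet x y z w ∧ χ = chiQ S x y z w}

/-- A rooted phylogenetic tree on label set `S`. -/
structure RTree (L : Type u) (S : Set L) where
  V : Type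
  fV : Fintype V
  G : SimpleGraph V
  isTree : G.IsTree
  root : V
  label : S → V
  labelInj : Function.Injective label
  leafIff : ∀ v : V, (∃ l : S, label l = v) ↔ ((G.neighborSet v).ncard = 1 ∧ v ≠ root)
  noDeg2 : ∀ v : V, v ≠ root → (G.neighborSet v).ncard ≠ 2

/-- `u` is an ancestor of `v`: `u` lies on the path from the root to `v`. -/
def RTree.anc {L : Type u} {S : Set L} (T : RTree L S) (u v : T.V) : Prop :=
  ∃ p : T.G.Walk T.root v, p.IsPath ∧ u ∈ p.support

/-- `m` is the most recent common ancestor of the set `A` of vertices. -/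
def RTree.isMRCA {L : Type u} {S : Set L} (T : RTree L S) (A : Set T.V) (m : T.V) : Prop :=
  (∀ v ∈ A, T.anc m v) ∧ ∀ w, (∀ v ∈ A, T.anc w v) → T.anc w m

/-- `T` displays the rooted triplet `ab|c`: the MRCA of `{a,b}` is a proper
descendant of the MRCA of `{a,b,c}`. -/
def RTree.displays3 {L : Type u} {S : Set L} (T : RTree L S) (a b c : L) : Prop :=
  ∃ (ha : a ∈ S) (hb : b ∈ S) (hc : c ∈ S) (m M : T.V),
    T.isMRCA {T.label ⟨a, ha⟩, T.label ⟨b, hb⟩} m ∧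
    T.isMRCA {T.label ⟨a, ha⟩, T.label ⟨b, hb⟩, T.label ⟨c, hc⟩} M ∧
    T.anc M m ∧ M ≠ m

/-- A rooted triplet `ab|c` is encoded as the pair `(s(a,b), c)`. -/
def RTree.displays {L : Type u} {S : Set L} (T : RTree L S) (t : Sym2 L × L) : Prop :=
  ∀ a b c : L, t = (s(a, b), c) → T.displays3 a b c

def IsTriplet {L : Type u} (t : Sym2 L × L) : Prop :=
  ∃ a b c : L, a ≠ b ∧ a ≠ c ∧ b ≠ c ∧ t = (s(a, b), c)

/-- The label set `L(R)` of a set of rooted triplets. -/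
def tLabelSet {L : Type u} (R : Set (Sym2 L × L)) : Set L :=
  {x | ∃ t ∈ R, x ∈ t.1 ∨ x = t.2}

/-- A set of rooted triplets is compatible if one rooted tree displays all of them. -/
def RCompat {L : Type u} (S : Set L) (R : Set (Sym2 L × L)) : Prop :=
  ∃ T : RTree L S, ∀ t ∈ R, T.displays t

/-- The graph `[R,S]`: vertices `S`, with an edge `{a,b}` whenever `ab|c ∈ R` for some `c ∈ S`. -/
def tripGraph {L : Type u} (R : Set (Sym2 L × L)) (S : Set L) : SimpleGraph L where
  Adj x y := x ≠ y ∧ x ∈ S ∧ y ∈ S ∧ ∃ c ∈ S, (s(x, y), c) ∈ R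
  symm := by
    constructor
    rintro x y ⟨hxy, hx, hy, c, hc, hR⟩
    exact ⟨hxy.symm, hy, hx, c, hc, by rwa [Sym2.eq_swap]⟩
  loopless := by constructor; rintro x ⟨hx, -⟩; exact hx rfl

/-- The label set `L_{s,t} = {a_1,…,a_s, b_1,…,b_t}`, with `a_i = inl i` and `b_j = inr j`. -/
def Lst (s t : ℕ) : Set (ℕ ⊕ ℕ) := (Sum.inl '' Set.Icc 1 s) ∪ (Sum.inr '' Set.Icc 1 t)

/-- The quartet set `Q_{s,t} = {a_1b_1|a_sb_t} ∪ {a_i a_{i+1} | b_j b_{j+1} : 1 ≤ i < s, 1 ≤ j < t}`. -/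
def Qst (s t : ℕ) : Finset (Sym2 (Sym2 (ℕ ⊕ ℕ))) :=
  insert (quartet (Sum.inl 1) (Sum.inr 1) (Sum.inl s) (Sum.inr t))
    ((Finset.Ico 1 s ×ˢ Finset.Ico 1 t).image
      (fun p => quartet (Sum.inl p.1) (Sum.inl (p.1 + 1)) (Sum.inr p.2) (Sum.inr (p.2 + 1))))



open SimpleGraph

section Generic
variable {V : Type} [DecidableEq V]

/-- graph of a parent function -/
def pGraph (p : V → V) : SimpleGraph V where
  Adj x y := x ≠ y ∧ (p x = y ∨ p y = x)
  symm := by constructor; rintro x y ⟨h1, h2⟩; exact ⟨h1.symm, h2.symm⟩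
  loopless := by constructor; rintro x ⟨h1, -⟩; exact h1 rfl

variable {p : V → V} {h : V → ℕ} {r : V}

lemma pGraph_reach (hp : ∀ v, v ≠ r → h (p v) < h v) :
    ∀ n (v : V), h v ≤ n → (pGraph p).Reachable v r := by
  intro n
  induction n with
  | zero =>
    intro v hv
    by_cases hvr : v = r
    · subst hvr; exact Reachable.refl _
    · exact absurd (lt_of_lt_of_le (hp v hvr) hv) (by omega)
  | succ n ih =>
    intro v hv
    by_cases hvr : v = r
    · subst hvr; exact Reachable.refl _
    · have hlt := hp v hvr
      have hne : v ≠ p v := fun e => by rw [← e] at hlt; omega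
      have hadj : (pGraph p).Adj v (p v) := ⟨hne, Or.inl rfl⟩
      exact hadj.reachable.trans (ih (p v) (by omega))

lemma pGraph_connected (hp : ∀ v, v ≠ r → h (p v) < h v) : (pGraph p).Connected := by
  rw [connected_iff]
  refine ⟨fun u v => ?_, ⟨r⟩⟩
  exact (pGraph_reach hp (h u) u le_rfl).trans (pGraph_reach hp (h v) v le_rfl).symm

lemma pGraph_adj_h (hr : p r = r) (hp : ∀ v, v ≠ r → h (p v) < h v) {x y : V}
    (hxy : (pGraph p).Adj x y) : (p x = y ∧ h y < h x) ∨ (p y = x ∧ h x < h y) := by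
  obtain ⟨hne, hc | hc⟩ := hxy
  · left
    refine ⟨hc, ?_⟩
    by_cases hxr : x = r
    · subst hxr; rw [hr] at hc; exact absurd hc hne
    · rw [← hc]; exact hp x hxr
  · right
    refine ⟨hc, ?_⟩
    by_cases hyr : y = r
    · subst hyr; rw [hr] at hc; exact absurd hc (Ne.symm hne)
    · rw [← hc]; exact hp y hyr

lemma pGraph_acyclic (hr : p r = r) (hp : ∀ v, v ≠ r → h (p v) < h v) :
    (pGraph p).IsAcyclic := by
  intro v c hc
  -- pick a vertex of maximal height on the cycle
  obtain ⟨m, hm_mem, hm_max⟩ : ∃ m ∈ c.support.toFinset, ∀ x ∈ c.support.toFinset, h x ≤ h m :=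
    Finset.exists_max_image _ h ⟨v, by simp [Walk.start_mem_support]⟩
  rw [List.mem_toFinset] at hm_mem
  have hmax : ∀ x ∈ (c.rotate m hm_mem).support, h x ≤ h m := by
    intro x hx
    have htail := Walk.support_rotate c m hm_mem
    rw [(c.rotate m hm_mem).support_eq_cons, List.mem_cons] at hx
    rcases hx with hx | hx
    · exact hx ▸ le_rfl
    · exact hm_max x (List.mem_toFinset.2 (List.tail_subset _ (htail.mem_iff.mp hx)))
  have hc' := hc.rotate hm_mem
  set c' := c.rotate m hm_mem with hc'def
  clear_value c'
  -- decompose c'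
  cases c' with
  | nil => exact hc'.ne_nil rfl
  | @cons _ w _ hadj q =>
    have hw : h w ≤ h m := hmax w (by simp [Walk.support_cons])
    have hpw : p m = w := by
      rcases pGraph_adj_h hr hp hadj with ⟨h1, -⟩ | ⟨h1, h2⟩
      · exact h1
      · omega
    -- reverse
    rcases hrev : (Walk.cons hadj q).reverse with _ | @⟨_, u, _, hadj', q'⟩
    · exact absurd (congrArg Walk.length hrev) (by simp)
    · have hu : h u ≤ h m := by
        have : u ∈ (Walk.cons hadj q).reverse.support := by rw [hrev]; simp [Walk.support_cons]
        rw [Walk.support_reverse, List.mem_reverse] at this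
        exact hmax u this
      have hpu : p m = u := by
        rcases pGraph_adj_h hr hp hadj' with ⟨h1, -⟩ | ⟨h1, h2⟩
        · exact h1
        · omega
      -- edges
      have hedges : (Walk.cons hadj q).edges.reverse = s(m, u) :: q'.edges := by
        rw [← Walk.edges_reverse, hrev, Walk.edges_cons]
      have hnodup := hc'.isCircuit.isTrail.edges_nodup
      rw [Walk.edges_cons] at hnodup hedges
      have hqne : q.edges ≠ [] := by
        have h3 := hc'.three_le_length
        have := q.length_edges
        simp only [Walk.length_cons] at h3
        intro hnil; rw [hnil] at this; simp at this; omega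
      rcases he : q.edges.reverse with _ | ⟨e, es⟩
      · exact hqne (by simpa using congrArg List.reverse he)
      · rw [List.reverse_cons, he, List.cons_append] at hedges
        have hwu : w = u := hpw ▸ hpu
        have he2 : e = s(m, w) := by
          have := (List.cons_eq_cons.mp hedges).1
          rw [this, hwu]
        have hmem : s(m, w) ∈ q.edges := by
          rw [← List.mem_reverse, he, ← he2]
          exact List.mem_cons_self
        rw [List.nodup_cons] at hnodup
        exact hnodup.1 hmem

lemma pGraph_isTree [Fintype V] (hr : p r = r) (hp : ∀ v, v ≠ r → h (p v) < h v) :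
    (pGraph p).IsTree :=
  ⟨pGraph_connected hp, pGraph_acyclic hr hp⟩

end Generic

section Degree
variable {V : Type} [DecidableEq V] {p : V → V} {h : V → ℕ} {r : V}

lemma pGraph_leaf_ncard (hp : ∀ v, v ≠ r → h (p v) < h v) (x : V) (hx : x ≠ r)
    (hleaf : ∀ y, p y ≠ x) : ((pGraph p).neighborSet x).ncard = 1 := by
  have hnb : (pGraph p).neighborSet x = {p x} := by
    ext y
    simp only [mem_neighborSet, Set.mem_singleton_iff]
    constructor
    · rintro ⟨hne, hc | hc⟩
      · exact hc.symm
      · exact absurd hc (hleaf y)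
    · rintro rfl
      refine ⟨fun e => ?_, Or.inl rfl⟩
      have := hp x hx
      rw [← e] at this; omega
  rw [hnb, Set.ncard_singleton]

lemma ncard_ge3 {W : Type} [Fintype W] {G : SimpleGraph W} {x a b c : W}
    (ha : G.Adj x a) (hb : G.Adj x b) (hc : G.Adj x c)
    (hab : a ≠ b) (hac : a ≠ c) (hbc : b ≠ c) : 3 ≤ (G.neighborSet x).ncard := by
  have hsub : ({a, b, c} : Set W) ⊆ G.neighborSet x := by
    rintro y (rfl | rfl | rfl) <;> assumption
  have h3 : ({a, b, c} : Set W).ncard = 3 := by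
    rw [Set.ncard_insert_of_notMem (by simp [hab, hac]) (Set.toFinite _),
      Set.ncard_insert_of_notMem (by simp [hbc]) (Set.toFinite _), Set.ncard_singleton]
  rw [← h3]
  exact Set.ncard_le_ncard hsub (Set.toFinite _)

end Degree

section Join
variable {V : Type} {G : SimpleGraph V}

open SimpleGraph.Walk in
lemma walk_join {u v u' w : V} (p : G.Walk u v) (hadj : G.Adj v u') (q : G.Walk u' w)
    (hp : p.IsPath) (hq : q.IsPath) (hdisj : ∀ x ∈ p.support, x ∉ q.support) :
    ∃ pq : G.Walk u w, pq.IsPath ∧ pq.support = p.support ++ q.support := by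
  refine ⟨p.append (Walk.cons hadj q), ?_, ?_⟩
  · rw [Walk.isPath_def, Walk.support_append, Walk.support_cons, List.tail_cons]
    rw [List.nodup_append]
    exact ⟨hp.support_nodup, hq.support_nodup, fun x hx y hy e => hdisj x hx (e ▸ hy)⟩
  · rw [Walk.support_append, Walk.support_cons, List.tail_cons]
end Join

section Base4

/-- Base vertex type: leaves `a_m`, `b_l` and internal vertices on two chains. -/
abbrev Base : Type := (ℕ ⊕ ℕ) ⊕ (ℕ ⊕ ℕ)

def La (m : ℕ) : Base := Sum.inl (Sum.inl m)
def Lb (l : ℕ) : Base := Sum.inl (Sum.inr l)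
def Ma (m : ℕ) : Base := Sum.inr (Sum.inl m)
def Nb (l : ℕ) : Base := Sum.inr (Sum.inr l)

@[simp] lemma La_inj {a b : ℕ} : La a = La b ↔ a = b := by simp [La]
@[simp] lemma Lb_inj {a b : ℕ} : Lb a = Lb b ↔ a = b := by simp [Lb]
@[simp] lemma Ma_inj {a b : ℕ} : Ma a = Ma b ↔ a = b := by simp [Ma]
@[simp] lemma Nb_inj {a b : ℕ} : Nb a = Nb b ↔ a = b := by simp [Nb]
@[simp] lemma La_ne_Lb {a b : ℕ} : La a ≠ Lb b := by simp [La, Lb]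
@[simp] lemma La_ne_Ma {a b : ℕ} : La a ≠ Ma b := by simp [La, Ma]
@[simp] lemma La_ne_Nb {a b : ℕ} : La a ≠ Nb b := by simp [La, Nb]
@[simp] lemma Lb_ne_La {a b : ℕ} : Lb a ≠ La b := by simp [La, Lb]
@[simp] lemma Lb_ne_Ma {a b : ℕ} : Lb a ≠ Ma b := by simp [Lb, Ma]
@[simp] lemma Lb_ne_Nb {a b : ℕ} : Lb a ≠ Nb b := by simp [Lb, Nb]
@[simp] lemma Ma_ne_La {a b : ℕ} : Ma a ≠ La b := by simp [La, Ma]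
@[simp] lemma Ma_ne_Lb {a b : ℕ} : Ma a ≠ Lb b := by simp [Lb, Ma]
@[simp] lemma Ma_ne_Nb {a b : ℕ} : Ma a ≠ Nb b := by simp [Ma, Nb]
@[simp] lemma Nb_ne_La {a b : ℕ} : Nb a ≠ La b := by simp [La, Nb]
@[simp] lemma Nb_ne_Lb {a b : ℕ} : Nb a ≠ Lb b := by simp [Lb, Nb]
@[simp] lemma Nb_ne_Ma {a b : ℕ} : Nb a ≠ Ma b := by simp [Ma, Nb]

lemma base_finite (P : Base → Prop) (N : ℕ)
    (hP : ∀ v, P v → ∃ m, m ≤ N ∧ (v = La m ∨ v = Lb m ∨ v = Ma m ∨ v = Nb m)) :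
    (setOf P).Finite := by
  have hsub : setOf P ⊆
      ↑(((Finset.range (N+1)).image La) ∪ ((Finset.range (N+1)).image Lb) ∪
        ((Finset.range (N+1)).image Ma) ∪ ((Finset.range (N+1)).image Nb)) := by
    intro v hv
    obtain ⟨m, hm, hc⟩ := hP v hv
    simp only [Finset.coe_union, Set.mem_union, Finset.coe_image, Set.mem_image,
      Finset.mem_coe, Finset.mem_range]
    rcases hc with rfl | rfl | rfl | rfl
    · exact Or.inl (Or.inl (Or.inl ⟨m, by omega, rfl⟩))
    · exact Or.inl (Or.inl (Or.inr ⟨m, by omega, rfl⟩))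
    · exact Or.inl (Or.inr ⟨m, by omega, rfl⟩)
    · exact Or.inr ⟨m, by omega, rfl⟩
  exact Set.Finite.subset (Finset.finite_toSet _) hsub

end Base4

section Displays
variable {L : Type u} {S : Set L} {T : UTree L S} {x y z w : L}

lemma d4_swap1 (h : T.displays4 x y z w) : T.displays4 y x z w := by
  obtain ⟨hx, hy, hz, hw, p, p', hp, hp', hd⟩ := h
  refine ⟨hy, hx, hz, hw, p.reverse, p', hp.reverse, hp', fun v hv => ?_⟩
  rw [SimpleGraph.Walk.support_reverse, List.mem_reverse] at hv
  exact hd v hv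

lemma d4_swap2 (h : T.displays4 x y z w) : T.displays4 x y w z := by
  obtain ⟨hx, hy, hz, hw, p, p', hp, hp', hd⟩ := h
  refine ⟨hx, hy, hw, hz, p, p'.reverse, hp, hp'.reverse, fun v hv hv' => ?_⟩
  rw [SimpleGraph.Walk.support_reverse, List.mem_reverse] at hv'
  exact hd v hv hv'

lemma d4_swapP (h : T.displays4 x y z w) : T.displays4 z w x y := by
  obtain ⟨hx, hy, hz, hw, p, p', hp, hp', hd⟩ := h
  exact ⟨hz, hw, hx, hy, p', p, hp', hp, fun v hv hv' => hd v hv' hv⟩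

lemma displays_of_d4 {a b c d : L} (h : T.displays4 a b c d) :
    T.displays (quartet a b c d) := by
  intro x y z w heq
  rw [quartet, quartet, Sym2.eq_iff] at heq
  rcases heq with ⟨h1, h2⟩ | ⟨h1, h2⟩ <;> rw [Sym2.eq_iff] at h1 h2 <;>
    rcases h1 with ⟨rfl, rfl⟩ | ⟨rfl, rfl⟩ <;> rcases h2 with ⟨rfl, rfl⟩ | ⟨rfl, rfl⟩
  · exact h
  · exact d4_swap2 h
  · exact d4_swap1 h
  · exact d4_swap2 (d4_swap1 h)
  · exact d4_swapP h
  · exact d4_swap1 (d4_swapP h)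
  · exact d4_swap2 (d4_swapP h)
  · exact d4_swap1 (d4_swap2 (d4_swapP h))

end Displays

section LstMem

lemma mem_Lst_a {s t k : ℕ} (h1 : 1 ≤ k) (h2 : k ≤ s) : (Sum.inl k : ℕ ⊕ ℕ) ∈ Lst s t :=
  Or.inl ⟨k, ⟨h1, h2⟩, rfl⟩

lemma mem_Lst_b {s t k : ℕ} (h1 : 1 ≤ k) (h2 : k ≤ t) : (Sum.inr k : ℕ ⊕ ℕ) ∈ Lst s t :=
  Or.inr ⟨k, ⟨h1, h2⟩, rfl⟩

end LstMem

section C1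

/-! ### Construction 1: caterpillar with leaf order `a_1 … a_s b_t … b_1`. -/

variable (s t : ℕ)

def fc (m : ℕ) : ℕ := if m = 1 then 1 else m - 1
def gd (l : ℕ) : ℕ := if l = 1 then s + t - 2 else s + t - l

def ok1 : Base → Prop
  | .inl (.inl m) => 1 ≤ m ∧ m ≤ s
  | .inl (.inr l) => 1 ≤ l ∧ l ≤ t
  | .inr (.inl m) => 1 ≤ m ∧ m ≤ s + t - 2
  | .inr (.inr _) => False

@[simp] lemma ok1_La {m : ℕ} : ok1 s t (La m) ↔ 1 ≤ m ∧ m ≤ s := Iff.rfl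
@[simp] lemma ok1_Lb {l : ℕ} : ok1 s t (Lb l) ↔ 1 ≤ l ∧ l ≤ t := Iff.rfl
@[simp] lemma ok1_Ma {m : ℕ} : ok1 s t (Ma m) ↔ 1 ≤ m ∧ m ≤ s + t - 2 := Iff.rfl
@[simp] lemma ok1_Nb {l : ℕ} : ok1 s t (Nb l) ↔ False := Iff.rfl

def p1 : Base → Base
  | .inl (.inl m) => Ma (fc m)
  | .inl (.inr l) => Ma (gd s t l)
  | .inr (.inl m) => if m ≤ 1 then Ma 1 else Ma (m - 1)
  | .inr (.inr _) => Ma 1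

@[simp] lemma p1_La {m : ℕ} : p1 s t (La m) = Ma (fc m) := rfl
@[simp] lemma p1_Lb {l : ℕ} : p1 s t (Lb l) = Ma (gd s t l) := rfl
@[simp] lemma p1_Ma {m : ℕ} : p1 s t (Ma m) = if m ≤ 1 then Ma 1 else Ma (m - 1) := rfl
@[simp] lemma p1_Nb {l : ℕ} : p1 s t (Nb l) = Ma 1 := rfl

def h1 : Base → ℕ
  | .inl (.inl m) => fc m + 1
  | .inl (.inr l) => gd s t l + 1
  | .inr (.inl m) => m
  | .inr (.inr _) => 0

def V1 : Type := {v : Base // ok1 s t v}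

instance : DecidableEq (V1 s t) := by unfold V1; infer_instance

noncomputable instance : Fintype (V1 s t) := by
  have hfin : (setOf (ok1 s t)).Finite := by
    apply base_finite _ (s + t)
    rintro ((m | m) | (m | m)) hv
    · exact ⟨m, ⟨by simp [ok1] at hv; omega, Or.inl rfl⟩⟩
    · exact ⟨m, ⟨by simp [ok1] at hv; omega, Or.inr (Or.inl rfl)⟩⟩
    · exact ⟨m, ⟨by simp [ok1] at hv; omega, Or.inr (Or.inr (Or.inl rfl))⟩⟩
    · simp [ok1] at hv
  exact hfin.fintype

variable {s t} (hs : 2 ≤ s) (ht : 2 ≤ t)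
include hs ht

lemma ok1_p1 : ∀ v : Base, ok1 s t v → ok1 s t (p1 s t v) := by
  rintro ((m | m) | (m | m)) hv <;>
    simp [ok1, p1, fc, gd, La, Lb, Ma, Nb] at hv ⊢ <;> (try split_ifs) <;> omega

def pp1 : V1 s t → V1 s t := fun v => ⟨p1 s t v.val, ok1_p1 hs ht v.val v.2⟩

def root1 : V1 s t := ⟨Ma 1, by simp <;> omega⟩

def G1 : SimpleGraph (V1 s t) := pGraph (pp1 hs ht)

lemma hp1 : ∀ v : V1 s t, v ≠ root1 hs ht →
    h1 s t ((pp1 hs ht v).val) < h1 s t v.val := by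
  rintro ⟨((m | m) | (m | m)), hv⟩ hne <;>
    simp [ok1] at hv
  · simp [pp1, h1, p1, fc, Ma, La]
  · simp [pp1, h1, p1, gd, Ma, Lb]
  · have hne' : m ≠ 1 := fun e => hne (Subtype.ext (by subst e; rfl))
    simp only [pp1, h1, p1]
    split_ifs <;> simp [h1, Ma] <;> omega

lemma isTree1 : (G1 hs ht).IsTree := by
  apply pGraph_isTree (r := root1 hs ht) (h := fun v => h1 s t v.val)
  · apply Subtype.ext
    show p1 s t (Ma 1) = Ma 1
    rw [p1_Ma]
    simp
  · exact hp1 hs ht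

lemma adj1_parent {x y : V1 s t} (hpar : p1 s t y.val = x.val) (hne : x.val ≠ y.val) :
    (G1 hs ht).Adj x y :=
  ⟨fun e => hne (congrArg Subtype.val e), Or.inr (Subtype.ext hpar)⟩

lemma adj1_child {x y : V1 s t} (hpar : p1 s t x.val = y.val) (hne : x.val ≠ y.val) :
    (G1 hs ht).Adj x y :=
  ⟨fun e => hne (congrArg Subtype.val e), Or.inl (Subtype.ext hpar)⟩

omit hs ht in
lemma p1_isMa (v : Base) : ∃ m, p1 s t v = Ma m := by
  rcases v with ((m | m) | (m | m))
  · exact ⟨fc m, rfl⟩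
  · exact ⟨gd s t m, rfl⟩
  · by_cases hm : m ≤ 1
    · exact ⟨1, by show p1 s t (Ma m) = Ma 1; rw [p1_Ma, if_pos hm]⟩
    · exact ⟨m - 1, by show p1 s t (Ma m) = Ma (m-1); rw [p1_Ma, if_neg hm]⟩
  · exact ⟨1, rfl⟩

omit hs ht in
lemma vne1 {a b : Base} {ha : ok1 s t a} {hb : ok1 s t b} (h : a ≠ b) :
    (⟨a, ha⟩ : V1 s t) ≠ ⟨b, hb⟩ := fun e => h (congrArg Subtype.val e)

lemma leaf1_ncard (x : V1 s t) (hx : ∃ m, x.val = La m ∨ x.val = Lb m) :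
    ((G1 hs ht).neighborSet x).ncard = 1 := by
  apply pGraph_leaf_ncard (h := fun v => h1 s t v.val) (hp1 hs ht)
  · obtain ⟨m, hm | hm⟩ := hx <;>
      exact fun e => by rw [e] at hm; simp [root1, Ma, La, Lb] at hm
  · intro y he
    have hv : p1 s t y.val = x.val := congrArg Subtype.val he
    obtain ⟨m', hm'⟩ := p1_isMa (s := s) (t := t) y.val
    obtain ⟨m, hm | hm⟩ := hx <;> rw [hm, hm'] at hv <;> simp at hv

lemma int1_deg (v : V1 s t) (m : ℕ) (hm : v.val = Ma m) :
    3 ≤ ((G1 hs ht).neighborSet v).ncard := by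
  have hv := v.2
  rw [hm, ok1_Ma] at hv
  rcases Nat.lt_or_ge m 2 with h1' | h1'
  · have hm1 : m = 1 := by omega
    subst hm1
    refine ncard_ge3 (a := ⟨La 1, by simp <;> omega⟩) (b := ⟨La 2, by simp <;> omega⟩)
      (c := ⟨Ma 2, by simp <;> omega⟩) ?_ ?_ ?_ ?_ ?_ ?_
    · exact adj1_parent hs ht (by simp [fc, hm]) (by simp [hm])
    · exact adj1_parent hs ht (by simp [fc, hm]) (by simp [hm])
    · exact adj1_parent hs ht (by simp [hm]) (by simp [hm])
    · exact vne1 (by simp)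
    · exact vne1 (by simp)
    · exact vne1 (by simp)
  rcases Nat.lt_or_ge m (s + t - 2) with h2' | h2'
  · -- middle vertex
    rcases Nat.lt_or_ge m s with h3' | h3'
    · refine ncard_ge3 (a := ⟨Ma (m-1), by simp <;> omega⟩) (b := ⟨Ma (m+1), by simp <;> omega⟩)
        (c := ⟨La (m+1), by simp <;> omega⟩) ?_ ?_ ?_ ?_ ?_ ?_
      · refine adj1_child hs ht ?_ (by simp [hm] <;> omega)
        rw [hm]; simp only [p1_Ma]; rw [if_neg (by omega)]
      · refine adj1_parent hs ht ?_ (by simp [hm] <;> omega)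
        simp only [p1_Ma]; rw [if_neg (by omega), hm]; simp
      · refine adj1_parent hs ht ?_ (by simp [hm])
        simp only [p1_La, fc]; rw [if_neg (by omega), hm]; simp
      · exact vne1 (by simp <;> omega)
      · exact vne1 (by simp)
      · exact vne1 (by simp)
    · have harg : gd s t (s + t - m) = m := by
        simp only [gd]; split_ifs <;> omega
      refine ncard_ge3 (a := ⟨Ma (m-1), by simp <;> omega⟩) (b := ⟨Ma (m+1), by simp <;> omega⟩)
        (c := ⟨Lb (s + t - m), by simp <;> omega⟩) ?_ ?_ ?_ ?_ ?_ ?_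
      · refine adj1_child hs ht ?_ (by simp [hm] <;> omega)
        rw [hm]; simp only [p1_Ma]; rw [if_neg (by omega)]
      · refine adj1_parent hs ht ?_ (by simp [hm] <;> omega)
        simp only [p1_Ma]; rw [if_neg (by omega), hm]; simp
      · refine adj1_parent hs ht ?_ (by simp [hm])
        simp only [p1_Lb]; rw [harg, hm]
      · exact vne1 (by simp <;> omega)
      · exact vne1 (by simp)
      · exact vne1 (by simp)
  · -- last spine vertex, m = s + t - 2
    have hm2 : m = s + t - 2 := by omega
    have hgd1 : gd s t 1 = m := by simp [gd, hm2]
    have hgd2 : gd s t 2 = m := by simp only [gd]; rw [if_neg (by omega)]; omega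
    refine ncard_ge3 (a := ⟨Lb 1, by simp <;> omega⟩) (b := ⟨Lb 2, by simp <;> omega⟩)
      (c := ⟨Ma (m-1), by simp <;> omega⟩) ?_ ?_ ?_ ?_ ?_ ?_
    · exact adj1_parent hs ht (by simp only [p1_Lb]; rw [hgd1, hm]) (by simp [hm])
    · exact adj1_parent hs ht (by simp only [p1_Lb]; rw [hgd2, hm]) (by simp [hm])
    · refine adj1_child hs ht ?_ (by simp [hm] <;> omega)
      rw [hm]; simp only [p1_Ma]; rw [if_neg (by omega)]
    · exact vne1 (by simp)
    · exact vne1 (by simp)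
    · exact vne1 (by simp)

omit hs ht in
def lab1 (l : Lst s t) : V1 s t := ⟨Sum.inl l.val, by
  obtain ⟨x, hx⟩ := l
  rcases hx with ⟨m, hm, rfl⟩ | ⟨m, hm, rfl⟩
  · exact ⟨hm.1, hm.2⟩
  · exact ⟨hm.1, hm.2⟩⟩

noncomputable def T1 : UTree (ℕ ⊕ ℕ) (Lst s t) where
  V := V1 s t
  fV := inferInstance
  G := G1 hs ht
  isTree := isTree1 hs ht
  label := lab1
  labelInj := by
    intro x y hxy
    apply Subtype.ext
    have := congrArg Subtype.val hxy
    simpa [lab1] using this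
  leafIff := by
    intro v
    constructor
    · rintro ⟨l, rfl⟩
      apply leaf1_ncard hs ht
      obtain ⟨x, hx⟩ := l
      rcases x with m | m
      · exact ⟨m, Or.inl rfl⟩
      · exact ⟨m, Or.inr rfl⟩
    · intro hn
      rcases v with ⟨((m | m) | (m | m)), hv⟩
      · exact ⟨⟨Sum.inl m, Or.inl ⟨m, ⟨hv.1, hv.2⟩, rfl⟩⟩, rfl⟩
      · exact ⟨⟨Sum.inr m, Or.inr ⟨m, ⟨hv.1, hv.2⟩, rfl⟩⟩, rfl⟩
      · exfalso
        have := int1_deg hs ht ⟨_, hv⟩ m rfl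
        omega
      · exact absurd hv (by simp [ok1])
  noDeg2 := by
    intro v
    rcases v with ⟨((m | m) | (m | m)), hv⟩
    · have := leaf1_ncard hs ht ⟨_, hv⟩ ⟨m, Or.inl rfl⟩; omega
    · have := leaf1_ncard hs ht ⟨_, hv⟩ ⟨m, Or.inr rfl⟩; omega
    · have := int1_deg hs ht ⟨_, hv⟩ m rfl; omega
    · exact absurd hv (by simp [ok1])

lemma T1_label {x : ℕ ⊕ ℕ} (hx : x ∈ Lst s t) :
    ((T1 hs ht).label ⟨x, hx⟩).val = Sum.inl x := rfl

lemma chain1 (d : ℕ) : ∀ (a : ℕ), 1 ≤ a → a + d ≤ s + t - 2 →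
    ∀ (va vb : V1 s t), va.val = Ma a → vb.val = Ma (a + d) →
    ∃ p : (G1 hs ht).Walk va vb, p.IsPath ∧
      ∀ v ∈ p.support, ∃ m, a ≤ m ∧ m ≤ a + d ∧ v.val = Ma m := by
  induction d with
  | zero =>
    intro a ha had va vb hva hvb
    have hee : va = vb := Subtype.ext (by rw [hva, hvb]; simp)
    subst hee
    refine ⟨SimpleGraph.Walk.nil, SimpleGraph.Walk.IsPath.nil, ?_⟩
    intro v hv
    simp only [SimpleGraph.Walk.support_nil, List.mem_singleton] at hv
    exact ⟨a, le_rfl, by omega, hv ▸ hva⟩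
  | succ d ih =>
    intro a ha had va vb hva hvb
    have hwok : ok1 s t (Ma (a+1)) := by simp <;> omega
    set w : V1 s t := ⟨Ma (a+1), hwok⟩ with hwdef
    have hpar : p1 s t (Ma (a+1)) = Ma a := by
      simp only [p1_Ma]; rw [if_neg (by omega)]; simp
    have hadj : (G1 hs ht).Adj va w :=
      adj1_parent hs ht (by show p1 s t (Ma (a+1)) = va.val; rw [hpar, hva])
        (by rw [hva, hwdef]; simp [Ma])
    obtain ⟨p, hp, hsupp⟩ := ih (a+1) (by omega) (by omega) w vb rfl
      (by rw [hvb]; congr 1; omega)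
    refine ⟨SimpleGraph.Walk.cons hadj p, ?_, ?_⟩
    · rw [SimpleGraph.Walk.cons_isPath_iff]
      refine ⟨hp, fun hmem => ?_⟩
      obtain ⟨m, hm1, hm2, hm3⟩ := hsupp va hmem
      rw [hva] at hm3
      simp at hm3 <;> omega
    · intro v hv
      rw [SimpleGraph.Walk.support_cons, List.mem_cons] at hv
      rcases hv with rfl | hv
      · exact ⟨a, le_rfl, by omega, hva⟩
      · obtain ⟨m, h1, h2, h3⟩ := hsupp v hv
        exact ⟨m, by omega, by omega, h3⟩

lemma chain1' (a b : ℕ) (ha : 1 ≤ a) (hab : a ≤ b) (hb : b ≤ s + t - 2)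
    (va vb : V1 s t) (hva : va.val = Ma a) (hvb : vb.val = Ma b) :
    ∃ p : (G1 hs ht).Walk va vb, p.IsPath ∧
      ∀ v ∈ p.support, ∃ m, a ≤ m ∧ m ≤ b ∧ v.val = Ma m := by
  obtain ⟨p, hp, hsupp⟩ := chain1 hs ht (b - a) a ha (by omega) va vb hva
    (by rw [hvb]; congr 1; omega)
  exact ⟨p, hp, fun v hv => by obtain ⟨m, h1, h2, h3⟩ := hsupp v hv; exact ⟨m, h1, by omega, h3⟩⟩

lemma apath1 (k : ℕ) (hk : 1 ≤ k) (hk2 : k + 1 ≤ s) (x y : V1 s t)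
    (hx : x.val = La k) (hy : y.val = La (k+1)) :
    ∃ p : (G1 hs ht).Walk x y, p.IsPath ∧
      ∀ v ∈ p.support, v.val = La k ∨ v.val = La (k+1) ∨
        ∃ m, 1 ≤ m ∧ m ≤ s - 1 ∧ v.val = Ma m := by
  have hfk1 : 1 ≤ fc k := by simp [fc]; split_ifs <;> omega
  have hfk2 : fc k ≤ fc (k+1) := by simp [fc]; split_ifs <;> omega
  have hfk3 : fc (k+1) ≤ s - 1 := by simp only [fc]; split_ifs <;> omega
  have huok : ok1 s t (Ma (fc k)) := by simp <;> omega
  have hwok : ok1 s t (Ma (fc (k+1))) := by simp <;> omega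
  obtain ⟨ch, hch, hchs⟩ := chain1' hs ht (fc k) (fc (k+1)) hfk1 hfk2 (by omega)
    ⟨Ma (fc k), huok⟩ ⟨Ma (fc (k+1)), hwok⟩ rfl rfl
  have hadj1 : (G1 hs ht).Adj x ⟨Ma (fc k), huok⟩ :=
    adj1_child hs ht (by rw [hx]; simp) (by rw [hx]; simp)
  obtain ⟨p1w, hp1w, hp1ws⟩ := walk_join SimpleGraph.Walk.nil hadj1 ch
    SimpleGraph.Walk.IsPath.nil hch
    (by intro v hv
        simp only [SimpleGraph.Walk.support_nil, List.mem_singleton] at hv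
        subst hv
        intro hmem
        obtain ⟨m, _, _, h3⟩ := hchs _ hmem
        rw [hx] at h3; simp at h3)
  have hadj2 : (G1 hs ht).Adj (⟨Ma (fc (k+1)), hwok⟩ : V1 s t) y :=
    adj1_parent hs ht (by rw [hy]; simp) (by rw [hy]; simp)
  obtain ⟨p2w, hp2w, hp2ws⟩ := walk_join p1w hadj2 SimpleGraph.Walk.nil hp1w
    SimpleGraph.Walk.IsPath.nil
    (by intro v hv
        simp only [SimpleGraph.Walk.support_nil, List.mem_singleton]
        intro he
        subst he
        rw [hp1ws, List.mem_append] at hv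
        rcases hv with hv | hv
        · simp only [SimpleGraph.Walk.support_nil, List.mem_singleton] at hv
          subst hv
          rw [hy] at hx; simp at hx <;> omega
        · obtain ⟨m, _, _, h3⟩ := hchs _ hv
          rw [hy] at h3; simp at h3)
  refine ⟨p2w, hp2w, ?_⟩
  intro v hv
  rw [hp2ws, List.mem_append, hp1ws, List.mem_append] at hv
  rcases hv with (hv | hv) | hv
  · simp only [SimpleGraph.Walk.support_nil, List.mem_singleton] at hv
    exact Or.inl (hv ▸ hx)
  · obtain ⟨m, h1, h2, h3⟩ := hchs _ hv
    exact Or.inr (Or.inr ⟨m, by omega, by omega, h3⟩)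
  · simp only [SimpleGraph.Walk.support_nil, List.mem_singleton] at hv
    exact Or.inr (Or.inl (hv ▸ hy))

lemma bpath1 (l : ℕ) (hl : 1 ≤ l) (hl2 : l + 1 ≤ t) (x y : V1 s t)
    (hx : x.val = Lb l) (hy : y.val = Lb (l+1)) :
    ∃ p : (G1 hs ht).Walk x y, p.IsPath ∧
      ∀ v ∈ p.support, v.val = Lb l ∨ v.val = Lb (l+1) ∨
        ∃ m, s ≤ m ∧ m ≤ s + t - 2 ∧ v.val = Ma m := by
  have hg1 : s ≤ gd s t (l+1) := by simp only [gd]; split_ifs <;> omega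
  have hg2 : gd s t (l+1) ≤ gd s t l := by simp only [gd]; split_ifs <;> omega
  have hg3 : gd s t l ≤ s + t - 2 := by simp only [gd]; split_ifs <;> omega
  have huok : ok1 s t (Ma (gd s t (l+1))) := by simp <;> omega
  have hwok : ok1 s t (Ma (gd s t l)) := by simp <;> omega
  obtain ⟨ch, hch, hchs⟩ := chain1' hs ht (gd s t (l+1)) (gd s t l) (by omega) hg2 hg3
    ⟨Ma (gd s t (l+1)), huok⟩ ⟨Ma (gd s t l), hwok⟩ rfl rfl
  have hadj1 : (G1 hs ht).Adj y ⟨Ma (gd s t (l+1)), huok⟩ :=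
    adj1_child hs ht (by rw [hy]; simp) (by rw [hy]; simp)
  obtain ⟨p1w, hp1w, hp1ws⟩ := walk_join SimpleGraph.Walk.nil hadj1 ch
    SimpleGraph.Walk.IsPath.nil hch
    (by intro v hv
        simp only [SimpleGraph.Walk.support_nil, List.mem_singleton] at hv
        subst hv
        intro hmem
        obtain ⟨m, _, _, h3⟩ := hchs _ hmem
        rw [hy] at h3; simp at h3)
  have hadj2 : (G1 hs ht).Adj (⟨Ma (gd s t l), hwok⟩ : V1 s t) x :=
    adj1_parent hs ht (by rw [hx]; simp) (by rw [hx]; simp)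
  obtain ⟨p2w, hp2w, hp2ws⟩ := walk_join p1w hadj2 SimpleGraph.Walk.nil hp1w
    SimpleGraph.Walk.IsPath.nil
    (by intro v hv
        simp only [SimpleGraph.Walk.support_nil, List.mem_singleton]
        intro he
        subst he
        rw [hp1ws, List.mem_append] at hv
        rcases hv with hv | hv
        · simp only [SimpleGraph.Walk.support_nil, List.mem_singleton] at hv
          subst hv
          rw [hy] at hx; simp at hx <;> omega
        · obtain ⟨m, _, _, h3⟩ := hchs _ hv
          rw [hx] at h3; simp at h3)
  refine ⟨p2w.reverse, hp2w.reverse, ?_⟩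
  intro v hv
  rw [SimpleGraph.Walk.support_reverse, List.mem_reverse] at hv
  rw [hp2ws, List.mem_append, hp1ws, List.mem_append] at hv
  rcases hv with (hv | hv) | hv
  · simp only [SimpleGraph.Walk.support_nil, List.mem_singleton] at hv
    exact Or.inr (Or.inl (hv ▸ hy))
  · obtain ⟨m, h1, h2, h3⟩ := hchs _ hv
    exact Or.inr (Or.inr ⟨m, by omega, by omega, h3⟩)
  · simp only [SimpleGraph.Walk.support_nil, List.mem_singleton] at hv
    exact Or.inl (hv ▸ hx)

lemma T1_displays (k l : ℕ) (hk : 1 ≤ k) (hk2 : k + 1 ≤ s) (hl : 1 ≤ l) (hl2 : l + 1 ≤ t) :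
    (T1 hs ht).displays (quartet (Sum.inl k) (Sum.inl (k+1)) (Sum.inr l) (Sum.inr (l+1))) := by
  apply displays_of_d4
  refine ⟨mem_Lst_a hk (by omega), mem_Lst_a (by omega) hk2,
    mem_Lst_b hl (by omega), mem_Lst_b (by omega) hl2, ?_⟩
  obtain ⟨p, hp, hps⟩ := apath1 hs ht k hk hk2 _ _ (T1_label hs ht _) (T1_label hs ht _)
  obtain ⟨p', hp', hps'⟩ := bpath1 hs ht l hl hl2 _ _ (T1_label hs ht _) (T1_label hs ht _)
  refine ⟨p, p', hp, hp', ?_⟩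
  intro v hv hv'
  obtain h1 := hps v hv
  obtain h2 := hps' v hv'
  rcases h1 with h1 | h1 | ⟨m, hm1, hm2, h1⟩ <;>
    rcases h2 with h2 | h2 | ⟨m', hm1', hm2', h2⟩ <;>
    rw [h1] at h2 <;> simp at h2 <;> omega

end C1

section C2

/-! ### Construction 2: the crossing tree `T(i,j)`. -/

def fa (s i : ℕ) (m : ℕ) : ℕ := if m = 1 then 1 else if m ≤ i then m - 1 else if m = s then s else m + 1
def gb (t j : ℕ) (l : ℕ) : ℕ := if l = 1 then 1 else if l ≤ j then l - 1 else if l = t then t else l + 1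
def eta (i j : ℕ) (x : ℕ) : Base := if j ≤ x ∧ x ≤ j + 1 then Ma (i + x - j) else Nb x

def ok2 (s t i j : ℕ) : Base → Prop
  | .inl (.inl m) => 1 ≤ m ∧ m ≤ s
  | .inl (.inr l) => 1 ≤ l ∧ l ≤ t
  | .inr (.inl m) => 1 ≤ m ∧ m ≤ s
  | .inr (.inr l) => 1 ≤ l ∧ l ≤ t ∧ l ≠ j ∧ l ≠ j + 1

variable {s t i j : ℕ}

@[simp] lemma ok2_La {m : ℕ} : ok2 s t i j (La m) ↔ 1 ≤ m ∧ m ≤ s := Iff.rfl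
@[simp] lemma ok2_Lb {l : ℕ} : ok2 s t i j (Lb l) ↔ 1 ≤ l ∧ l ≤ t := Iff.rfl
@[simp] lemma ok2_Ma {m : ℕ} : ok2 s t i j (Ma m) ↔ 1 ≤ m ∧ m ≤ s := Iff.rfl
@[simp] lemma ok2_Nb {l : ℕ} : ok2 s t i j (Nb l) ↔ 1 ≤ l ∧ l ≤ t ∧ l ≠ j ∧ l ≠ j + 1 := Iff.rfl

def p2 (s t i j : ℕ) : Base → Base
  | .inl (.inl m) => Ma (fa s i m)
  | .inl (.inr l) => eta i j (gb t j l)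
  | .inr (.inl m) => if m < i then Ma (m+1) else if i < m then Ma (m-1) else Ma i
  | .inr (.inr l) => if l < j then (if j ≤ l + 1 then Ma i else Nb (l+1))
      else (if l ≤ j + 2 then Ma (i+1) else Nb (l-1))

@[simp] lemma p2_La {m : ℕ} : p2 s t i j (La m) = Ma (fa s i m) := rfl
@[simp] lemma p2_Lb {l : ℕ} : p2 s t i j (Lb l) = eta i j (gb t j l) := rfl
@[simp] lemma p2_Ma {m : ℕ} : p2 s t i j (Ma m) =
    if m < i then Ma (m+1) else if i < m then Ma (m-1) else Ma i := rfl
@[simp] lemma p2_Nb {l : ℕ} : p2 s t i j (Nb l) =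
    if l < j then (if j ≤ l + 1 then Ma i else Nb (l+1))
      else (if l ≤ j + 2 then Ma (i+1) else Nb (l-1)) := rfl

lemma eta_low {x : ℕ} (hx : x < j) : eta i j x = Nb x := by
  rw [eta, if_neg (by omega)]
lemma eta_high {x : ℕ} (hx : j + 1 < x) : eta i j x = Nb x := by
  rw [eta, if_neg (by omega)]
lemma eta_j : eta i j j = Ma i := by
  rw [eta, if_pos ⟨le_rfl, by omega⟩]
  congr 1
  omega
lemma eta_j1 : eta i j (j+1) = Ma (i+1) := by
  rw [eta, if_pos ⟨by omega, le_rfl⟩]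
  congr 1
  omega

def hM (i : ℕ) (m : ℕ) : ℕ := if m ≤ i then i - m else m - i
def hN (j : ℕ) (l : ℕ) : ℕ := if l ≤ j then j - l else l - j
def hEta (i j : ℕ) (x : ℕ) : ℕ := if j ≤ x ∧ x ≤ j + 1 then hM i (i + x - j) else hN j x

def h2 (s t i j : ℕ) : Base → ℕ
  | .inl (.inl m) => hM i (fa s i m) + 1
  | .inl (.inr l) => hEta i j (gb t j l) + 1
  | .inr (.inl m) => hM i m
  | .inr (.inr l) => hN j l

@[simp] lemma h2_La {m : ℕ} : h2 s t i j (La m) = hM i (fa s i m) + 1 := rfl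
@[simp] lemma h2_Lb {l : ℕ} : h2 s t i j (Lb l) = hEta i j (gb t j l) + 1 := rfl
@[simp] lemma h2_Ma {m : ℕ} : h2 s t i j (Ma m) = hM i m := rfl
@[simp] lemma h2_Nb {l : ℕ} : h2 s t i j (Nb l) = hN j l := rfl

lemma h2_eta (x : ℕ) : h2 s t i j (eta i j x) = hEta i j x := by
  rw [eta, hEta]
  split_ifs <;> rfl

abbrev V2 (s t i j : ℕ) : Type := {v : Base // ok2 s t i j v}

instance : DecidableEq (V2 s t i j) := by unfold V2; infer_instance

noncomputable instance : Fintype (V2 s t i j) := by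
  have hfin : (setOf (ok2 s t i j)).Finite := by
    apply base_finite _ (s + t + i + j)
    rintro ((m | m) | (m | m)) hv
    · exact ⟨m, ⟨by simp [ok2] at hv; omega, Or.inl rfl⟩⟩
    · exact ⟨m, ⟨by simp [ok2] at hv; omega, Or.inr (Or.inl rfl)⟩⟩
    · exact ⟨m, ⟨by simp [ok2] at hv; omega, Or.inr (Or.inr (Or.inl rfl))⟩⟩
    · exact ⟨m, ⟨by simp [ok2] at hv; omega, Or.inr (Or.inr (Or.inr rfl))⟩⟩
  exact hfin.fintype

variable (hs : 2 ≤ s) (ht : 2 ≤ t) (hi1 : 1 ≤ i) (hi2 : i < s)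
  (hj1 : 1 ≤ j) (hj2 : j < t)
include hs ht hi1 hi2 hj1 hj2

lemma ok2_p2 : ∀ v : Base, ok2 s t i j v → ok2 s t i j (p2 s t i j v) := by
  rintro ((m | m) | (m | m)) hv <;> simp [ok2, La, Lb, Ma, Nb] at hv
  · show ok2 s t i j (Ma (fa s i m))
    rw [ok2_Ma, fa]
    split_ifs <;> omega
  · show ok2 s t i j (eta i j (gb t j m))
    rw [eta]
    split_ifs with h
    · rw [ok2_Ma]
      omega
    · rw [ok2_Nb, gb] at *
      split_ifs at h ⊢ <;> omega
  · show ok2 s t i j (if m < i then Ma (m+1) else if i < m then Ma (m-1) else Ma i)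
    split_ifs <;> rw [ok2_Ma] <;> omega
  · show ok2 s t i j (if m < j then (if j ≤ m + 1 then Ma i else Nb (m+1))
      else (if m ≤ j + 2 then Ma (i+1) else Nb (m-1)))
    split_ifs <;> first
      | (rw [ok2_Ma]; omega)
      | (rw [ok2_Nb]; omega)

def pp2 : V2 s t i j → V2 s t i j :=
  fun v => ⟨p2 s t i j v.val, ok2_p2 hs ht hi1 hi2 hj1 hj2 v.val v.2⟩

example : True := trivial

def root2 : V2 s t i j :=
  ⟨Ma i, by
    have h1 := hs; have h2 := ht; have h3 := hi1; have h4 := hi2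
    have h5 := hj1; have h6 := hj2
    simp
    omega⟩

def G2 : SimpleGraph (V2 s t i j) := pGraph (pp2 hs ht hi1 hi2 hj1 hj2)

lemma hp2 : ∀ v : V2 s t i j, v ≠ root2 hs ht hi1 hi2 hj1 hj2 →
    h2 s t i j ((pp2 hs ht hi1 hi2 hj1 hj2 v).val) < h2 s t i j v.val := by
  rintro ⟨((m | m) | (m | m)), hv⟩ hne <;> simp [ok2, La, Lb, Ma, Nb] at hv
  · show h2 s t i j (Ma (fa s i m)) < h2 s t i j (La m)
    rw [h2_Ma, h2_La]
    omega
  · show h2 s t i j (eta i j (gb t j m)) < h2 s t i j (Lb m)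
    rw [h2_eta, h2_Lb]
    omega
  · have hmi : m ≠ i := fun e => hne (Subtype.ext (by subst e; rfl))
    show h2 s t i j (p2 s t i j (Ma m)) < h2 s t i j (Ma m)
    rw [p2_Ma]
    rcases Nat.lt_or_ge m i with h | h
    · rw [if_pos h, h2_Ma, h2_Ma, hM, hM]
      split_ifs <;> omega
    · rw [if_neg (by omega), if_pos (by omega), h2_Ma, h2_Ma, hM, hM]
      split_ifs <;> omega
  · show h2 s t i j (p2 s t i j (Nb m)) < h2 s t i j (Nb m)
    rw [p2_Nb]
    split_ifs <;> simp only [h2_Ma, h2_Nb, hM, hN] <;> split_ifs <;> omega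

lemma isTree2 : (G2 hs ht hi1 hi2 hj1 hj2).IsTree := by
  apply pGraph_isTree (r := root2 hs ht hi1 hi2 hj1 hj2) (h := fun v => h2 s t i j v.val)
  · apply Subtype.ext
    show p2 s t i j (Ma i) = Ma i
    rw [p2_Ma, if_neg (by omega), if_neg (by omega)]
  · exact hp2 hs ht hi1 hi2 hj1 hj2

lemma adj2_parent {x y : V2 s t i j} (hpar : p2 s t i j y.val = x.val) (hne : x.val ≠ y.val) :
    (G2 hs ht hi1 hi2 hj1 hj2).Adj x y :=
  ⟨fun e => hne (congrArg Subtype.val e), Or.inr (Subtype.ext hpar)⟩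

lemma adj2_child {x y : V2 s t i j} (hpar : p2 s t i j x.val = y.val) (hne : x.val ≠ y.val) :
    (G2 hs ht hi1 hi2 hj1 hj2).Adj x y :=
  ⟨fun e => hne (congrArg Subtype.val e), Or.inl (Subtype.ext hpar)⟩

omit hs ht hi1 hi2 hj1 hj2 in
lemma vne2 {a b : Base} {ha : ok2 s t i j a} {hb : ok2 s t i j b} (h : a ≠ b) :
    (⟨a, ha⟩ : V2 s t i j) ≠ ⟨b, hb⟩ := fun e => h (congrArg Subtype.val e)

omit hs ht hi1 hi2 hj1 hj2 in
lemma p2_int (v : Base) : (∃ m, p2 s t i j v = Ma m) ∨ (∃ l, p2 s t i j v = Nb l) := by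
  rcases v with ((m | m) | (m | m))
  · exact Or.inl ⟨fa s i m, rfl⟩
  · show (∃ m', eta i j (gb t j m) = Ma m') ∨ (∃ l, eta i j (gb t j m) = Nb l)
    rw [eta]
    split_ifs
    · exact Or.inl ⟨_, rfl⟩
    · exact Or.inr ⟨_, rfl⟩
  · show (∃ m', (if m < i then Ma (m+1) else if i < m then Ma (m-1) else Ma i) = Ma m') ∨
      (∃ l, (if m < i then Ma (m+1) else if i < m then Ma (m-1) else Ma i) = Nb l)
    split_ifs
    · exact Or.inl ⟨_, rfl⟩
    · exact Or.inl ⟨_, rfl⟩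
    · exact Or.inl ⟨_, rfl⟩
  · show (∃ m', (if m < j then (if j ≤ m + 1 then Ma i else Nb (m+1))
        else (if m ≤ j + 2 then Ma (i+1) else Nb (m-1))) = Ma m') ∨
      (∃ l, (if m < j then (if j ≤ m + 1 then Ma i else Nb (m+1))
        else (if m ≤ j + 2 then Ma (i+1) else Nb (m-1))) = Nb l)
    split_ifs
    · exact Or.inl ⟨_, rfl⟩
    · exact Or.inr ⟨_, rfl⟩
    · exact Or.inl ⟨_, rfl⟩
    · exact Or.inr ⟨_, rfl⟩

lemma leaf2_ncard (x : V2 s t i j) (hx : ∃ m, x.val = La m ∨ x.val = Lb m) :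
    ((G2 hs ht hi1 hi2 hj1 hj2).neighborSet x).ncard = 1 := by
  apply pGraph_leaf_ncard (h := fun v => h2 s t i j v.val) (hp2 hs ht hi1 hi2 hj1 hj2)
  · obtain ⟨m, hm | hm⟩ := hx <;>
      exact fun e => by rw [e] at hm; simp [root2, Ma, La, Lb] at hm
  · intro y he
    have hv : p2 s t i j y.val = x.val := congrArg Subtype.val he
    rcases p2_int (s := s) (t := t) (i := i) (j := j) y.val with ⟨m', hm'⟩ | ⟨m', hm'⟩ <;>
      obtain ⟨m, hm | hm⟩ := hx <;> rw [hm, hm'] at hv <;> simp at hv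



lemma int2_deg (v : V2 s t i j) :
    (∀ m, v.val = Ma m → 3 ≤ ((G2 hs ht hi1 hi2 hj1 hj2).neighborSet v).ncard) ∧
    (∀ l, v.val = Nb l → 3 ≤ ((G2 hs ht hi1 hi2 hj1 hj2).neighborSet v).ncard) := by
  constructor
  · intro m hm
    have hv := v.2
    rw [hm, ok2_Ma] at hv
    rcases lt_trichotomy m i with hA | hB | hC
    · -- m < i
      rcases Nat.eq_or_lt_of_le hv.1 with hm1 | hm1
      · -- m = 1
        refine ncard_ge3 (a := ⟨Ma (m+1), by simp <;> omega⟩) (b := ⟨La (m+1), by simp <;> omega⟩)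
          (c := ⟨La 1, by simp <;> omega⟩) ?_ ?_ ?_
          (vne2 (by simp)) (vne2 (by simp)) (vne2 (by simp <;> omega))
        · refine adj2_child hs ht hi1 hi2 hj1 hj2 ?_ (by rw [hm]; simp)
          rw [hm]
          show p2 s t i j (Ma m) = Ma (m+1)
          rw [p2_Ma, if_pos hA]
        · refine adj2_parent hs ht hi1 hi2 hj1 hj2 ?_ (by rw [hm]; simp)
          show p2 s t i j (La (m+1)) = v.val
          rw [p2_La, hm]
          simp only [Ma_inj]
          rw [fa]
          split_ifs <;> omega
        · refine adj2_parent hs ht hi1 hi2 hj1 hj2 ?_ (by rw [hm]; simp)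
          show p2 s t i j (La 1) = v.val
          rw [p2_La, hm]
          simp only [Ma_inj]
          rw [fa]
          split_ifs <;> omega
      · -- 2 ≤ m
        refine ncard_ge3 (a := ⟨Ma (m+1), by simp <;> omega⟩) (b := ⟨La (m+1), by simp <;> omega⟩)
          (c := ⟨Ma (m-1), by simp <;> omega⟩) ?_ ?_ ?_
          (vne2 (by simp)) (vne2 (by simp <;> omega)) (vne2 (by simp))
        · refine adj2_child hs ht hi1 hi2 hj1 hj2 ?_ (by rw [hm]; simp)
          rw [hm]
          show p2 s t i j (Ma m) = Ma (m+1)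
          rw [p2_Ma, if_pos hA]
        · refine adj2_parent hs ht hi1 hi2 hj1 hj2 ?_ (by rw [hm]; simp)
          show p2 s t i j (La (m+1)) = v.val
          rw [p2_La, hm]
          simp only [Ma_inj]
          rw [fa]
          split_ifs <;> omega
        · refine adj2_parent hs ht hi1 hi2 hj1 hj2 ?_ (by rw [hm]; simp <;> omega)
          show p2 s t i j (Ma (m-1)) = v.val
          rw [p2_Ma, if_pos (by omega), hm]
          simp only [Ma_inj]
          omega
    · -- m = i
      have haux : (G2 hs ht hi1 hi2 hj1 hj2).Adj v ⟨Ma (m+1), by simp <;> omega⟩ := by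
        refine adj2_parent hs ht hi1 hi2 hj1 hj2 ?_ (by rw [hm]; simp)
        show p2 s t i j (Ma (m+1)) = v.val
        rw [p2_Ma, if_neg (by omega), if_pos (by omega), hm]
        simp only [Ma_inj]
        omega
      by_cases hj1' : j = 1
      · by_cases hi1' : i = 1
        · refine ncard_ge3 (a := ⟨Ma (m+1), by simp <;> omega⟩) (b := ⟨Lb 1, by simp <;> omega⟩)
            (c := ⟨La 1, by simp <;> omega⟩) haux ?_ ?_
            (vne2 (by simp)) (vne2 (by simp)) (vne2 (by simp))
          · refine adj2_parent hs ht hi1 hi2 hj1 hj2 ?_ (by rw [hm]; simp)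
            show p2 s t i j (Lb 1) = v.val
            have h1 : gb t j 1 = j := by rw [gb, if_pos rfl]; omega
            rw [p2_Lb, h1, eta_j, hm]
            simp only [Ma_inj]
            omega
          · refine adj2_parent hs ht hi1 hi2 hj1 hj2 ?_ (by rw [hm]; simp)
            show p2 s t i j (La 1) = v.val
            rw [p2_La, hm]
            simp only [Ma_inj]
            rw [fa]
            split_ifs <;> omega
        · refine ncard_ge3 (a := ⟨Ma (m+1), by simp <;> omega⟩) (b := ⟨Lb 1, by simp <;> omega⟩)
            (c := ⟨Ma (m-1), by simp <;> omega⟩) haux ?_ ?_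
            (vne2 (by simp)) (vne2 (by simp <;> omega)) (vne2 (by simp))
          · refine adj2_parent hs ht hi1 hi2 hj1 hj2 ?_ (by rw [hm]; simp)
            show p2 s t i j (Lb 1) = v.val
            have h1 : gb t j 1 = j := by rw [gb, if_pos rfl]; omega
            rw [p2_Lb, h1, eta_j, hm]
            simp only [Ma_inj]
            omega
          · refine adj2_parent hs ht hi1 hi2 hj1 hj2 ?_ (by rw [hm]; simp <;> omega)
            show p2 s t i j (Ma (m-1)) = v.val
            rw [p2_Ma, if_pos (by omega), hm]
            simp only [Ma_inj]
            omega
      · by_cases hi1' : i = 1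
        · refine ncard_ge3 (a := ⟨Ma (m+1), by simp <;> omega⟩) (b := ⟨Nb (j-1), by simp <;> omega⟩)
            (c := ⟨La 1, by simp <;> omega⟩) haux ?_ ?_
            (vne2 (by simp)) (vne2 (by simp)) (vne2 (by simp))
          · refine adj2_parent hs ht hi1 hi2 hj1 hj2 ?_ (by rw [hm]; simp)
            show p2 s t i j (Nb (j-1)) = v.val
            rw [p2_Nb, if_pos (by omega), if_pos (by omega), hm]
            simp only [Ma_inj]
            omega
          · refine adj2_parent hs ht hi1 hi2 hj1 hj2 ?_ (by rw [hm]; simp)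
            show p2 s t i j (La 1) = v.val
            rw [p2_La, hm]
            simp only [Ma_inj]
            rw [fa]
            split_ifs <;> omega
        · refine ncard_ge3 (a := ⟨Ma (m+1), by simp <;> omega⟩) (b := ⟨Nb (j-1), by simp <;> omega⟩)
            (c := ⟨Ma (m-1), by simp <;> omega⟩) haux ?_ ?_
            (vne2 (by simp)) (vne2 (by simp <;> omega)) (vne2 (by simp))
          · refine adj2_parent hs ht hi1 hi2 hj1 hj2 ?_ (by rw [hm]; simp)
            show p2 s t i j (Nb (j-1)) = v.val
            rw [p2_Nb, if_pos (by omega), if_pos (by omega), hm]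
            simp only [Ma_inj]
            omega
          · refine adj2_parent hs ht hi1 hi2 hj1 hj2 ?_ (by rw [hm]; simp <;> omega)
            show p2 s t i j (Ma (m-1)) = v.val
            rw [p2_Ma, if_pos (by omega), hm]
            simp only [Ma_inj]
            omega
    · -- i < m
      have haux : (G2 hs ht hi1 hi2 hj1 hj2).Adj v ⟨Ma (m-1), by simp <;> omega⟩ := by
        refine adj2_child hs ht hi1 hi2 hj1 hj2 ?_ (by rw [hm]; simp <;> omega)
        rw [hm]
        show p2 s t i j (Ma m) = Ma (m-1)
        rw [p2_Ma, if_neg (by omega), if_pos hC]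
      rcases Nat.eq_or_lt_of_le hC with hC1 | hC2
      · -- m = i + 1
        by_cases hjt : j + 1 = t
        · by_cases his : m = s
          · refine ncard_ge3 (a := ⟨Ma (m-1), by simp <;> omega⟩) (b := ⟨Lb t, by simp <;> omega⟩)
              (c := ⟨La s, by simp <;> omega⟩) haux ?_ ?_
              (vne2 (by simp)) (vne2 (by simp)) (vne2 (by simp))
            · refine adj2_parent hs ht hi1 hi2 hj1 hj2 ?_ (by rw [hm]; simp)
              show p2 s t i j (Lb t) = v.val
              have h1 : gb t j t = t := by rw [gb]; split_ifs <;> omega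
              have h2 : eta i j t = Ma (i+1) := by
                rw [eta, if_pos ⟨by omega, by omega⟩]
                simp only [Ma_inj]
                omega
              rw [p2_Lb, h1, h2, hm]
              simp only [Ma_inj]
              omega
            · refine adj2_parent hs ht hi1 hi2 hj1 hj2 ?_ (by rw [hm]; simp)
              show p2 s t i j (La s) = v.val
              rw [p2_La, hm]
              simp only [Ma_inj]
              rw [fa]
              split_ifs <;> omega
          · refine ncard_ge3 (a := ⟨Ma (m-1), by simp <;> omega⟩) (b := ⟨Lb t, by simp <;> omega⟩)
              (c := ⟨Ma (m+1), by simp <;> omega⟩) haux ?_ ?_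
              (vne2 (by simp)) (vne2 (by simp <;> omega)) (vne2 (by simp))
            · refine adj2_parent hs ht hi1 hi2 hj1 hj2 ?_ (by rw [hm]; simp)
              show p2 s t i j (Lb t) = v.val
              have h1 : gb t j t = t := by rw [gb]; split_ifs <;> omega
              have h2 : eta i j t = Ma (i+1) := by
                rw [eta, if_pos ⟨by omega, by omega⟩]
                simp only [Ma_inj]
                omega
              rw [p2_Lb, h1, h2, hm]
              simp only [Ma_inj]
              omega
            · refine adj2_parent hs ht hi1 hi2 hj1 hj2 ?_ (by rw [hm]; simp <;> omega)
              show p2 s t i j (Ma (m+1)) = v.val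
              rw [p2_Ma, if_neg (by omega), if_pos (by omega), hm]
              simp only [Ma_inj]
              omega
        · by_cases his : m = s
          · refine ncard_ge3 (a := ⟨Ma (m-1), by simp <;> omega⟩) (b := ⟨Nb (j+2), by simp <;> omega⟩)
              (c := ⟨La s, by simp <;> omega⟩) haux ?_ ?_
              (vne2 (by simp)) (vne2 (by simp)) (vne2 (by simp))
            · refine adj2_parent hs ht hi1 hi2 hj1 hj2 ?_ (by rw [hm]; simp)
              show p2 s t i j (Nb (j+2)) = v.val
              rw [p2_Nb, if_neg (by omega), if_pos (by omega), hm]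
              simp only [Ma_inj]
              omega
            · refine adj2_parent hs ht hi1 hi2 hj1 hj2 ?_ (by rw [hm]; simp)
              show p2 s t i j (La s) = v.val
              rw [p2_La, hm]
              simp only [Ma_inj]
              rw [fa]
              split_ifs <;> omega
          · refine ncard_ge3 (a := ⟨Ma (m-1), by simp <;> omega⟩) (b := ⟨Nb (j+2), by simp <;> omega⟩)
              (c := ⟨Ma (m+1), by simp <;> omega⟩) haux ?_ ?_
              (vne2 (by simp)) (vne2 (by simp <;> omega)) (vne2 (by simp))
            · refine adj2_parent hs ht hi1 hi2 hj1 hj2 ?_ (by rw [hm]; simp)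
              show p2 s t i j (Nb (j+2)) = v.val
              rw [p2_Nb, if_neg (by omega), if_pos (by omega), hm]
              simp only [Ma_inj]
              omega
            · refine adj2_parent hs ht hi1 hi2 hj1 hj2 ?_ (by rw [hm]; simp <;> omega)
              show p2 s t i j (Ma (m+1)) = v.val
              rw [p2_Ma, if_neg (by omega), if_pos (by omega), hm]
              simp only [Ma_inj]
              omega
      · -- i + 2 ≤ m
        by_cases his : m = s
        · refine ncard_ge3 (a := ⟨Ma (m-1), by simp <;> omega⟩) (b := ⟨La (m-1), by simp <;> omega⟩)
            (c := ⟨La s, by simp <;> omega⟩) haux ?_ ?_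
            (vne2 (by simp)) (vne2 (by simp)) (vne2 (by simp <;> omega))
          · refine adj2_parent hs ht hi1 hi2 hj1 hj2 ?_ (by rw [hm]; simp)
            show p2 s t i j (La (m-1)) = v.val
            rw [p2_La, hm]
            simp only [Ma_inj]
            rw [fa]
            split_ifs <;> omega
          · refine adj2_parent hs ht hi1 hi2 hj1 hj2 ?_ (by rw [hm]; simp)
            show p2 s t i j (La s) = v.val
            rw [p2_La, hm]
            simp only [Ma_inj]
            rw [fa]
            split_ifs <;> omega
        · refine ncard_ge3 (a := ⟨Ma (m-1), by simp <;> omega⟩) (b := ⟨La (m-1), by simp <;> omega⟩)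
            (c := ⟨Ma (m+1), by simp <;> omega⟩) haux ?_ ?_
            (vne2 (by simp)) (vne2 (by simp <;> omega)) (vne2 (by simp))
          · refine adj2_parent hs ht hi1 hi2 hj1 hj2 ?_ (by rw [hm]; simp)
            show p2 s t i j (La (m-1)) = v.val
            rw [p2_La, hm]
            simp only [Ma_inj]
            rw [fa]
            split_ifs <;> omega
          · refine adj2_parent hs ht hi1 hi2 hj1 hj2 ?_ (by rw [hm]; simp <;> omega)
            show p2 s t i j (Ma (m+1)) = v.val
            rw [p2_Ma, if_neg (by omega), if_pos (by omega), hm]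
            simp only [Ma_inj]
            omega
  · intro l hl
    have hv := v.2
    rw [hl, ok2_Nb] at hv
    obtain ⟨hv1, hv2, hv3, hv4⟩ := hv
    rcases Nat.lt_or_ge l j with hE | hF
    · -- l < j
      have hbadj : (G2 hs ht hi1 hi2 hj1 hj2).Adj v ⟨Lb (l + 1), by simp <;> omega⟩ := by
        refine adj2_parent hs ht hi1 hi2 hj1 hj2 ?_ (by rw [hl]; simp)
        show p2 s t i j (Lb (l + 1)) = v.val
        rw [p2_Lb, hl]
        have h1 : gb t j (l+1) = l := by rw [gb]; split_ifs <;> omega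
        rw [h1, eta_low hE]
      by_cases hlj : j ≤ l + 1
      · by_cases hl1 : l = 1
        · refine ncard_ge3 (a := ⟨Ma i, by simp <;> omega⟩) (b := ⟨Lb (l+1), by simp <;> omega⟩)
            (c := ⟨Lb 1, by simp <;> omega⟩) ?_ hbadj ?_
            (vne2 (by simp)) (vne2 (by simp)) (vne2 (by simp <;> omega))
          · refine adj2_child hs ht hi1 hi2 hj1 hj2 ?_ (by rw [hl]; simp)
            rw [hl]
            show p2 s t i j (Nb l) = Ma i
            rw [p2_Nb, if_pos hE, if_pos hlj]
          · refine adj2_parent hs ht hi1 hi2 hj1 hj2 ?_ (by rw [hl]; simp)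
            show p2 s t i j (Lb 1) = v.val
            have h1 : gb t j 1 = 1 := by rw [gb, if_pos rfl]
            rw [p2_Lb, h1, eta_low (by omega), hl]
            simp only [Nb_inj]
            omega
        · refine ncard_ge3 (a := ⟨Ma i, by simp <;> omega⟩) (b := ⟨Lb (l+1), by simp <;> omega⟩)
            (c := ⟨Nb (l-1), by simp <;> omega⟩) ?_ hbadj ?_
            (vne2 (by simp)) (vne2 (by simp)) (vne2 (by simp))
          · refine adj2_child hs ht hi1 hi2 hj1 hj2 ?_ (by rw [hl]; simp)
            rw [hl]
            show p2 s t i j (Nb l) = Ma i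
            rw [p2_Nb, if_pos hE, if_pos hlj]
          · refine adj2_parent hs ht hi1 hi2 hj1 hj2 ?_ (by rw [hl]; simp <;> omega)
            show p2 s t i j (Nb (l-1)) = v.val
            rw [p2_Nb, if_pos (by omega), if_neg (by omega), hl]
            simp only [Nb_inj]
            omega
      · by_cases hl1 : l = 1
        · refine ncard_ge3 (a := ⟨Nb (l+1), by simp <;> omega⟩) (b := ⟨Lb (l+1), by simp <;> omega⟩)
            (c := ⟨Lb 1, by simp <;> omega⟩) ?_ hbadj ?_
            (vne2 (by simp)) (vne2 (by simp)) (vne2 (by simp <;> omega))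
          · refine adj2_child hs ht hi1 hi2 hj1 hj2 ?_ (by rw [hl]; simp <;> omega)
            rw [hl]
            show p2 s t i j (Nb l) = Nb (l+1)
            rw [p2_Nb, if_pos hE, if_neg hlj]
          · refine adj2_parent hs ht hi1 hi2 hj1 hj2 ?_ (by rw [hl]; simp)
            show p2 s t i j (Lb 1) = v.val
            have h1 : gb t j 1 = 1 := by rw [gb, if_pos rfl]
            rw [p2_Lb, h1, eta_low (by omega), hl]
            simp only [Nb_inj]
            omega
        · refine ncard_ge3 (a := ⟨Nb (l+1), by simp <;> omega⟩) (b := ⟨Lb (l+1), by simp <;> omega⟩)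
            (c := ⟨Nb (l-1), by simp <;> omega⟩) ?_ hbadj ?_
            (vne2 (by simp)) (vne2 (by simp <;> omega)) (vne2 (by simp))
          · refine adj2_child hs ht hi1 hi2 hj1 hj2 ?_ (by rw [hl]; simp <;> omega)
            rw [hl]
            show p2 s t i j (Nb l) = Nb (l+1)
            rw [p2_Nb, if_pos hE, if_neg hlj]
          · refine adj2_parent hs ht hi1 hi2 hj1 hj2 ?_ (by rw [hl]; simp <;> omega)
            show p2 s t i j (Nb (l-1)) = v.val
            rw [p2_Nb, if_pos (by omega), if_neg (by omega), hl]
            simp only [Nb_inj]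
            omega
    · -- l ≥ j + 2
      have hF2 : j + 2 ≤ l := by omega
      have hbadj : (G2 hs ht hi1 hi2 hj1 hj2).Adj v ⟨Lb (l - 1), by simp <;> omega⟩ := by
        refine adj2_parent hs ht hi1 hi2 hj1 hj2 ?_ (by rw [hl]; simp)
        show p2 s t i j (Lb (l - 1)) = v.val
        rw [p2_Lb, hl]
        have h1 : gb t j (l-1) = l := by rw [gb]; split_ifs <;> omega
        rw [h1, eta_high (by omega)]
      by_cases hlj : l ≤ j + 2
      · by_cases hlt : l = t
        · refine ncard_ge3 (a := ⟨Ma (i+1), by simp <;> omega⟩) (b := ⟨Lb (l-1), by simp <;> omega⟩)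
            (c := ⟨Lb t, by simp <;> omega⟩) ?_ hbadj ?_
            (vne2 (by simp)) (vne2 (by simp)) (vne2 (by simp <;> omega))
          · refine adj2_child hs ht hi1 hi2 hj1 hj2 ?_ (by rw [hl]; simp)
            rw [hl]
            show p2 s t i j (Nb l) = Ma (i+1)
            rw [p2_Nb, if_neg (by omega), if_pos hlj]
          · refine adj2_parent hs ht hi1 hi2 hj1 hj2 ?_ (by rw [hl]; simp)
            show p2 s t i j (Lb t) = v.val
            have h1 : gb t j t = t := by rw [gb]; split_ifs <;> omega
            rw [p2_Lb, h1, eta_high (by omega), hl]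
            simp only [Nb_inj]
            omega
        · refine ncard_ge3 (a := ⟨Ma (i+1), by simp <;> omega⟩) (b := ⟨Lb (l-1), by simp <;> omega⟩)
            (c := ⟨Nb (l+1), by simp <;> omega⟩) ?_ hbadj ?_
            (vne2 (by simp)) (vne2 (by simp)) (vne2 (by simp))
          · refine adj2_child hs ht hi1 hi2 hj1 hj2 ?_ (by rw [hl]; simp)
            rw [hl]
            show p2 s t i j (Nb l) = Ma (i+1)
            rw [p2_Nb, if_neg (by omega), if_pos hlj]
          · refine adj2_parent hs ht hi1 hi2 hj1 hj2 ?_ (by rw [hl]; simp <;> omega)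
            show p2 s t i j (Nb (l+1)) = v.val
            rw [p2_Nb, if_neg (by omega), if_neg (by omega), hl]
            simp only [Nb_inj]
            omega
      · by_cases hlt : l = t
        · refine ncard_ge3 (a := ⟨Nb (l-1), by simp <;> omega⟩) (b := ⟨Lb (l-1), by simp <;> omega⟩)
            (c := ⟨Lb t, by simp <;> omega⟩) ?_ hbadj ?_
            (vne2 (by simp)) (vne2 (by simp)) (vne2 (by simp <;> omega))
          · refine adj2_child hs ht hi1 hi2 hj1 hj2 ?_ (by rw [hl]; simp <;> omega)
            rw [hl]
            show p2 s t i j (Nb l) = Nb (l-1)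
            rw [p2_Nb, if_neg (by omega), if_neg hlj]
          · refine adj2_parent hs ht hi1 hi2 hj1 hj2 ?_ (by rw [hl]; simp)
            show p2 s t i j (Lb t) = v.val
            have h1 : gb t j t = t := by rw [gb]; split_ifs <;> omega
            rw [p2_Lb, h1, eta_high (by omega), hl]
            simp only [Nb_inj]
            omega
        · refine ncard_ge3 (a := ⟨Nb (l-1), by simp <;> omega⟩) (b := ⟨Lb (l-1), by simp <;> omega⟩)
            (c := ⟨Nb (l+1), by simp <;> omega⟩) ?_ hbadj ?_
            (vne2 (by simp <;> omega)) (vne2 (by simp)) (vne2 (by simp))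
          · refine adj2_child hs ht hi1 hi2 hj1 hj2 ?_ (by rw [hl]; simp <;> omega)
            rw [hl]
            show p2 s t i j (Nb l) = Nb (l-1)
            rw [p2_Nb, if_neg (by omega), if_neg hlj]
          · refine adj2_parent hs ht hi1 hi2 hj1 hj2 ?_ (by rw [hl]; simp <;> omega)
            show p2 s t i j (Nb (l+1)) = v.val
            rw [p2_Nb, if_neg (by omega), if_neg (by omega), hl]
            simp only [Nb_inj]
            omega

lemma adjM2 (a : ℕ) (ha : 1 ≤ a) (ha2 : a + 1 ≤ s) (x y : V2 s t i j)
    (hx : x.val = Ma a) (hy : y.val = Ma (a+1)) :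
    (G2 hs ht hi1 hi2 hj1 hj2).Adj x y := by
  rcases Nat.lt_or_ge a i with h | h
  · refine adj2_child hs ht hi1 hi2 hj1 hj2 ?_ (by rw [hx, hy]; simp)
    rw [hx, hy]
    show p2 s t i j (Ma a) = Ma (a+1)
    rw [p2_Ma, if_pos h]
  · refine adj2_parent hs ht hi1 hi2 hj1 hj2 ?_ (by rw [hx, hy]; simp)
    rw [hy, hx]
    show p2 s t i j (Ma (a+1)) = Ma a
    rw [p2_Ma, if_neg (by omega), if_pos (by omega)]
    simp only [Ma_inj]
    omega

lemma adjN2 (a : ℕ) (ha : 1 ≤ a) (ha2 : a + 1 ≤ t) (hseg : a + 1 + 1 ≤ j ∨ j + 2 ≤ a)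
    (x y : V2 s t i j) (hx : x.val = Nb a) (hy : y.val = Nb (a+1)) :
    (G2 hs ht hi1 hi2 hj1 hj2).Adj x y := by
  rcases hseg with h | h
  · refine adj2_child hs ht hi1 hi2 hj1 hj2 ?_ (by rw [hx, hy]; simp)
    rw [hx, hy]
    show p2 s t i j (Nb a) = Nb (a+1)
    rw [p2_Nb, if_pos (by omega), if_neg (by omega)]
  · refine adj2_parent hs ht hi1 hi2 hj1 hj2 ?_ (by rw [hx, hy]; simp)
    rw [hy, hx]
    show p2 s t i j (Nb (a+1)) = Nb a
    rw [p2_Nb, if_neg (by omega), if_neg (by omega)]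
    simp only [Nb_inj]
    omega

lemma chainM2 (d : ℕ) : ∀ (a : ℕ), 1 ≤ a → a + d ≤ s →
    ∀ (va vb : V2 s t i j), va.val = Ma a → vb.val = Ma (a + d) →
    ∃ p : (G2 hs ht hi1 hi2 hj1 hj2).Walk va vb, p.IsPath ∧
      ∀ v ∈ p.support, ∃ m, a ≤ m ∧ m ≤ a + d ∧ v.val = Ma m := by
  induction d with
  | zero =>
    intro a ha had va vb hva hvb
    have hee : va = vb := Subtype.ext (by rw [hva, hvb]; simp)
    subst hee
    refine ⟨SimpleGraph.Walk.nil, SimpleGraph.Walk.IsPath.nil, ?_⟩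
    intro v hv
    simp only [SimpleGraph.Walk.support_nil, List.mem_singleton] at hv
    exact ⟨a, le_rfl, by omega, hv ▸ hva⟩
  | succ d ih =>
    intro a ha had va vb hva hvb
    have hwok : ok2 s t i j (Ma (a+1)) := by simp <;> omega
    have hadj : (G2 hs ht hi1 hi2 hj1 hj2).Adj va ⟨Ma (a+1), hwok⟩ :=
      adjM2 hs ht hi1 hi2 hj1 hj2 a ha (by omega) va _ hva rfl
    obtain ⟨p, hp, hsupp⟩ := ih (a+1) (by omega) (by omega) ⟨Ma (a+1), hwok⟩ vb rfl
      (by rw [hvb]; congr 1; omega)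
    refine ⟨SimpleGraph.Walk.cons hadj p, ?_, ?_⟩
    · rw [SimpleGraph.Walk.cons_isPath_iff]
      refine ⟨hp, fun hmem => ?_⟩
      obtain ⟨m, hm1, hm2, hm3⟩ := hsupp va hmem
      rw [hva] at hm3
      simp at hm3 <;> omega
    · intro v hv
      rw [SimpleGraph.Walk.support_cons, List.mem_cons] at hv
      rcases hv with rfl | hv
      · exact ⟨a, le_rfl, by omega, hva⟩
      · obtain ⟨m, h1, h2, h3⟩ := hsupp v hv
        exact ⟨m, by omega, by omega, h3⟩

lemma chainM2' (a b : ℕ) (ha : 1 ≤ a) (hab : a ≤ b) (hb : b ≤ s)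
    (va vb : V2 s t i j) (hva : va.val = Ma a) (hvb : vb.val = Ma b) :
    ∃ p : (G2 hs ht hi1 hi2 hj1 hj2).Walk va vb, p.IsPath ∧
      ∀ v ∈ p.support, ∃ m, a ≤ m ∧ m ≤ b ∧ v.val = Ma m := by
  obtain ⟨p, hp, hsupp⟩ := chainM2 hs ht hi1 hi2 hj1 hj2 (b - a) a ha (by omega) va vb hva
    (by rw [hvb]; congr 1; omega)
  exact ⟨p, hp, fun v hv => by
    obtain ⟨m, h1, h2, h3⟩ := hsupp v hv
    exact ⟨m, h1, by omega, h3⟩⟩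

lemma chainN2 (d : ℕ) : ∀ (a : ℕ), 1 ≤ a → a + d ≤ t → (a + d + 1 ≤ j ∨ j + 2 ≤ a) →
    ∀ (va vb : V2 s t i j), va.val = Nb a → vb.val = Nb (a + d) →
    ∃ p : (G2 hs ht hi1 hi2 hj1 hj2).Walk va vb, p.IsPath ∧
      ∀ v ∈ p.support, ∃ n, a ≤ n ∧ n ≤ a + d ∧ v.val = Nb n := by
  induction d with
  | zero =>
    intro a ha had hseg va vb hva hvb
    have hee : va = vb := Subtype.ext (by rw [hva, hvb]; simp)
    subst hee
    refine ⟨SimpleGraph.Walk.nil, SimpleGraph.Walk.IsPath.nil, ?_⟩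
    intro v hv
    simp only [SimpleGraph.Walk.support_nil, List.mem_singleton] at hv
    exact ⟨a, le_rfl, by omega, hv ▸ hva⟩
  | succ d ih =>
    intro a ha had hseg va vb hva hvb
    have hwok : ok2 s t i j (Nb (a+1)) := by simp <;> omega
    have hadj : (G2 hs ht hi1 hi2 hj1 hj2).Adj va ⟨Nb (a+1), hwok⟩ :=
      adjN2 hs ht hi1 hi2 hj1 hj2 a ha (by omega) (by omega) va _ hva rfl
    obtain ⟨p, hp, hsupp⟩ := ih (a+1) (by omega) (by omega) (by omega) ⟨Nb (a+1), hwok⟩ vb rfl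
      (by rw [hvb]; congr 1; omega)
    refine ⟨SimpleGraph.Walk.cons hadj p, ?_, ?_⟩
    · rw [SimpleGraph.Walk.cons_isPath_iff]
      refine ⟨hp, fun hmem => ?_⟩
      obtain ⟨m, hm1, hm2, hm3⟩ := hsupp va hmem
      rw [hva] at hm3
      simp at hm3 <;> omega
    · intro v hv
      rw [SimpleGraph.Walk.support_cons, List.mem_cons] at hv
      rcases hv with rfl | hv
      · exact ⟨a, le_rfl, by omega, hva⟩
      · obtain ⟨n, h1, h2, h3⟩ := hsupp v hv
        exact ⟨n, by omega, by omega, h3⟩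

lemma chainN2' (a b : ℕ) (ha : 1 ≤ a) (hab : a ≤ b) (hb : b ≤ t) (hseg : b + 1 ≤ j ∨ j + 2 ≤ a)
    (va vb : V2 s t i j) (hva : va.val = Nb a) (hvb : vb.val = Nb b) :
    ∃ p : (G2 hs ht hi1 hi2 hj1 hj2).Walk va vb, p.IsPath ∧
      ∀ v ∈ p.support, ∃ n, a ≤ n ∧ n ≤ b ∧ v.val = Nb n := by
  obtain ⟨p, hp, hsupp⟩ := chainN2 hs ht hi1 hi2 hj1 hj2 (b - a) a ha (by omega) (by omega) va vb
    hva (by rw [hvb]; congr 1; omega)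
  exact ⟨p, hp, fun v hv => by
    obtain ⟨n, h1, h2, h3⟩ := hsupp v hv
    exact ⟨n, h1, by omega, h3⟩⟩

lemma apath2 (k : ℕ) (hk : 1 ≤ k) (hk2 : k + 1 ≤ s) (x y : V2 s t i j)
    (hx : x.val = La k) (hy : y.val = La (k+1)) :
    ∃ p : (G2 hs ht hi1 hi2 hj1 hj2).Walk x y, p.IsPath ∧
      ∀ v ∈ p.support, v.val = La k ∨ v.val = La (k+1) ∨
        ∃ m, fa s i k ≤ m ∧ m ≤ fa s i (k+1) ∧ v.val = Ma m := by
  have hfk1 : 1 ≤ fa s i k := by simp only [fa]; split_ifs <;> omega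
  have hfk2 : fa s i k ≤ fa s i (k+1) := by simp only [fa]; split_ifs <;> omega
  have hfk3 : fa s i (k+1) ≤ s := by simp only [fa]; split_ifs <;> omega
  have huok : ok2 s t i j (Ma (fa s i k)) := by simp <;> omega
  have hwok : ok2 s t i j (Ma (fa s i (k+1))) := by simp <;> omega
  obtain ⟨ch, hch, hchs⟩ := chainM2' hs ht hi1 hi2 hj1 hj2 (fa s i k) (fa s i (k+1))
    hfk1 hfk2 hfk3 ⟨Ma (fa s i k), huok⟩ ⟨Ma (fa s i (k+1)), hwok⟩ rfl rfl
  have hadj1 : (G2 hs ht hi1 hi2 hj1 hj2).Adj x ⟨Ma (fa s i k), huok⟩ := by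
    refine adj2_child hs ht hi1 hi2 hj1 hj2 ?_ (by rw [hx]; simp)
    rw [hx]
    rfl
  obtain ⟨p1w, hp1w, hp1ws⟩ := walk_join SimpleGraph.Walk.nil hadj1 ch
    SimpleGraph.Walk.IsPath.nil hch
    (by intro v hv
        simp only [SimpleGraph.Walk.support_nil, List.mem_singleton] at hv
        subst hv
        intro hmem
        obtain ⟨m, _, _, h3⟩ := hchs _ hmem
        rw [hx] at h3; simp at h3)
  have hadj2 : (G2 hs ht hi1 hi2 hj1 hj2).Adj (⟨Ma (fa s i (k+1)), hwok⟩ : V2 s t i j) y := by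
    refine adj2_parent hs ht hi1 hi2 hj1 hj2 ?_ (by rw [hy]; simp)
    rw [hy]
    rfl
  obtain ⟨p2w, hp2w, hp2ws⟩ := walk_join p1w hadj2 SimpleGraph.Walk.nil hp1w
    SimpleGraph.Walk.IsPath.nil
    (by intro v hv
        simp only [SimpleGraph.Walk.support_nil, List.mem_singleton]
        intro he
        subst he
        rw [hp1ws, List.mem_append] at hv
        rcases hv with hv | hv
        · simp only [SimpleGraph.Walk.support_nil, List.mem_singleton] at hv
          subst hv
          rw [hy] at hx; simp at hx <;> omega
        · obtain ⟨m, _, _, h3⟩ := hchs _ hv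
          rw [hy] at h3; simp at h3)
  refine ⟨p2w, hp2w, ?_⟩
  intro v hv
  rw [hp2ws, List.mem_append, hp1ws, List.mem_append] at hv
  rcases hv with (hv | hv) | hv
  · simp only [SimpleGraph.Walk.support_nil, List.mem_singleton] at hv
    exact Or.inl (hv ▸ hx)
  · obtain ⟨m, h1, h2, h3⟩ := hchs _ hv
    exact Or.inr (Or.inr ⟨m, h1, h2, h3⟩)
  · simp only [SimpleGraph.Walk.support_nil, List.mem_singleton] at hv
    exact Or.inr (Or.inl (hv ▸ hy))

lemma bpath2 (l : ℕ) (hl : 1 ≤ l) (hl2 : l + 1 ≤ t) (hlj : l ≠ j) (x y : V2 s t i j)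
    (hx : x.val = Lb l) (hy : y.val = Lb (l+1)) :
    ∃ p : (G2 hs ht hi1 hi2 hj1 hj2).Walk x y, p.IsPath ∧
      ∀ v ∈ p.support, v.val = Lb l ∨ v.val = Lb (l+1) ∨
        ∃ n, 1 ≤ n ∧ n ≤ t ∧ n ≠ j ∧ n ≠ j + 1 ∧ v.val = Nb n := by
  have hg1 : 1 ≤ gb t j l := by simp only [gb]; split_ifs <;> omega
  have hg2 : gb t j l ≤ gb t j (l+1) := by simp only [gb]; split_ifs <;> omega
  have hg3 : gb t j (l+1) ≤ t := by simp only [gb]; split_ifs <;> omega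
  have hseg : gb t j (l+1) + 1 ≤ j ∨ j + 2 ≤ gb t j l := by
    simp only [gb]; split_ifs <;> omega
  have heta1 : eta i j (gb t j l) = Nb (gb t j l) := by
    rcases hseg with h | h
    · exact eta_low (by omega)
    · exact eta_high (by omega)
  have heta2 : eta i j (gb t j (l+1)) = Nb (gb t j (l+1)) := by
    rcases hseg with h | h
    · exact eta_low (by omega)
    · exact eta_high (by omega)
  have huok : ok2 s t i j (Nb (gb t j l)) := by simp <;> omega
  have hwok : ok2 s t i j (Nb (gb t j (l+1))) := by simp <;> omega
  obtain ⟨ch, hch, hchs⟩ := chainN2' hs ht hi1 hi2 hj1 hj2 (gb t j l) (gb t j (l+1))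
    hg1 hg2 hg3 hseg ⟨Nb (gb t j l), huok⟩ ⟨Nb (gb t j (l+1)), hwok⟩ rfl rfl
  have hadj1 : (G2 hs ht hi1 hi2 hj1 hj2).Adj x ⟨Nb (gb t j l), huok⟩ := by
    refine adj2_child hs ht hi1 hi2 hj1 hj2 ?_ (by rw [hx]; simp)
    rw [hx]
    show p2 s t i j (Lb l) = Nb (gb t j l)
    rw [p2_Lb, heta1]
  have hadj2 : (G2 hs ht hi1 hi2 hj1 hj2).Adj (⟨Nb (gb t j (l+1)), hwok⟩ : V2 s t i j) y := by
    refine adj2_parent hs ht hi1 hi2 hj1 hj2 ?_ (by rw [hy]; simp)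
    rw [hy]
    show p2 s t i j (Lb (l+1)) = Nb (gb t j (l+1))
    rw [p2_Lb, heta2]
  obtain ⟨p1w, hp1w, hp1ws⟩ := walk_join SimpleGraph.Walk.nil hadj1 ch
    SimpleGraph.Walk.IsPath.nil hch
    (by intro v hv
        simp only [SimpleGraph.Walk.support_nil, List.mem_singleton] at hv
        subst hv
        intro hmem
        obtain ⟨n, _, _, h3⟩ := hchs _ hmem
        rw [hx] at h3; simp at h3)
  obtain ⟨p2w, hp2w, hp2ws⟩ := walk_join p1w hadj2 SimpleGraph.Walk.nil hp1w
    SimpleGraph.Walk.IsPath.nil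
    (by intro v hv
        simp only [SimpleGraph.Walk.support_nil, List.mem_singleton]
        intro he
        subst he
        rw [hp1ws, List.mem_append] at hv
        rcases hv with hv | hv
        · simp only [SimpleGraph.Walk.support_nil, List.mem_singleton] at hv
          subst hv
          rw [hy] at hx; simp at hx <;> omega
        · obtain ⟨n, _, _, h3⟩ := hchs _ hv
          rw [hy] at h3; simp at h3)
  refine ⟨p2w, hp2w, ?_⟩
  intro v hv
  rw [hp2ws, List.mem_append, hp1ws, List.mem_append] at hv
  rcases hv with (hv | hv) | hv
  · simp only [SimpleGraph.Walk.support_nil, List.mem_singleton] at hv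
    exact Or.inl (hv ▸ hx)
  · obtain ⟨n, h1, h2, h3⟩ := hchs _ hv
    exact Or.inr (Or.inr ⟨n, by omega, by omega, by omega, by omega, h3⟩)
  · simp only [SimpleGraph.Walk.support_nil, List.mem_singleton] at hv
    exact Or.inr (Or.inl (hv ▸ hy))

lemma bjpath2 (x y : V2 s t i j) (hx : x.val = Lb j) (hy : y.val = Lb (j+1)) :
    ∃ p : (G2 hs ht hi1 hi2 hj1 hj2).Walk x y, p.IsPath ∧
      ∀ v ∈ p.support, v.val = Lb j ∨ v.val = Lb (j+1) ∨ v.val = Ma i ∨ v.val = Ma (i+1) ∨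
        v.val = Nb (j-1) ∨ v.val = Nb (j+2) := by
  have hxok := x.2
  have hyok := y.2
  have hxx : x = ⟨Lb j, by simp <;> omega⟩ := Subtype.ext hx
  have hyy : y = ⟨Lb (j+1), by simp <;> omega⟩ := Subtype.ext hy
  subst hxx
  subst hyy
  have hokmi : ok2 s t i j (Ma i) := by simp <;> omega
  have hokmi1 : ok2 s t i j (Ma (i+1)) := by simp <;> omega
  have hA3 : (G2 hs ht hi1 hi2 hj1 hj2).Adj ⟨Ma i, hokmi⟩ ⟨Ma (i+1), hokmi1⟩ :=
    adjM2 hs ht hi1 hi2 hj1 hj2 i hi1 (by omega) _ _ rfl rfl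
  by_cases h1 : j = 1
  · have hA1 : (G2 hs ht hi1 hi2 hj1 hj2).Adj ⟨Lb j, by simp <;> omega⟩ ⟨Ma i, hokmi⟩ := by
      refine adj2_child hs ht hi1 hi2 hj1 hj2 ?_ (by simp)
      show p2 s t i j (Lb j) = Ma i
      have hgb : gb t j j = j := by rw [gb]; split_ifs <;> omega
      rw [p2_Lb, hgb, eta_j]
    by_cases h2 : j + 1 = t
    · have hA5 : (G2 hs ht hi1 hi2 hj1 hj2).Adj ⟨Ma (i+1), hokmi1⟩ ⟨Lb (j+1), by simp <;> omega⟩ := by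
        refine adj2_parent hs ht hi1 hi2 hj1 hj2 ?_ (by simp)
        show p2 s t i j (Lb (j+1)) = Ma (i+1)
        have hgb : gb t j (j+1) = j+1 := by rw [gb]; split_ifs <;> omega
        rw [p2_Lb, hgb, eta_j1]
      refine ⟨SimpleGraph.Walk.cons hA1 (SimpleGraph.Walk.cons hA3
        (SimpleGraph.Walk.cons hA5 SimpleGraph.Walk.nil)), ?_, ?_⟩
      · apply SimpleGraph.Walk.IsPath.mk'
        simp [Subtype.mk.injEq]
        try omega
      · intro v hv
        simp only [SimpleGraph.Walk.support_cons, SimpleGraph.Walk.support_nil, List.mem_cons,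
          List.mem_singleton, List.not_mem_nil, or_false] at hv
        rcases hv with rfl | rfl | rfl | rfl
        · exact Or.inl rfl
        · exact Or.inr (Or.inr (Or.inl rfl))
        · exact Or.inr (Or.inr (Or.inr (Or.inl rfl)))
        · exact Or.inr (Or.inl rfl)
    · have hA4 : (G2 hs ht hi1 hi2 hj1 hj2).Adj ⟨Ma (i+1), hokmi1⟩ ⟨Nb (j+2), by simp <;> omega⟩ := by
        refine adj2_parent hs ht hi1 hi2 hj1 hj2 ?_ (by simp)
        show p2 s t i j (Nb (j+2)) = Ma (i+1)
        rw [p2_Nb, if_neg (by omega), if_pos (by omega)]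
      have hA5 : (G2 hs ht hi1 hi2 hj1 hj2).Adj ⟨Nb (j+2), by simp <;> omega⟩
          ⟨Lb (j+1), by simp <;> omega⟩ := by
        refine adj2_parent hs ht hi1 hi2 hj1 hj2 ?_ (by simp)
        show p2 s t i j (Lb (j+1)) = Nb (j+2)
        have hgb : gb t j (j+1) = j+2 := by rw [gb]; split_ifs <;> omega
        rw [p2_Lb, hgb, eta_high (by omega)]
      refine ⟨SimpleGraph.Walk.cons hA1 (SimpleGraph.Walk.cons hA3 (SimpleGraph.Walk.cons hA4
        (SimpleGraph.Walk.cons hA5 SimpleGraph.Walk.nil))), ?_, ?_⟩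
      · apply SimpleGraph.Walk.IsPath.mk'
        simp [Subtype.mk.injEq]
        try omega
      · intro v hv
        simp only [SimpleGraph.Walk.support_cons, SimpleGraph.Walk.support_nil, List.mem_cons,
          List.mem_singleton, List.not_mem_nil, or_false] at hv
        rcases hv with rfl | rfl | rfl | rfl | rfl
        · exact Or.inl rfl
        · exact Or.inr (Or.inr (Or.inl rfl))
        · exact Or.inr (Or.inr (Or.inr (Or.inl rfl)))
        · exact Or.inr (Or.inr (Or.inr (Or.inr (Or.inr rfl))))
        · exact Or.inr (Or.inl rfl)
  · have hA1 : (G2 hs ht hi1 hi2 hj1 hj2).Adj ⟨Lb j, by simp <;> omega⟩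
        ⟨Nb (j-1), by simp <;> omega⟩ := by
      refine adj2_child hs ht hi1 hi2 hj1 hj2 ?_ (by simp)
      show p2 s t i j (Lb j) = Nb (j-1)
      have hgb : gb t j j = j - 1 := by rw [gb]; split_ifs <;> omega
      rw [p2_Lb, hgb, eta_low (by omega)]
    have hA2 : (G2 hs ht hi1 hi2 hj1 hj2).Adj ⟨Nb (j-1), by simp <;> omega⟩ ⟨Ma i, hokmi⟩ := by
      refine adj2_child hs ht hi1 hi2 hj1 hj2 ?_ (by simp)
      show p2 s t i j (Nb (j-1)) = Ma i
      rw [p2_Nb, if_pos (by omega), if_pos (by omega)]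
    by_cases h2 : j + 1 = t
    · have hA5 : (G2 hs ht hi1 hi2 hj1 hj2).Adj ⟨Ma (i+1), hokmi1⟩ ⟨Lb (j+1), by simp <;> omega⟩ := by
        refine adj2_parent hs ht hi1 hi2 hj1 hj2 ?_ (by simp)
        show p2 s t i j (Lb (j+1)) = Ma (i+1)
        have hgb : gb t j (j+1) = j+1 := by rw [gb]; split_ifs <;> omega
        rw [p2_Lb, hgb, eta_j1]
      refine ⟨SimpleGraph.Walk.cons hA1 (SimpleGraph.Walk.cons hA2 (SimpleGraph.Walk.cons hA3
        (SimpleGraph.Walk.cons hA5 SimpleGraph.Walk.nil))), ?_, ?_⟩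
      · apply SimpleGraph.Walk.IsPath.mk'
        simp [Subtype.mk.injEq]
        try omega
      · intro v hv
        simp only [SimpleGraph.Walk.support_cons, SimpleGraph.Walk.support_nil, List.mem_cons,
          List.mem_singleton, List.not_mem_nil, or_false] at hv
        rcases hv with rfl | rfl | rfl | rfl | rfl
        · exact Or.inl rfl
        · exact Or.inr (Or.inr (Or.inr (Or.inr (Or.inl rfl))))
        · exact Or.inr (Or.inr (Or.inl rfl))
        · exact Or.inr (Or.inr (Or.inr (Or.inl rfl)))
        · exact Or.inr (Or.inl rfl)
    · have hA4 : (G2 hs ht hi1 hi2 hj1 hj2).Adj ⟨Ma (i+1), hokmi1⟩ ⟨Nb (j+2), by simp <;> omega⟩ := by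
        refine adj2_parent hs ht hi1 hi2 hj1 hj2 ?_ (by simp)
        show p2 s t i j (Nb (j+2)) = Ma (i+1)
        rw [p2_Nb, if_neg (by omega), if_pos (by omega)]
      have hA5 : (G2 hs ht hi1 hi2 hj1 hj2).Adj ⟨Nb (j+2), by simp <;> omega⟩
          ⟨Lb (j+1), by simp <;> omega⟩ := by
        refine adj2_parent hs ht hi1 hi2 hj1 hj2 ?_ (by simp)
        show p2 s t i j (Lb (j+1)) = Nb (j+2)
        have hgb : gb t j (j+1) = j+2 := by rw [gb]; split_ifs <;> omega
        rw [p2_Lb, hgb, eta_high (by omega)]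
      refine ⟨SimpleGraph.Walk.cons hA1 (SimpleGraph.Walk.cons hA2 (SimpleGraph.Walk.cons hA3
        (SimpleGraph.Walk.cons hA4 (SimpleGraph.Walk.cons hA5 SimpleGraph.Walk.nil)))), ?_, ?_⟩
      · apply SimpleGraph.Walk.IsPath.mk'
        simp [Subtype.mk.injEq]
        try omega
      · intro v hv
        simp only [SimpleGraph.Walk.support_cons, SimpleGraph.Walk.support_nil, List.mem_cons,
          List.mem_singleton, List.not_mem_nil, or_false] at hv
        rcases hv with rfl | rfl | rfl | rfl | rfl | rfl
        · exact Or.inl rfl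
        · exact Or.inr (Or.inr (Or.inr (Or.inr (Or.inl rfl))))
        · exact Or.inr (Or.inr (Or.inl rfl))
        · exact Or.inr (Or.inr (Or.inr (Or.inl rfl)))
        · exact Or.inr (Or.inr (Or.inr (Or.inr (Or.inr rfl))))
        · exact Or.inr (Or.inl rfl)

lemma sp1 (x y : V2 s t i j) (hx : x.val = La 1) (hy : y.val = Lb 1) :
    ∃ p : (G2 hs ht hi1 hi2 hj1 hj2).Walk x y, p.IsPath ∧
      ∀ v ∈ p.support, v.val = La 1 ∨ v.val = Lb 1 ∨
        (∃ m, 1 ≤ m ∧ m ≤ i ∧ v.val = Ma m) ∨ (∃ n, 1 ≤ n ∧ n ≤ j - 1 ∧ v.val = Nb n) := by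
  have hok1 : ok2 s t i j (Ma 1) := by simp <;> omega
  have hoki : ok2 s t i j (Ma i) := by simp <;> omega
  obtain ⟨ch, hch, hchs⟩ := chainM2' hs ht hi1 hi2 hj1 hj2 1 i le_rfl hi1 (by omega)
    ⟨Ma 1, hok1⟩ ⟨Ma i, hoki⟩ rfl rfl
  have hadj1 : (G2 hs ht hi1 hi2 hj1 hj2).Adj x ⟨Ma 1, hok1⟩ := by
    refine adj2_child hs ht hi1 hi2 hj1 hj2 ?_ (by rw [hx]; simp)
    rw [hx]
    show p2 s t i j (La 1) = Ma 1
    rw [p2_La]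
    simp only [Ma_inj]
    rw [fa]
    split_ifs <;> omega
  obtain ⟨p1w, hp1w, hp1ws⟩ := walk_join SimpleGraph.Walk.nil hadj1 ch
    SimpleGraph.Walk.IsPath.nil hch
    (by intro v hv
        simp only [SimpleGraph.Walk.support_nil, List.mem_singleton] at hv
        subst hv
        intro hmem
        obtain ⟨m, _, _, h3⟩ := hchs _ hmem
        rw [hx] at h3; simp at h3)
  -- p1w : x → Ma i, support [x] ++ ch
  by_cases hj1' : j = 1
  · have hadj2 : (G2 hs ht hi1 hi2 hj1 hj2).Adj (⟨Ma i, hoki⟩ : V2 s t i j) y := by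
      refine adj2_parent hs ht hi1 hi2 hj1 hj2 ?_ (by rw [hy]; simp)
      rw [hy]
      show p2 s t i j (Lb 1) = Ma i
      have hgb : gb t j 1 = j := by rw [gb, if_pos rfl]; omega
      rw [p2_Lb, hgb, eta_j]
    obtain ⟨p2w, hp2w, hp2ws⟩ := walk_join p1w hadj2 SimpleGraph.Walk.nil hp1w
      SimpleGraph.Walk.IsPath.nil
      (by intro v hv
          simp only [SimpleGraph.Walk.support_nil, List.mem_singleton]
          intro he
          subst he
          rw [hp1ws, List.mem_append] at hv
          rcases hv with hv | hv
          · simp only [SimpleGraph.Walk.support_nil, List.mem_singleton] at hv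
            subst hv
            rw [hy] at hx; simp at hx
          · obtain ⟨m, _, _, h3⟩ := hchs _ hv
            rw [hy] at h3; simp at h3)
    refine ⟨p2w, hp2w, ?_⟩
    intro v hv
    rw [hp2ws, List.mem_append, hp1ws, List.mem_append] at hv
    rcases hv with (hv | hv) | hv
    · simp only [SimpleGraph.Walk.support_nil, List.mem_singleton] at hv
      exact Or.inl (hv ▸ hx)
    · obtain ⟨m, h1, h2, h3⟩ := hchs _ hv
      exact Or.inr (Or.inr (Or.inl ⟨m, h1, h2, h3⟩))
    · simp only [SimpleGraph.Walk.support_nil, List.mem_singleton] at hv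
      exact Or.inr (Or.inl (hv ▸ hy))
  · -- j ≥ 2 : go down the left b-arm
    have hokn1 : ok2 s t i j (Nb 1) := by simp <;> omega
    have hoknj : ok2 s t i j (Nb (j-1)) := by simp <;> omega
    obtain ⟨chn, hchn, hchns⟩ := chainN2' hs ht hi1 hi2 hj1 hj2 1 (j-1) le_rfl (by omega)
      (by omega) (by omega) ⟨Nb 1, hokn1⟩ ⟨Nb (j-1), hoknj⟩ rfl rfl
    have hadj2 : (G2 hs ht hi1 hi2 hj1 hj2).Adj (⟨Ma i, hoki⟩ : V2 s t i j)
        ⟨Nb (j-1), hoknj⟩ := by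
      refine adj2_parent hs ht hi1 hi2 hj1 hj2 ?_ (by simp)
      show p2 s t i j (Nb (j-1)) = Ma i
      rw [p2_Nb, if_pos (by omega), if_pos (by omega)]
    obtain ⟨p2w, hp2w, hp2ws⟩ := walk_join p1w hadj2 chn.reverse hp1w hchn.reverse
      (by intro v hv hv2
          rw [SimpleGraph.Walk.support_reverse, List.mem_reverse] at hv2
          obtain ⟨n, _, _, h3⟩ := hchns _ hv2
          rw [hp1ws, List.mem_append] at hv
          rcases hv with hv | hv
          · simp only [SimpleGraph.Walk.support_nil, List.mem_singleton] at hv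
            subst hv
            rw [hx] at h3; simp at h3
          · obtain ⟨m, _, _, h3'⟩ := hchs _ hv
            rw [h3'] at h3; simp at h3)
    have hadj3 : (G2 hs ht hi1 hi2 hj1 hj2).Adj (⟨Nb 1, hokn1⟩ : V2 s t i j) y := by
      refine adj2_parent hs ht hi1 hi2 hj1 hj2 ?_ (by rw [hy]; simp)
      rw [hy]
      show p2 s t i j (Lb 1) = Nb 1
      have hgb : gb t j 1 = 1 := by rw [gb, if_pos rfl]
      rw [p2_Lb, hgb, eta_low (by omega)]
    obtain ⟨p3w, hp3w, hp3ws⟩ := walk_join p2w hadj3 SimpleGraph.Walk.nil hp2w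
      SimpleGraph.Walk.IsPath.nil
      (by intro v hv
          simp only [SimpleGraph.Walk.support_nil, List.mem_singleton]
          intro he
          subst he
          rw [hp2ws, List.mem_append, hp1ws, List.mem_append] at hv
          rcases hv with (hv | hv) | hv
          · simp only [SimpleGraph.Walk.support_nil, List.mem_singleton] at hv
            subst hv
            rw [hy] at hx; simp at hx
          · obtain ⟨m, _, _, h3⟩ := hchs _ hv
            rw [hy] at h3; simp at h3
          · rw [SimpleGraph.Walk.support_reverse, List.mem_reverse] at hv
            obtain ⟨n, _, _, h3⟩ := hchns _ hv
            rw [hy] at h3; simp at h3)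
    refine ⟨p3w, hp3w, ?_⟩
    intro v hv
    rw [hp3ws, List.mem_append, hp2ws, List.mem_append, hp1ws, List.mem_append] at hv
    rcases hv with ((hv | hv) | hv) | hv
    · simp only [SimpleGraph.Walk.support_nil, List.mem_singleton] at hv
      exact Or.inl (hv ▸ hx)
    · obtain ⟨m, h1, h2, h3⟩ := hchs _ hv
      exact Or.inr (Or.inr (Or.inl ⟨m, h1, h2, h3⟩))
    · rw [SimpleGraph.Walk.support_reverse, List.mem_reverse] at hv
      obtain ⟨n, h1, h2, h3⟩ := hchns _ hv
      exact Or.inr (Or.inr (Or.inr ⟨n, h1, h2, h3⟩))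
    · simp only [SimpleGraph.Walk.support_nil, List.mem_singleton] at hv
      exact Or.inr (Or.inl (hv ▸ hy))

lemma sp2 (x y : V2 s t i j) (hx : x.val = La s) (hy : y.val = Lb t) :
    ∃ p : (G2 hs ht hi1 hi2 hj1 hj2).Walk x y, p.IsPath ∧
      ∀ v ∈ p.support, v.val = La s ∨ v.val = Lb t ∨
        (∃ m, i + 1 ≤ m ∧ m ≤ s ∧ v.val = Ma m) ∨ (∃ n, j + 2 ≤ n ∧ n ≤ t ∧ v.val = Nb n) := by
  have hoks : ok2 s t i j (Ma s) := by simp <;> omega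
  have hoki1 : ok2 s t i j (Ma (i+1)) := by simp <;> omega
  obtain ⟨ch, hch, hchs⟩ := chainM2' hs ht hi1 hi2 hj1 hj2 (i+1) s (by omega) (by omega) le_rfl
    ⟨Ma (i+1), hoki1⟩ ⟨Ma s, hoks⟩ rfl rfl
  have hadj1 : (G2 hs ht hi1 hi2 hj1 hj2).Adj x ⟨Ma s, hoks⟩ := by
    refine adj2_child hs ht hi1 hi2 hj1 hj2 ?_ (by rw [hx]; simp)
    rw [hx]
    show p2 s t i j (La s) = Ma s
    rw [p2_La]
    simp only [Ma_inj]
    rw [fa]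
    split_ifs <;> omega
  obtain ⟨p1w, hp1w, hp1ws⟩ := walk_join SimpleGraph.Walk.nil hadj1 ch.reverse
    SimpleGraph.Walk.IsPath.nil hch.reverse
    (by intro v hv
        simp only [SimpleGraph.Walk.support_nil, List.mem_singleton] at hv
        subst hv
        intro hmem
        rw [SimpleGraph.Walk.support_reverse, List.mem_reverse] at hmem
        obtain ⟨m, _, _, h3⟩ := hchs _ hmem
        rw [hx] at h3; simp at h3)
  -- p1w : x → Ma (i+1)
  by_cases hjt : j + 1 = t
  · have hadj2 : (G2 hs ht hi1 hi2 hj1 hj2).Adj (⟨Ma (i+1), hoki1⟩ : V2 s t i j) y := by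
      refine adj2_parent hs ht hi1 hi2 hj1 hj2 ?_ (by rw [hy]; simp)
      rw [hy]
      show p2 s t i j (Lb t) = Ma (i+1)
      have hgb : gb t j t = t := by rw [gb]; split_ifs <;> omega
      have heta : eta i j t = Ma (i+1) := by
        rw [eta, if_pos ⟨by omega, by omega⟩]
        simp only [Ma_inj]
        omega
      rw [p2_Lb, hgb, heta]
    obtain ⟨p2w, hp2w, hp2ws⟩ := walk_join p1w hadj2 SimpleGraph.Walk.nil hp1w
      SimpleGraph.Walk.IsPath.nil
      (by intro v hv
          simp only [SimpleGraph.Walk.support_nil, List.mem_singleton]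
          intro he
          subst he
          rw [hp1ws, List.mem_append] at hv
          rcases hv with hv | hv
          · simp only [SimpleGraph.Walk.support_nil, List.mem_singleton] at hv
            subst hv
            rw [hy] at hx; simp at hx
          · rw [SimpleGraph.Walk.support_reverse, List.mem_reverse] at hv
            obtain ⟨m, _, _, h3⟩ := hchs _ hv
            rw [hy] at h3; simp at h3)
    refine ⟨p2w, hp2w, ?_⟩
    intro v hv
    rw [hp2ws, List.mem_append, hp1ws, List.mem_append] at hv
    rcases hv with (hv | hv) | hv
    · simp only [SimpleGraph.Walk.support_nil, List.mem_singleton] at hv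
      exact Or.inl (hv ▸ hx)
    · rw [SimpleGraph.Walk.support_reverse, List.mem_reverse] at hv
      obtain ⟨m, h1, h2, h3⟩ := hchs _ hv
      exact Or.inr (Or.inr (Or.inl ⟨m, h1, h2, h3⟩))
    · simp only [SimpleGraph.Walk.support_nil, List.mem_singleton] at hv
      exact Or.inr (Or.inl (hv ▸ hy))
  · have hoknj : ok2 s t i j (Nb (j+2)) := by simp <;> omega
    have hoknt : ok2 s t i j (Nb t) := by simp <;> omega
    obtain ⟨chn, hchn, hchns⟩ := chainN2' hs ht hi1 hi2 hj1 hj2 (j+2) t (by omega) (by omega)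
      le_rfl (by omega) ⟨Nb (j+2), hoknj⟩ ⟨Nb t, hoknt⟩ rfl rfl
    have hadj2 : (G2 hs ht hi1 hi2 hj1 hj2).Adj (⟨Ma (i+1), hoki1⟩ : V2 s t i j)
        ⟨Nb (j+2), hoknj⟩ := by
      refine adj2_parent hs ht hi1 hi2 hj1 hj2 ?_ (by simp)
      show p2 s t i j (Nb (j+2)) = Ma (i+1)
      rw [p2_Nb, if_neg (by omega), if_pos (by omega)]
    obtain ⟨p2w, hp2w, hp2ws⟩ := walk_join p1w hadj2 chn hp1w hchn
      (by intro v hv hv2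
          obtain ⟨n, _, _, h3⟩ := hchns _ hv2
          rw [hp1ws, List.mem_append] at hv
          rcases hv with hv | hv
          · simp only [SimpleGraph.Walk.support_nil, List.mem_singleton] at hv
            subst hv
            rw [hx] at h3; simp at h3
          · rw [SimpleGraph.Walk.support_reverse, List.mem_reverse] at hv
            obtain ⟨m, _, _, h3'⟩ := hchs _ hv
            rw [h3'] at h3; simp at h3)
    have hadj3 : (G2 hs ht hi1 hi2 hj1 hj2).Adj (⟨Nb t, hoknt⟩ : V2 s t i j) y := by
      refine adj2_parent hs ht hi1 hi2 hj1 hj2 ?_ (by rw [hy]; simp)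
      rw [hy]
      show p2 s t i j (Lb t) = Nb t
      have hgb : gb t j t = t := by rw [gb]; split_ifs <;> omega
      rw [p2_Lb, hgb, eta_high (by omega)]
    obtain ⟨p3w, hp3w, hp3ws⟩ := walk_join p2w hadj3 SimpleGraph.Walk.nil hp2w
      SimpleGraph.Walk.IsPath.nil
      (by intro v hv
          simp only [SimpleGraph.Walk.support_nil, List.mem_singleton]
          intro he
          subst he
          rw [hp2ws, List.mem_append, hp1ws, List.mem_append] at hv
          rcases hv with (hv | hv) | hv
          · simp only [SimpleGraph.Walk.support_nil, List.mem_singleton] at hv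
            subst hv
            rw [hy] at hx; simp at hx
          · rw [SimpleGraph.Walk.support_reverse, List.mem_reverse] at hv
            obtain ⟨m, _, _, h3⟩ := hchs _ hv
            rw [hy] at h3; simp at h3
          · obtain ⟨n, _, _, h3⟩ := hchns _ hv
            rw [hy] at h3; simp at h3)
    refine ⟨p3w, hp3w, ?_⟩
    intro v hv
    rw [hp3ws, List.mem_append, hp2ws, List.mem_append, hp1ws, List.mem_append] at hv
    rcases hv with ((hv | hv) | hv) | hv
    · simp only [SimpleGraph.Walk.support_nil, List.mem_singleton] at hv
      exact Or.inl (hv ▸ hx)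
    · rw [SimpleGraph.Walk.support_reverse, List.mem_reverse] at hv
      obtain ⟨m, h1, h2, h3⟩ := hchs _ hv
      exact Or.inr (Or.inr (Or.inl ⟨m, h1, h2, h3⟩))
    · obtain ⟨n, h1, h2, h3⟩ := hchns _ hv
      exact Or.inr (Or.inr (Or.inr ⟨n, h1, h2, h3⟩))
    · simp only [SimpleGraph.Walk.support_nil, List.mem_singleton] at hv
      exact Or.inr (Or.inl (hv ▸ hy))

noncomputable def T2 : UTree (ℕ ⊕ ℕ) (Lst s t) where
  V := V2 s t i j
  fV := inferInstance
  G := G2 hs ht hi1 hi2 hj1 hj2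
  isTree := isTree2 hs ht hi1 hi2 hj1 hj2
  label := fun l => ⟨Sum.inl l.val, by
    obtain ⟨x, hx⟩ := l
    rcases hx with ⟨m, hm, rfl⟩ | ⟨m, hm, rfl⟩
    · exact ⟨hm.1, hm.2⟩
    · exact ⟨hm.1, hm.2⟩⟩
  labelInj := by
    intro x y hxy
    apply Subtype.ext
    have := congrArg Subtype.val hxy
    simpa using this
  leafIff := by
    intro v
    constructor
    · rintro ⟨l, rfl⟩
      apply leaf2_ncard hs ht hi1 hi2 hj1 hj2
      obtain ⟨x, hx⟩ := l
      rcases x with m | m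
      · exact ⟨m, Or.inl rfl⟩
      · exact ⟨m, Or.inr rfl⟩
    · intro hn
      rcases v with ⟨((m | m) | (m | m)), hv⟩
      · exact ⟨⟨Sum.inl m, Or.inl ⟨m, ⟨hv.1, hv.2⟩, rfl⟩⟩, rfl⟩
      · exact ⟨⟨Sum.inr m, Or.inr ⟨m, ⟨hv.1, hv.2⟩, rfl⟩⟩, rfl⟩
      · exfalso
        have := (int2_deg hs ht hi1 hi2 hj1 hj2 ⟨_, hv⟩).1 m rfl
        omega
      · exfalso
        have := (int2_deg hs ht hi1 hi2 hj1 hj2 ⟨_, hv⟩).2 m rfl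
        omega
  noDeg2 := by
    intro v
    rcases v with ⟨((m | m) | (m | m)), hv⟩
    · have := leaf2_ncard hs ht hi1 hi2 hj1 hj2 ⟨_, hv⟩ ⟨m, Or.inl rfl⟩; omega
    · have := leaf2_ncard hs ht hi1 hi2 hj1 hj2 ⟨_, hv⟩ ⟨m, Or.inr rfl⟩; omega
    · have := (int2_deg hs ht hi1 hi2 hj1 hj2 ⟨_, hv⟩).1 m rfl; omega
    · have := (int2_deg hs ht hi1 hi2 hj1 hj2 ⟨_, hv⟩).2 m rfl; omega

lemma T2_label {x : ℕ ⊕ ℕ} (hx : x ∈ Lst s t) :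
    ((T2 hs ht hi1 hi2 hj1 hj2).label ⟨x, hx⟩).val = Sum.inl x := rfl

lemma T2_disp_gen (k l : ℕ) (hk : 1 ≤ k) (hk2 : k + 1 ≤ s) (hl : 1 ≤ l) (hl2 : l + 1 ≤ t)
    (hlj : l ≠ j) :
    (T2 hs ht hi1 hi2 hj1 hj2).displays
      (quartet (Sum.inl k) (Sum.inl (k+1)) (Sum.inr l) (Sum.inr (l+1))) := by
  apply displays_of_d4
  refine ⟨mem_Lst_a hk (by omega), mem_Lst_a (by omega) hk2,
    mem_Lst_b hl (by omega), mem_Lst_b (by omega) hl2, ?_⟩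
  obtain ⟨p, hp, hps⟩ := apath2 hs ht hi1 hi2 hj1 hj2 k hk hk2 _ _
    (T2_label hs ht hi1 hi2 hj1 hj2 _) (T2_label hs ht hi1 hi2 hj1 hj2 _)
  obtain ⟨p', hp', hps'⟩ := bpath2 hs ht hi1 hi2 hj1 hj2 l hl hl2 hlj _ _
    (T2_label hs ht hi1 hi2 hj1 hj2 _) (T2_label hs ht hi1 hi2 hj1 hj2 _)
  refine ⟨p, p', hp, hp', ?_⟩
  intro v hv hv'
  obtain h1 := hps v hv
  obtain h2 := hps' v hv'
  rcases h1 with h1 | h1 | ⟨m, hm1, hm2, h1⟩ <;>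
    rcases h2 with h2 | h2 | ⟨n, hn1, hn2, hn3, hn4, h2⟩ <;>
    rw [h1] at h2 <;> simp at h2

lemma T2_disp_bj (k : ℕ) (hk : 1 ≤ k) (hk2 : k + 1 ≤ s) (hki : k ≠ i) :
    (T2 hs ht hi1 hi2 hj1 hj2).displays
      (quartet (Sum.inl k) (Sum.inl (k+1)) (Sum.inr j) (Sum.inr (j+1))) := by
  apply displays_of_d4
  refine ⟨mem_Lst_a hk (by omega), mem_Lst_a (by omega) hk2,
    mem_Lst_b hj1 (by omega), mem_Lst_b (by omega) hj2, ?_⟩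
  obtain ⟨p, hp, hps⟩ := apath2 hs ht hi1 hi2 hj1 hj2 k hk hk2 _ _
    (T2_label hs ht hi1 hi2 hj1 hj2 _) (T2_label hs ht hi1 hi2 hj1 hj2 _)
  obtain ⟨p', hp', hps'⟩ := bjpath2 hs ht hi1 hi2 hj1 hj2 _ _
    (T2_label hs ht hi1 hi2 hj1 hj2 _) (T2_label hs ht hi1 hi2 hj1 hj2 _)
  refine ⟨p, p', hp, hp', ?_⟩
  intro v hv hv'
  have hav : fa s i (k+1) < i ∨ i + 1 < fa s i k := by
    simp only [fa]; split_ifs <;> omega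
  obtain h1 := hps v hv
  obtain h2 := hps' v hv'
  rcases h1 with h1 | h1 | ⟨m, hm1, hm2, h1⟩ <;>
    rcases h2 with h2 | h2 | h2 | h2 | h2 | h2 <;>
    rw [h1] at h2 <;> simp at h2 <;> omega

lemma T2_disp_sp :
    (T2 hs ht hi1 hi2 hj1 hj2).displays
      (quartet (Sum.inl 1) (Sum.inr 1) (Sum.inl s) (Sum.inr t)) := by
  apply displays_of_d4
  refine ⟨mem_Lst_a le_rfl (by omega), mem_Lst_b le_rfl (by omega),
    mem_Lst_a (by omega) le_rfl, mem_Lst_b (by omega) le_rfl, ?_⟩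
  obtain ⟨p, hp, hps⟩ := sp1 hs ht hi1 hi2 hj1 hj2 _ _
    (T2_label hs ht hi1 hi2 hj1 hj2 _) (T2_label hs ht hi1 hi2 hj1 hj2 _)
  obtain ⟨p', hp', hps'⟩ := sp2 hs ht hi1 hi2 hj1 hj2 _ _
    (T2_label hs ht hi1 hi2 hj1 hj2 _) (T2_label hs ht hi1 hi2 hj1 hj2 _)
  refine ⟨p, p', hp, hp', ?_⟩
  intro v hv hv'
  obtain h1 := hps v hv
  obtain h2 := hps' v hv'
  rcases h1 with h1 | h1 | ⟨m, hm1, hm2, h1⟩ | ⟨n, hn1, hn2, h1⟩ <;>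
    rcases h2 with h2 | h2 | ⟨m', hm1', hm2', h2⟩ | ⟨n', hn1', hn2', h2⟩ <;>
    rw [h1] at h2 <;> simp at h2 <;> omega

end C2

/-- for all s, t ≥ 2 and every q ∈ Q_{s,t}, `Q_{s,t} \ {q}` is compatible. -/
theorem Qst_minus_one_compatible (s t : ℕ) (hs : 2 ≤ s) (ht : 2 ≤ t)
    (q : Sym2 (Sym2 (ℕ ⊕ ℕ))) (hq : q ∈ Qst s t) :
    QCompat (Lst s t) (↑(Qst s t) \ {q}) := by
  rw [Qst, Finset.mem_insert] at hq
  rcases hq with rfl | hq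
  · refine ⟨T1 hs ht, ?_⟩
    rintro q' ⟨hq1, hq2⟩
    rw [Finset.mem_coe, Qst, Finset.mem_insert] at hq1
    rcases hq1 with rfl | hq1
    · exact absurd rfl hq2
    · rw [Finset.mem_image] at hq1
      obtain ⟨⟨k, l⟩, hkl, rfl⟩ := hq1
      rw [Finset.mem_product, Finset.mem_Ico, Finset.mem_Ico] at hkl
      exact T1_displays hs ht k l hkl.1.1 (by omega) hkl.2.1 (by omega)
  · rw [Finset.mem_image] at hq
    obtain ⟨⟨i, j⟩, hij, rfl⟩ := hq
    rw [Finset.mem_product, Finset.mem_Ico, Finset.mem_Ico] at hij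
    obtain ⟨⟨hi1, hi2⟩, hj1, hj2⟩ := hij
    refine ⟨T2 hs ht hi1 hi2 hj1 hj2, ?_⟩
    rintro q' ⟨hq1, hq2⟩
    rw [Finset.mem_coe, Qst, Finset.mem_insert] at hq1
    rcases hq1 with rfl | hq1
    · exact T2_disp_sp hs ht hi1 hi2 hj1 hj2
    · rw [Finset.mem_image] at hq1
      obtain ⟨⟨k, l⟩, hkl, rfl⟩ := hq1
      rw [Finset.mem_product, Finset.mem_Ico, Finset.mem_Ico] at hkl
      by_cases hlj : l = j
      · subst hlj
        have hki : k ≠ i := by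
          intro e
          subst e
          exact hq2 rfl
        exact T2_disp_bj hs ht hi1 hi2 hj1 hj2 k hkl.1.1 (by omega) hki
      · exact T2_disp_gen hs ht hi1 hi2 hj1 hj2 k l hkl.1.1 (by omega) hkl.2.1 (by omega) hlj
end

section
/- For every n ≥ 3, if R is an incompatible set of rooted triplets over n labels with |R| > n - 1, then some proper subset of R is incompatible. -/
open SimpleGraph

universe u

namespace RTree

variable {S : Set ℕ} (T : RTree ℕ S)

lemma exists_path (v : T.V) : ∃ p : T.G.Walk T.root v, p.IsPath := by
  classical
  exact ((T.isTree.isConnected.preconnected T.root v).elim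
    fun w => ⟨w.bypass, w.bypass_isPath⟩)

lemma path_eq {v w : T.V} (p q : T.G.Walk v w) (hp : p.IsPath) (hq : q.IsPath) : p = q := by
  have := T.isTree.IsAcyclic.path_unique ⟨p, hp⟩ ⟨q, hq⟩
  exact congrArg Subtype.val this

noncomputable def pathTo (v : T.V) : T.G.Walk T.root v := (T.exists_path v).choose

lemma pathTo_isPath (v : T.V) : (T.pathTo v).IsPath := (T.exists_path v).choose_spec

lemma pathTo_eq {v : T.V} (p : T.G.Walk T.root v) (hp : p.IsPath) : T.pathTo v = p :=
  T.path_eq _ _ (T.pathTo_isPath v) hp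

lemma anc_iff_mem {u v : T.V} (p : T.G.Walk T.root v) (hp : p.IsPath) :
    T.anc u v ↔ u ∈ p.support := by
  constructor
  · rintro ⟨q, hq, hm⟩; rwa [T.path_eq q p hq hp] at hm
  · intro h; exact ⟨p, hp, h⟩

lemma anc_iff_mem_pathTo {u v : T.V} : T.anc u v ↔ u ∈ (T.pathTo v).support :=
  T.anc_iff_mem _ (T.pathTo_isPath v)

lemma anc_refl (v : T.V) : T.anc v v :=
  ⟨T.pathTo v, T.pathTo_isPath v, SimpleGraph.Walk.end_mem_support _⟩

lemma anc_root (v : T.V) : T.anc T.root v :=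
  ⟨T.pathTo v, T.pathTo_isPath v, SimpleGraph.Walk.start_mem_support _⟩

lemma anc_trans {u w v : T.V} (h1 : T.anc u w) (h2 : T.anc w v) : T.anc u v := by
  classical
  rw [T.anc_iff_mem_pathTo] at h2 ⊢
  have hP : ((T.pathTo v).takeUntil w h2).IsPath := (T.pathTo_isPath v).takeUntil h2
  have heq : T.pathTo w = (T.pathTo v).takeUntil w h2 := T.pathTo_eq _ hP
  rw [T.anc_iff_mem_pathTo, heq] at h1
  exact (T.pathTo v).support_takeUntil_subset h2 h1

noncomputable def depth (v : T.V) : ℕ := (T.pathTo v).length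

lemma walk_length_zero {V : Type} {G : SimpleGraph V} {u w : V} (q : G.Walk u w)
    (h : q.length = 0) : u = w := by
  cases q with
  | nil => rfl
  | cons h' q' => simp [SimpleGraph.Walk.length_cons] at h

lemma anc_depth {u w : T.V} (h : T.anc u w) :
    T.depth u ≤ T.depth w ∧ (T.depth w ≤ T.depth u → u = w) := by
  classical
  rw [T.anc_iff_mem_pathTo] at h
  have hP : ((T.pathTo w).takeUntil u h).IsPath := (T.pathTo_isPath w).takeUntil h
  have he : T.pathTo u = (T.pathTo w).takeUntil u h := T.pathTo_eq _ hP
  have hlen : ((T.pathTo w).takeUntil u h).length + ((T.pathTo w).dropUntil u h).length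
      = (T.pathTo w).length := by
    rw [← SimpleGraph.Walk.length_append, SimpleGraph.Walk.take_spec]
  constructor
  · show (T.pathTo u).length ≤ (T.pathTo w).length
    rw [he]; omega
  · intro hle
    have h0 : ((T.pathTo w).dropUntil u h).length = 0 := by
      have : (T.pathTo u).length = ((T.pathTo w).takeUntil u h).length := by rw [he]
      unfold depth at hle; omega
    exact walk_length_zero _ h0

lemma anc_antisymm {u w : T.V} (h1 : T.anc u w) (h2 : T.anc w u) : u = w :=
  (T.anc_depth h1).2 (T.anc_depth h2).1

lemma anc_total {u w v : T.V} (hu : T.anc u v) (hw : T.anc w v) :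
    T.anc u w ∨ T.anc w u := by
  classical
  rw [T.anc_iff_mem_pathTo] at hu hw
  set p := T.pathTo v with hp
  have hPp : p.IsPath := T.pathTo_isPath v
  by_cases hcase : u ∈ (p.takeUntil w hw).support
  · exact Or.inl ⟨p.takeUntil w hw, hPp.takeUntil hw, hcase⟩
  · have hu' : u ∈ (p.dropUntil w hw).support := by
      have hiff := SimpleGraph.Walk.mem_support_append_iff
        (p.takeUntil w hw) (p.dropUntil w hw) (t := u)
      rw [SimpleGraph.Walk.take_spec] at hiff
      rcases hiff.mp hu with h | h
      · exact absurd h hcase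
      · exact h
    refine Or.inr ⟨(p.takeUntil w hw).append ((p.dropUntil w hw).takeUntil u hu'), ?_, ?_⟩
    · rw [SimpleGraph.Walk.isPath_def, SimpleGraph.Walk.support_append]
      have hnodup : p.support.Nodup := hPp.support_nodup
      have hsplit : p.support = (p.takeUntil w hw).support
          ++ ((p.dropUntil w hw).support).tail := by
        conv_lhs => rw [← SimpleGraph.Walk.take_spec p hw]
        exact SimpleGraph.Walk.support_append _ _
      have hsplit2 : ((p.dropUntil w hw).support).tail
          = ((p.dropUntil w hw).takeUntil u hu').support.tail
            ++ (((p.dropUntil w hw).dropUntil u hu').support).tail := by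
        conv_lhs => rw [← SimpleGraph.Walk.take_spec (p.dropUntil w hw) hu']
        rw [SimpleGraph.Walk.support_append, List.tail_append_of_ne_nil]
        exact SimpleGraph.Walk.support_ne_nil _
      rw [hsplit, hsplit2, ← List.append_assoc] at hnodup
      exact hnodup.sublist (List.sublist_append_left _ _)
    · rw [SimpleGraph.Walk.mem_support_append_iff]
      exact Or.inl (SimpleGraph.Walk.end_mem_support _)

end RTree
namespace RTree

variable {S : Set ℕ} (T : RTree ℕ S)

lemma exists_isMRCA (A : Set T.V) (hA : A.Nonempty) : ∃ m, T.isMRCA A m := by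
  classical
  letI := T.fV
  set CA : Set T.V := {w | ∀ v ∈ A, T.anc w v} with hCA
  have hroot : T.root ∈ CA := fun v _ => T.anc_root v
  have hfin : CA.Finite := Set.toFinite _
  obtain ⟨m, hmCA, hmax⟩ := Finset.exists_max_image hfin.toFinset T.depth
    ⟨T.root, hfin.mem_toFinset.mpr hroot⟩
  rw [Set.Finite.mem_toFinset] at hmCA
  obtain ⟨v₀, hv₀⟩ := hA
  refine ⟨m, hmCA, fun w hw => ?_⟩
  have hw' : w ∈ CA := hw
  rcases T.anc_total (hw' v₀ hv₀) (hmCA v₀ hv₀) with h | h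
  · exact h
  · have hle : T.depth w ≤ T.depth m := hmax w (hfin.mem_toFinset.mpr hw')
    have : m = w := (T.anc_depth h).2 (le_trans hle (T.anc_depth h).1 |> fun _ => hle)
    exact this ▸ T.anc_refl m

lemma isMRCA_unique {A : Set T.V} {m m' : T.V} (h : T.isMRCA A m) (h' : T.isMRCA A m') :
    m = m' :=
  T.anc_antisymm (h'.2 m h.1) (h.2 m' h'.1)

lemma interior_two_adj {V : Type} {G : SimpleGraph V} :
    ∀ {s v : V} (p : G.Walk s v), p.IsPath → ∀ u ∈ p.support, u ≠ s → u ≠ v →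
      ∃ a b, a ≠ b ∧ G.Adj u a ∧ G.Adj u b := by
  intro s v p
  induction p with
  | nil =>
    intro _ u hu hus _
    simp only [SimpleGraph.Walk.support_nil, List.mem_singleton] at hu
    exact absurd hu hus
  | @cons s x v h q ih =>
    intro hp u hu hus huv
    rw [SimpleGraph.Walk.support_cons, List.mem_cons] at hu
    rcases hu with rfl | hu
    · exact absurd rfl hus
    have hq : q.IsPath := (SimpleGraph.Walk.cons_isPath_iff _ _).mp hp |>.1
    have hsns : s ∉ q.support := ((SimpleGraph.Walk.cons_isPath_iff _ _).mp hp).2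
    by_cases hux : u = x
    · subst hux
      cases q with
      | nil => exact absurd rfl huv
      | @cons _ b _ h' q' =>
        refine ⟨s, b, ?_, h.symm, h'⟩
        intro hsb
        apply hsns
        rw [hsb, SimpleGraph.Walk.support_cons]
        exact List.mem_cons_of_mem _ (SimpleGraph.Walk.start_mem_support _)
    · exact ih hq u hu hux huv

lemma two_le_nbhd_of_strict_anc {u v : T.V} (h : T.anc u v) (huv : u ≠ v)
    (hur : u ≠ T.root) : 2 ≤ (T.G.neighborSet u).ncard := by
  letI := T.fV
  rw [T.anc_iff_mem_pathTo] at h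
  obtain ⟨a, b, hab, ha, hb⟩ :=
    interior_two_adj (T.pathTo v) (T.pathTo_isPath v) u h hur huv
  have hsub : {a, b} ⊆ T.G.neighborSet u := by
    intro z hz; rcases hz with rfl | hz
    · exact ha
    · rw [Set.mem_singleton_iff] at hz; subst hz; exact hb
  calc 2 = ({a, b} : Set T.V).ncard := (Set.ncard_pair hab).symm
    _ ≤ (T.G.neighborSet u).ncard := Set.ncard_le_ncard hsub (Set.toFinite _)

end RTree
namespace RTree

variable {S : Set ℕ} (T : RTree ℕ S)

lemma easy_disconnect {R : Set (Sym2 ℕ × ℕ)} {S : Set ℕ} (T : RTree ℕ S)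
    (hdisp : ∀ t ∈ R, T.displays t) {S' : Set ℕ} (hS'S : S' ⊆ S)
    (h3 : 3 ≤ S'.ncard)
    (hconn : ∀ x ∈ S', ∀ y ∈ S', (tripGraph R S').Reachable x y) : False := by
  classical
  have hfin : S'.Finite := by
    by_contra h
    rw [Set.Infinite.ncard h] at h3; omega
  have hne : S'.Nonempty := by
    rcases Set.eq_empty_or_nonempty S' with rfl | h
    · simp at h3
    · exact h
  set vv : ℕ → T.V := fun x => if h : x ∈ S then T.label ⟨x, h⟩ else T.root with hvv
  have hvv_eq : ∀ (x : ℕ) (h : x ∈ S), vv x = T.label ⟨x, h⟩ := by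
    intro x h; simp only [hvv, dif_pos h]
  set A : Set T.V := vv '' S' with hA
  obtain ⟨M, hM⟩ := T.exists_isMRCA A (hne.image vv)
  have hleaf : ∀ x ∈ S', (T.G.neighborSet (vv x)).ncard = 1 ∧ vv x ≠ T.root := by
    intro x hx
    exact (T.leafIff (vv x)).mp ⟨⟨x, hS'S hx⟩, (hvv_eq x (hS'S hx)).symm⟩
  have hinj : ∀ x ∈ S', ∀ y ∈ S', vv x = vv y → x = y := by
    intro x hx y hy hxy
    rw [hvv_eq x (hS'S hx), hvv_eq y (hS'S hy)] at hxy
    exact congrArg Subtype.val (T.labelInj hxy)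
  have hne_M : ∀ x ∈ S', vv x ≠ M := by
    intro x hx hxM
    obtain ⟨y, hy, hyx⟩ : ∃ y ∈ S', y ≠ x := by
      obtain ⟨y, hy⟩ := Set.exists_ne_of_one_lt_ncard (by omega : 1 < S'.ncard) x
      exact ⟨y, hy.1, hy.2⟩
    have hancy : T.anc (vv x) (vv y) := hxM ▸ hM.1 (vv y) ⟨y, hy, rfl⟩
    have hxyne : vv x ≠ vv y := fun h => hyx (hinj x hx y hy h).symm
    have h2 := T.two_le_nbhd_of_strict_anc hancy hxyne (hleaf x hx).2
    have h1 := (hleaf x hx).1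
    omega
  set rel : ℕ → ℕ → Prop := fun x y => ∃ m, T.isMRCA {vv x, vv y} m ∧ m ≠ M with hrel
  have hrel_refl : ∀ x ∈ S', rel x x := by
    intro x hx
    refine ⟨vv x, ⟨?_, ?_⟩, hne_M x hx⟩
    · intro v hv
      rcases Set.mem_insert_iff.mp hv with rfl | hv
      · exact T.anc_refl _
      · rw [Set.mem_singleton_iff] at hv; subst hv; exact T.anc_refl _
    · intro w hw; exact hw (vv x) (Set.mem_insert _ _)
  have hedge : ∀ x y, (tripGraph R S').Adj x y → rel x y := by
    intro x y hadj
    obtain ⟨hxy, hx, hy, c, hc, hRc⟩ := hadj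
    obtain ⟨ha, hb, hc', m, M', hm, hM', hancM'm, hne'⟩ := hdisp _ hRc x y c rfl
    have e1 : T.label ⟨x, ha⟩ = vv x := (hvv_eq x ha).symm
    have e2 : T.label ⟨y, hb⟩ = vv y := (hvv_eq y hb).symm
    have e3 : T.label ⟨c, hc'⟩ = vv c := (hvv_eq c hc').symm
    rw [e1, e2] at hm
    rw [e1, e2, e3] at hM'
    have hMca : ∀ v ∈ ({vv x, vv y, vv c} : Set T.V), T.anc M v := by
      intro v hv
      rcases Set.mem_insert_iff.mp hv with rfl | hv
      · exact hM.1 _ ⟨x, hx, rfl⟩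
      rcases Set.mem_insert_iff.mp hv with rfl | hv
      · exact hM.1 _ ⟨y, hy, rfl⟩
      · rw [Set.mem_singleton_iff] at hv; subst hv; exact hM.1 _ ⟨c, hc, rfl⟩
    have hancMM' : T.anc M M' := hM'.2 M hMca
    refine ⟨m, hm, fun hmM => ?_⟩
    subst hmM
    exact hne' (T.anc_antisymm hancM'm hancMM')
  have hrel_trans : ∀ x y z, x ∈ S' → y ∈ S' → z ∈ S' → rel x y → rel y z → rel x z := by
    rintro x y z hx hy hz ⟨m1, hm1, hm1M⟩ ⟨m2, hm2, hm2M⟩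
    have h1y : T.anc m1 (vv y) := hm1.1 _ (Set.mem_insert_of_mem _ rfl)
    have h2y : T.anc m2 (vv y) := hm2.1 _ (Set.mem_insert _ _)
    obtain ⟨m, hm⟩ := T.exists_isMRCA {vv x, vv z} ⟨vv x, Set.mem_insert _ _⟩
    refine ⟨m, hm, fun hmM => ?_⟩
    rcases T.anc_total h1y h2y with h | h
    · have hca : ∀ v ∈ ({vv x, vv z} : Set T.V), T.anc m1 v := by
        intro v hv
        rcases Set.mem_insert_iff.mp hv with rfl | hv
        · exact hm1.1 _ (Set.mem_insert _ _)
        · rw [Set.mem_singleton_iff] at hv; subst hv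
          exact T.anc_trans h (hm2.1 _ (Set.mem_insert_of_mem _ rfl))
      have hup : T.anc m1 M := hmM ▸ hm.2 _ hca
      have hdown : T.anc M m1 := hm1.2 _ (fun v hv => by
        rcases Set.mem_insert_iff.mp hv with rfl | hv
        · exact hM.1 _ ⟨x, hx, rfl⟩
        · rw [Set.mem_singleton_iff] at hv; subst hv; exact hM.1 _ ⟨y, hy, rfl⟩)
      exact hm1M (T.anc_antisymm hup hdown)
    · have hca : ∀ v ∈ ({vv x, vv z} : Set T.V), T.anc m2 v := by
        intro v hv
        rcases Set.mem_insert_iff.mp hv with rfl | hv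
        · exact T.anc_trans h (hm1.1 _ (Set.mem_insert _ _))
        · rw [Set.mem_singleton_iff] at hv; subst hv
          exact hm2.1 _ (Set.mem_insert_of_mem _ rfl)
      have hup : T.anc m2 M := hmM ▸ hm.2 _ hca
      have hdown : T.anc M m2 := hm2.2 _ (fun v hv => by
        rcases Set.mem_insert_iff.mp hv with rfl | hv
        · exact hM.1 _ ⟨y, hy, rfl⟩
        · rw [Set.mem_singleton_iff] at hv; subst hv; exact hM.1 _ ⟨z, hz, rfl⟩)
      exact hm2M (T.anc_antisymm hup hdown)
  have key : ∀ x y (w : (tripGraph R S').Walk x y), x ∈ S' → y ∈ S' → rel x y := by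
    intro x y w
    induction w with
    | nil => intro hx _; exact hrel_refl _ hx
    | @cons a b c hadj q ih =>
      intro ha hc
      have hb : b ∈ S' := hadj.2.2.1
      exact hrel_trans a b c ha hb hc (hedge _ _ hadj) (ih hb hc)
  have hstep : ∀ (n : ℕ) (B : Set ℕ), B.Finite → B.ncard ≤ n → B ⊆ S' → B.Nonempty →
      ∃ m, T.isMRCA (vv '' B) m ∧ m ≠ M := by
    intro n
    induction n with
    | zero =>
      intro B hf hc hsub hne'
      have := Set.ncard_pos hf |>.mpr hne'
      omega
    | succ n ih =>
      intro B hf hc hsub hne'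
      obtain ⟨a, haB⟩ := hne'
      set B' := B \ {a} with hB'
      have hBeq : B = insert a B' := by
        rw [hB', Set.insert_diff_singleton, Set.insert_eq_of_mem haB]
      have hB'f : B'.Finite := hf.subset Set.diff_subset
      have hB'c : B'.ncard ≤ n := by
        have h1 := Set.ncard_diff_singleton_of_mem haB
        have h2 := Set.ncard_pos hf |>.mpr ⟨a, haB⟩
        rw [← hB'] at h1
        omega
      have haS' : a ∈ S' := hsub haB
      rcases Set.eq_empty_or_nonempty B' with hB'e | hB'ne
      · rw [hBeq, hB'e]
        refine ⟨vv a, ⟨?_, ?_⟩, hne_M a haS'⟩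
        · rintro v ⟨z, hz, rfl⟩
          rcases Set.mem_insert_iff.mp hz with rfl | hz
          · exact T.anc_refl _
          · exact absurd hz (Set.notMem_empty z)
        · intro w hw
          exact hw (vv a) ⟨a, Set.mem_insert _ _, rfl⟩
      · obtain ⟨mB, hmB, hmBM⟩ := ih B' hB'f hB'c (fun z hz => hsub hz.1) hB'ne
        obtain ⟨x₀, hx₀B⟩ := hB'ne
        have hx₀ : x₀ ∈ S' := hsub hx₀B.1
        obtain ⟨w⟩ := hconn x₀ hx₀ a haS'
        obtain ⟨mp, hmp, hmpM⟩ := key x₀ a w hx₀ haS'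
        obtain ⟨m, hm⟩ := T.exists_isMRCA (vv '' B) ⟨vv a, ⟨a, haB, rfl⟩⟩
        refine ⟨m, hm, fun hmM => ?_⟩
        have hanc_mp_x₀ : T.anc mp (vv x₀) := hmp.1 _ (Set.mem_insert _ _)
        have hanc_mB_x₀ : T.anc mB (vv x₀) := hmB.1 _ ⟨x₀, hx₀B, rfl⟩
        rcases T.anc_total hanc_mp_x₀ hanc_mB_x₀ with h | h
        · have hca : ∀ v ∈ vv '' B, T.anc mp v := by
            rintro v ⟨z, hz, rfl⟩
            rw [hBeq] at hz
            rcases Set.mem_insert_iff.mp hz with rfl | hzB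
            · exact hmp.1 _ (Set.mem_insert_of_mem _ rfl)
            · exact T.anc_trans h (hmB.1 _ ⟨z, hzB, rfl⟩)
          have hup : T.anc mp M := hmM ▸ hm.2 _ hca
          have hdown : T.anc M mp := hmp.2 _ (fun v hv => by
            rcases Set.mem_insert_iff.mp hv with rfl | hv
            · exact hM.1 _ ⟨x₀, hx₀, rfl⟩
            · rw [Set.mem_singleton_iff] at hv; subst hv; exact hM.1 _ ⟨a, haS', rfl⟩)
          exact hmpM (T.anc_antisymm hup hdown)
        · have hca : ∀ v ∈ vv '' B, T.anc mB v := by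
            rintro v ⟨z, hz, rfl⟩
            rw [hBeq] at hz
            rcases Set.mem_insert_iff.mp hz with rfl | hzB
            · exact T.anc_trans h (hmp.1 _ (Set.mem_insert_of_mem _ rfl))
            · exact hmB.1 _ ⟨z, hzB, rfl⟩
          have hup : T.anc mB M := hmM ▸ hm.2 _ hca
          have hdown : T.anc M mB := hmB.2 _ (by
            rintro v ⟨z, hzB, rfl⟩
            exact hM.1 _ ⟨z, hsub hzB.1, rfl⟩)
          exact hmBM (T.anc_antisymm hup hdown)
  obtain ⟨mS, hmS, hmSM⟩ := hstep S'.ncard S' hfin le_rfl (subset_refl _) hne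
  exact hmSM (T.isMRCA_unique hmS hM)

end RTree
open SimpleGraph in
lemma sym2_mem_support_of_mem_edges {V : Type} {G : SimpleGraph V} {v w : V}
    (p : G.Walk v w) {e : Sym2 V} (he : e ∈ p.edges) {y : V} (hy : y ∈ e) :
    y ∈ p.support := by
  induction e with
  | _ a b =>
    rcases Sym2.mem_iff.mp hy with rfl | rfl
    · exact p.fst_mem_support_of_mem_edges he
    · exact p.snd_mem_support_of_mem_edges he

open SimpleGraph in
lemma abs_extract : ∀ (n : ℕ) (S' : Set ℕ) (E : Set (Sym2 ℕ)),
    S'.Finite → S'.ncard ≤ n → S'.Nonempty →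
    (∀ e ∈ E, ∃ x y, x ∈ S' ∧ y ∈ S' ∧ x ≠ y ∧ e = s(x, y)) →
    (∀ x ∈ S', ∀ y ∈ S', (fromEdgeSet E).Reachable x y) →
    ∃ E', E' ⊆ E ∧ E'.Finite ∧ E'.ncard + 1 ≤ S'.ncard ∧
      (∀ x ∈ S', ∀ y ∈ S', (fromEdgeSet E').Reachable x y) ∧
      (2 ≤ S'.ncard → ∀ x ∈ S', ∃ e ∈ E', x ∈ e) := by
  intro n
  induction n with
  | zero =>
    intro S' E hfin hc hne _ _
    have := Set.ncard_pos hfin |>.mpr hne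
    omega
  | succ n ih =>
    intro S' E hfin hc hne hE hconn
    classical
    rcases eq_or_lt_of_le (show 1 ≤ _ from Set.ncard_pos hfin |>.mpr hne) with h1 | h2
    · -- ncard = 1
      obtain ⟨x₀, hx₀⟩ := Set.ncard_eq_one.mp h1.symm
      refine ⟨∅, Set.empty_subset _, Set.finite_empty, by simp [← h1], ?_, by omega⟩
      intro x hx y hy
      rw [hx₀, Set.mem_singleton_iff] at hx hy
      subst hx; subst hy; exact Reachable.refl _
    · -- ncard ≥ 2
      obtain ⟨x₀, hx₀⟩ := hne
      obtain ⟨y, hyS, hymax⟩ := Set.exists_max_image S' ((fromEdgeSet E).dist x₀) hfin ⟨x₀, hx₀⟩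
      have hyne : y ≠ x₀ := by
        obtain ⟨z, hz⟩ := Set.exists_ne_of_one_lt_ncard h2 x₀
        have hposz : 0 < (fromEdgeSet E).dist x₀ z :=
          (hconn x₀ hx₀ z hz.1).pos_dist_of_ne (fun h => hz.2 h.symm)
        have := hymax z hz.1
        intro h
        rw [h, SimpleGraph.dist_self] at this
        omega
      set S'' : Set ℕ := S' \ {y} with hS''
      set E'' : Set (Sym2 ℕ) := {e ∈ E | y ∉ e} with hE''def
      have hx₀'' : x₀ ∈ S'' := ⟨hx₀, fun h => hyne (Set.mem_singleton_iff.mp h).symm⟩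
      have havoid : ∀ z ∈ S', z ≠ y → (fromEdgeSet E'').Reachable x₀ z := by
        intro z hz hzy
        obtain ⟨p, hp⟩ := (hconn x₀ hx₀ z hz).exists_walk_length_eq_dist
        have hyp : y ∉ p.support := by
          intro hy
          have hle1 : (fromEdgeSet E).dist x₀ y ≤ (p.takeUntil y hy).length :=
            SimpleGraph.dist_le _
          have hlen : (p.takeUntil y hy).length + (p.dropUntil y hy).length = p.length := by
            rw [← SimpleGraph.Walk.length_append, SimpleGraph.Walk.take_spec]
          have hle2 := hymax z hz
          have h0 : (p.dropUntil y hy).length = 0 := by omega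
          exact hzy (RTree.walk_length_zero _ h0).symm
        have hedges : ∀ e ∈ p.edges, e ∈ (fromEdgeSet E'').edgeSet := by
          intro e he
          have heE : e ∈ (fromEdgeSet E).edgeSet := p.edges_subset_edgeSet he
          rw [SimpleGraph.edgeSet_fromEdgeSet] at heE ⊢
          exact ⟨⟨heE.1, fun hye => hyp (sym2_mem_support_of_mem_edges p he hye)⟩, heE.2⟩
        exact ⟨p.transfer _ hedges⟩
      have hE''sub : ∀ e ∈ E'', ∃ x y', x ∈ S'' ∧ y' ∈ S'' ∧ x ≠ y' ∧ e = s(x, y') := by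
        rintro e ⟨heE, hye⟩
        obtain ⟨a, b, ha, hb, hab, rfl⟩ := hE e heE
        refine ⟨a, b, ⟨ha, ?_⟩, ⟨hb, ?_⟩, hab, rfl⟩
        · intro h; exact hye (by rw [Set.mem_singleton_iff.mp h]; exact Sym2.mem_mk_left _ _)
        · intro h; exact hye (by rw [Set.mem_singleton_iff.mp h]; exact Sym2.mem_mk_right _ _)
      have hconn'' : ∀ x ∈ S'', ∀ z ∈ S'', (fromEdgeSet E'').Reachable x z := by
        intro x hx z hz
        exact (havoid x hx.1 (fun h => hx.2 (Set.mem_singleton_iff.mpr h))).symm.trans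
          (havoid z hz.1 (fun h => hz.2 (Set.mem_singleton_iff.mpr h)))
      have hS''fin : S''.Finite := hfin.subset Set.diff_subset
      have hS''card : S''.ncard = S'.ncard - 1 := by
        rw [hS'']; exact Set.ncard_diff_singleton_of_mem hyS
      obtain ⟨E₂, hE₂sub, hE₂fin, hE₂card, hE₂conn, hE₂cov⟩ :=
        ih S'' E'' hS''fin (by omega) ⟨x₀, hx₀''⟩ hE''sub hconn''
      -- edge at y
      obtain ⟨w⟩ := hconn y hyS x₀ hx₀
      obtain ⟨u, hadj, -⟩ : ∃ u, (fromEdgeSet E).Adj y u ∧ True := by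
        cases w with
        | nil => exact absurd rfl hyne
        | cons h q => exact ⟨_, h, trivial⟩
      rw [SimpleGraph.fromEdgeSet_adj] at hadj
      obtain ⟨heyE, hyu⟩ := hadj
      have huS : u ∈ S' := by
        obtain ⟨a, b, ha, hb, -, heq⟩ := hE _ heyE
        rcases Sym2.eq_iff.mp heq.symm with ⟨-, rfl⟩ | ⟨rfl, -⟩
        · exact hb
        · exact ha
      have huS'' : u ∈ S'' := ⟨huS, fun h => hyu (Set.mem_singleton_iff.mp h).symm⟩
      set E' : Set (Sym2 ℕ) := insert s(y, u) E₂ with hE'def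
      have hmono : fromEdgeSet E₂ ≤ fromEdgeSet E' :=
        SimpleGraph.fromEdgeSet_mono (Set.subset_insert _ _)
      have hreach : ∀ z ∈ S', (fromEdgeSet E').Reachable x₀ z := by
        intro z hz
        by_cases hzy : z = y
        · subst hzy
          have h1 : (fromEdgeSet E').Reachable x₀ u :=
            (hE₂conn x₀ hx₀'' u huS'').mono hmono
          have h2 : (fromEdgeSet E').Adj u z :=
            (SimpleGraph.fromEdgeSet_adj _).mpr ⟨by rw [Sym2.eq_swap]; exact Set.mem_insert _ _,
              fun h => hyu h.symm⟩
          exact h1.trans h2.reachable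
        · exact ((hE₂conn x₀ hx₀'' z ⟨hz, fun h => hzy (Set.mem_singleton_iff.mp h)⟩).mono hmono)
      refine ⟨E', ?_, hE₂fin.insert _, ?_, ?_, ?_⟩
      · rw [hE'def]
        exact Set.insert_subset heyE (hE₂sub.trans (fun e he => he.1))
      · have hile := Set.ncard_insert_le s(y, u) E₂
        rw [hE'def]
        omega
      · intro x hx z hz
        exact (hreach x hx).symm.trans (hreach z hz)
      · intro _ x hx
        by_cases hxy : x = y
        · exact ⟨s(y, u), Set.mem_insert _ _, by rw [hxy]; exact Sym2.mem_mk_left _ _⟩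
        · have hx'' : x ∈ S'' := ⟨hx, fun h => hxy (Set.mem_singleton_iff.mp h)⟩
          by_cases h2'' : 2 ≤ S''.ncard
          · obtain ⟨e, he, hxe⟩ := hE₂cov h2'' x hx''
            exact ⟨e, Set.mem_insert_of_mem _ he, hxe⟩
          · have h1'' : S''.ncard = 1 := by
              have := Set.ncard_pos hS''fin |>.mpr ⟨x₀, hx₀''⟩
              omega
            obtain ⟨z₀, hz₀⟩ := Set.ncard_eq_one.mp h1''
            have hxz : x = z₀ := Set.mem_singleton_iff.mp (hz₀ ▸ hx'')
            have huz : u = z₀ := Set.mem_singleton_iff.mp (hz₀ ▸ huS'')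
            exact ⟨s(y, u), Set.mem_insert _ _, by rw [hxz, ← huz]; exact Sym2.mem_mk_right _ _⟩
open SimpleGraph in
lemma conn_extract {R : Set (Sym2 ℕ × ℕ)} {S' : Set ℕ} (hfin : S'.Finite)
    (h3 : 3 ≤ S'.ncard)
    (hconn : ∀ x ∈ S', ∀ y ∈ S', (tripGraph R S').Reachable x y) :
    ∃ R₀, R₀ ⊆ R ∧ R₀.Finite ∧ R₀.ncard + 1 ≤ S'.ncard ∧
      (∀ x ∈ S', ∀ y ∈ S', (tripGraph R₀ S').Reachable x y) ∧ S' ⊆ tLabelSet R₀ := by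
  classical
  have hne : S'.Nonempty := by
    rcases Set.eq_empty_or_nonempty S' with rfl | h
    · simp at h3
    · exact h
  set E : Set (Sym2 ℕ) := (tripGraph R S').edgeSet with hEdef
  have hE : ∀ e ∈ E, ∃ x y, x ∈ S' ∧ y ∈ S' ∧ x ≠ y ∧ e = s(x, y) := by
    intro e he
    induction e with
    | _ a b =>
      obtain ⟨hab, ha, hb, -⟩ := (SimpleGraph.mem_edgeSet _).mp he
      exact ⟨a, b, ha, hb, hab, rfl⟩
  have hconnE : ∀ x ∈ S', ∀ y ∈ S', (fromEdgeSet E).Reachable x y := by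
    rw [hEdef, SimpleGraph.fromEdgeSet_edgeSet]
    exact hconn
  obtain ⟨E', hE'sub, hE'fin, hE'card, hE'conn, hE'cov⟩ :=
    abs_extract S'.ncard S' E hfin le_rfl hne hE hconnE
  have hpick : ∀ e ∈ E', ∃ t, t ∈ R ∧ t.1 = e ∧ t.2 ∈ S' := by
    intro e he
    have heE : e ∈ E := hE'sub he
    induction e with
    | _ a b =>
      obtain ⟨-, -, -, c, hc, hRc⟩ := (SimpleGraph.mem_edgeSet _).mp heE
      exact ⟨(s(a, b), c), hRc, rfl, hc⟩
  set f : Sym2 ℕ → Sym2 ℕ × ℕ :=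
    fun e => if h : e ∈ E' then (hpick e h).choose else (s(0,0), 0) with hfdef
  have hfspec : ∀ e (h : e ∈ E'), f e ∈ R ∧ (f e).1 = e ∧ (f e).2 ∈ S' := by
    intro e h
    simp only [hfdef, dif_pos h]
    exact (hpick e h).choose_spec
  set R₀ : Set (Sym2 ℕ × ℕ) := f '' E' with hR₀def
  have hR₀R : R₀ ⊆ R := by rintro t ⟨e, he, rfl⟩; exact (hfspec e he).1
  have hR₀fin : R₀.Finite := hE'fin.image f
  refine ⟨R₀, hR₀R, hR₀fin, ?_, ?_, ?_⟩
  · have := Set.ncard_image_le (f := f) hE'fin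
    rw [← hR₀def] at this
    omega
  · have hle : fromEdgeSet E' ≤ tripGraph R₀ S' := by
      intro a b hadj
      rw [SimpleGraph.fromEdgeSet_adj] at hadj
      obtain ⟨he, hab⟩ := hadj
      obtain ⟨x1, y1, hx1, hy1, -, heq⟩ := hE _ (hE'sub he)
      have habS : a ∈ S' ∧ b ∈ S' := by
        rcases Sym2.eq_iff.mp heq.symm with ⟨rfl, rfl⟩ | ⟨rfl, rfl⟩
        · exact ⟨hx1, hy1⟩
        · exact ⟨hy1, hx1⟩
      obtain ⟨htR, ht1, ht2⟩ := hfspec _ he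
      refine ⟨hab, habS.1, habS.2, (f s(a, b)).2, ht2, ?_⟩
      have : f s(a, b) = (s(a, b), (f s(a, b)).2) := Prod.ext_iff.mpr ⟨ht1, rfl⟩
      rw [← this]
      exact ⟨s(a, b), he, rfl⟩
    intro x hx y hy
    exact (hE'conn x hx y hy).mono hle
  · intro x hx
    obtain ⟨e, he, hxe⟩ := hE'cov (by omega) x hx
    refine ⟨f e, ⟨e, he, rfl⟩, Or.inl ?_⟩
    rw [(hfspec e he).2.1]
    exact hxe
/-! ### The laminar family of recursive components (Aho's BUILD) -/

def cls (R : Set (Sym2 ℕ × ℕ)) (S : Set ℕ) (x : ℕ) : Set ℕ :=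
  {y ∈ S | (tripGraph R S).Reachable x y}

def fam : ℕ → Set (Sym2 ℕ × ℕ) → Set ℕ → Set (Set ℕ)
  | 0, _, S => {S}
  | (k+1), R, S => insert S (⋃ x ∈ S, fam k R (cls R S x))

def Fm (R : Set (Sym2 ℕ × ℕ)) (S : Set ℕ) : Set (Set ℕ) := fam S.ncard R S

section BuildFam

variable {R : Set (Sym2 ℕ × ℕ)} {S₀ : Set ℕ}

lemma cls_subset {S : Set ℕ} {x : ℕ} : cls R S x ⊆ S := fun _ hy => hy.1

lemma mem_cls_self {S : Set ℕ} {x : ℕ} (hx : x ∈ S) : x ∈ cls R S x :=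
  ⟨hx, SimpleGraph.Reachable.refl x⟩

lemma cls_eq_of_mem {S : Set ℕ} {x y : ℕ} (h : y ∈ cls R S x) :
    cls R S y = cls R S x := by
  ext z
  exact ⟨fun hz => ⟨hz.1, h.2.trans hz.2⟩, fun hz => ⟨hz.1, h.2.symm.trans hz.2⟩⟩

lemma cls_eq_or_disjoint {S : Set ℕ} {x y : ℕ} :
    cls R S x = cls R S y ∨ cls R S x ∩ cls R S y = ∅ := by
  by_cases h : cls R S x ∩ cls R S y = ∅
  · exact Or.inr h
  · obtain ⟨z, hzx, hzy⟩ := Set.nonempty_iff_ne_empty.mpr h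
    exact Or.inl ((cls_eq_of_mem hzx).symm.trans (cls_eq_of_mem hzy))

variable (hR : ∀ t ∈ R, IsTriplet t) (hfin : S₀.Finite)
  (hdis : ∀ S' ⊆ S₀, 3 ≤ S'.ncard → ∃ a ∈ S', ∃ b ∈ S', ¬ (tripGraph R S').Reachable a b)

include hR in
lemma no_adj_two {S : Set ℕ} (hSfin : S.Finite) (h2 : S.ncard ≤ 2) :
    ∀ a b, ¬ (tripGraph R S).Adj a b := by
  rintro a b ⟨hab, ha, hb, c, hc, hcR⟩
  obtain ⟨a', b', c', h1, h2', h3, heq⟩ := hR _ hcR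
  obtain ⟨heq1, heq2⟩ := Prod.mk.injEq _ _ _ _ ▸ heq
  have hSab : S = {a, b} := by
    have hsub : ({a, b} : Set ℕ) ⊆ S := by
      intro z hz; rcases hz with rfl | hz
      · exact ha
      · rw [Set.mem_singleton_iff] at hz; subst hz; exact hb
    have : S.ncard ≤ ({a, b} : Set ℕ).ncard := by
      rw [Set.ncard_pair hab]; exact h2
    exact (Set.eq_of_subset_of_ncard_le hsub this hSfin).symm
  have hcab : c ∈ ({a, b} : Set ℕ) := hSab ▸ hc
  rw [← heq2] at h2' h3
  have hca : c ≠ a ∧ c ≠ b := by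
    rcases Sym2.eq_iff.mp heq1 with ⟨rfl, rfl⟩ | ⟨rfl, rfl⟩
    · exact ⟨fun h => h2' h.symm, fun h => h3 h.symm⟩
    · exact ⟨fun h => h3 h.symm, fun h => h2' h.symm⟩
  rcases Set.mem_insert_iff.mp hcab with h | h
  · exact hca.1 h
  · exact hca.2 (Set.mem_singleton_iff.mp h)

lemma reach_eq_of_no_adj {G : SimpleGraph ℕ} (hno : ∀ a b, ¬ G.Adj a b) {a b : ℕ}
    (h : G.Reachable a b) : a = b := by
  obtain ⟨w⟩ := h
  cases w with
  | nil => rfl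
  | cons h q => exact absurd h (hno _ _)

include hR hfin hdis in
lemma cls_ne {S : Set ℕ} (hS : S ⊆ S₀) (h2 : 2 ≤ S.ncard) {x : ℕ} (hx : x ∈ S) :
    cls R S x ≠ S := by
  intro heq
  by_cases h3 : 3 ≤ S.ncard
  · obtain ⟨a, ha, b, hb, hnr⟩ := hdis S hS h3
    have hax : a ∈ cls R S x := by rw [heq]; exact ha
    have hbx : b ∈ cls R S x := by rw [heq]; exact hb
    exact hnr (hax.2.symm.trans hbx.2)
  · have hSfin : S.Finite := hfin.subset hS
    obtain ⟨a, hab⟩ := Set.exists_ne_of_one_lt_ncard (by omega : 1 < S.ncard) x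
    have hax : a ∈ cls R S x := by rw [heq]; exact hab.1
    exact hab.2 (reach_eq_of_no_adj (no_adj_two hR hSfin (by omega)) hax.2.symm)

include hR hfin hdis in
lemma cls_card_lt {S : Set ℕ} (hS : S ⊆ S₀) (h2 : 2 ≤ S.ncard) {x : ℕ} (hx : x ∈ S) :
    (cls R S x).ncard < S.ncard :=
  Set.ncard_lt_ncard (HasSubset.Subset.ssubset_of_ne cls_subset
    (cls_ne hR hfin hdis hS h2 hx)) (hfin.subset hS)

lemma fam_self {k : ℕ} {S : Set ℕ} : S ∈ fam k R S := by
  cases k with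
  | zero => exact rfl
  | succ k => exact Set.mem_insert _ _

lemma fam_subset {k : ℕ} : ∀ {S : Set ℕ}, S.Nonempty → ∀ {B}, B ∈ fam k R S →
    B ⊆ S ∧ B.Nonempty := by
  induction k with
  | zero =>
    intro S hS B hB
    rw [Set.mem_singleton_iff.mp hB]
    exact ⟨subset_rfl, hS⟩
  | succ k ih =>
    intro S hS B hB
    rcases Set.mem_insert_iff.mp hB with rfl | hB
    · exact ⟨subset_rfl, hS⟩
    · obtain ⟨x, hx, hBx⟩ := Set.mem_iUnion₂.mp hB
      obtain ⟨h1, h2⟩ := ih ⟨x, mem_cls_self hx⟩ hBx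
      exact ⟨h1.trans cls_subset, h2⟩

lemma fam_singleton_set {k : ℕ} {x : ℕ} : fam k R {x} = {{x}} := by
  induction k with
  | zero => rfl
  | succ k ih =>
    show insert {x} (⋃ y ∈ ({x} : Set ℕ), fam k R (cls R {x} y)) = {{x}}
    have hcls : cls R {x} x = {x} :=
      Set.Subset.antisymm cls_subset (Set.singleton_subset_iff.mpr (mem_cls_self rfl))
    rw [Set.biUnion_singleton, hcls, ih]
    simp

include hR hfin hdis in
lemma fam_stab {k : ℕ} : ∀ {S : Set ℕ}, S ⊆ S₀ → S.Nonempty → S.ncard ≤ k →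
    fam (k+1) R S = fam k R S := by
  induction k with
  | zero =>
    intro S hS hne hc
    have := Set.ncard_pos (hfin.subset hS) |>.mpr hne
    omega
  | succ k ih =>
    intro S hS hne hc
    rcases eq_or_lt_of_le (show 1 ≤ _ from Set.ncard_pos (hfin.subset hS) |>.mpr hne) with h1 | h2
    · obtain ⟨x, rfl⟩ := Set.ncard_eq_one.mp h1.symm
      rw [fam_singleton_set, fam_singleton_set]
    · show insert S (⋃ x ∈ S, fam (k+1) R (cls R S x))
        = insert S (⋃ x ∈ S, fam k R (cls R S x))
      congr 1
      apply Set.iUnion₂_congr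
      intro x hx
      exact ih (cls_subset.trans hS) ⟨x, mem_cls_self hx⟩
        (by have := cls_card_lt hR hfin hdis hS h2 hx; omega)

include hR hfin hdis in
lemma fam_stab_ge {S : Set ℕ} (hS : S ⊆ S₀) (hne : S.Nonempty) :
    ∀ j, S.ncard ≤ j → fam j R S = Fm R S := by
  intro j
  induction j with
  | zero =>
    intro hj
    have := Set.ncard_pos (hfin.subset hS) |>.mpr hne
    omega
  | succ j ih =>
    intro hj
    rcases eq_or_lt_of_le hj with h1 | h2
    · rw [Fm, h1]
    · rw [fam_stab hR hfin hdis hS hne (by omega)]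
      exact ih (by omega)

include hR hfin hdis in
lemma fm_unfold {S : Set ℕ} (hS : S ⊆ S₀) (hne : S.Nonempty) :
    Fm R S = insert S (⋃ x ∈ S, Fm R (cls R S x)) := by
  rcases eq_or_lt_of_le (show 1 ≤ _ from Set.ncard_pos (hfin.subset hS) |>.mpr hne) with h1 | h2
  · obtain ⟨x, rfl⟩ := Set.ncard_eq_one.mp h1.symm
    have hcls : cls R {x} x = {x} :=
      Set.Subset.antisymm cls_subset (Set.singleton_subset_iff.mpr (mem_cls_self rfl))
    rw [Fm, fam_singleton_set, Set.biUnion_singleton, hcls]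
    rw [show Fm R {x} = {{x}} from by rw [Fm, fam_singleton_set]]
    simp
  · have h1 : S.ncard = (S.ncard - 1) + 1 := by omega
    rw [Fm, h1]
    show insert S (⋃ x ∈ S, fam (S.ncard - 1) R (cls R S x)) = _
    congr 1
    apply Set.iUnion₂_congr
    intro x hx
    exact fam_stab_ge hR hfin hdis (cls_subset.trans hS) ⟨x, mem_cls_self hx⟩ _
      (by have := cls_card_lt hR hfin hdis hS h2 hx; omega)

lemma fm_self {S : Set ℕ} : S ∈ Fm R S := fam_self

lemma fm_subset {S : Set ℕ} (hne : S.Nonempty) {B : Set ℕ} (hB : B ∈ Fm R S) :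
    B ⊆ S ∧ B.Nonempty := fam_subset hne hB

end BuildFam
section BuildFam2

variable {R : Set (Sym2 ℕ × ℕ)} {S₀ : Set ℕ}
variable (hR : ∀ t ∈ R, IsTriplet t) (hfin : S₀.Finite)
  (hdis : ∀ S' ⊆ S₀, 3 ≤ S'.ncard → ∃ a ∈ S', ∃ b ∈ S', ¬ (tripGraph R S').Reachable a b)

include hR hfin hdis

lemma fm_sing {S : Set ℕ} (h1 : S.ncard = 1) : Fm R S = {S} := by
  obtain ⟨x, rfl⟩ := Set.ncard_eq_one.mp h1
  rw [Fm, fam_singleton_set]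

lemma fm_laminar {S : Set ℕ} (hS : S ⊆ S₀) (hne : S.Nonempty) :
    ∀ {A B : Set ℕ}, A ∈ Fm R S → B ∈ Fm R S → A ⊆ B ∨ B ⊆ A ∨ A ∩ B = ∅ := by
  have main : ∀ n (S : Set ℕ), S.ncard ≤ n → S ⊆ S₀ → S.Nonempty →
      ∀ A B : Set ℕ, A ∈ Fm R S → B ∈ Fm R S → A ⊆ B ∨ B ⊆ A ∨ A ∩ B = ∅ := by
    intro n
    induction n with
    | zero =>
      intro S hc hS hne
      have := Set.ncard_pos (hfin.subset hS) |>.mpr hne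
      omega
    | succ n ih =>
      intro S hc hS hne A B hA hB
      rcases eq_or_lt_of_le (show 1 ≤ _ from Set.ncard_pos (hfin.subset hS) |>.mpr hne) with h1 | h2
      · rw [fm_sing hR hfin hdis h1.symm] at hA hB
        rw [Set.mem_singleton_iff.mp hA, Set.mem_singleton_iff.mp hB]
        exact Or.inl subset_rfl
      · have hAS := (fm_subset hne hA).1
        have hBS := (fm_subset hne hB).1
        rw [fm_unfold hR hfin hdis hS hne] at hA hB
        rcases Set.mem_insert_iff.mp hA with rfl | hA
        · exact Or.inr (Or.inl hBS)
        rcases Set.mem_insert_iff.mp hB with rfl | hB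
        · exact Or.inl hAS
        obtain ⟨x, hx, hAx⟩ := Set.mem_iUnion₂.mp hA
        obtain ⟨y, hy, hBy⟩ := Set.mem_iUnion₂.mp hB
        rcases cls_eq_or_disjoint (R := R) (S := S) (x := x) (y := y) with hcxy | hcxy
        · rw [hcxy] at hAx
          exact ih (cls R S y) (by
              have := cls_card_lt hR hfin hdis hS h2 hy; omega)
            (cls_subset.trans hS) ⟨y, mem_cls_self hy⟩ A B hAx hBy
        · refine Or.inr (Or.inr ?_)
          have hAc : A ⊆ cls R S x := (fm_subset ⟨x, mem_cls_self hx⟩ hAx).1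
          have hBc : B ⊆ cls R S y := (fm_subset ⟨y, mem_cls_self hy⟩ hBy).1
          rw [Set.eq_empty_iff_forall_notMem]
          rintro z ⟨hzA, hzB⟩
          rw [Set.eq_empty_iff_forall_notMem] at hcxy
          exact hcxy z ⟨hAc hzA, hBc hzB⟩
  exact fun {A B} hA hB => main S.ncard S le_rfl hS hne A B hA hB

lemma fm_subtree {S : Set ℕ} (hS : S ⊆ S₀) (hne : S.Nonempty) :
    ∀ {B : Set ℕ}, B ∈ Fm R S → Fm R B ⊆ Fm R S := by
  have main : ∀ n (S : Set ℕ), S.ncard ≤ n → S ⊆ S₀ → S.Nonempty →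
      ∀ B : Set ℕ, B ∈ Fm R S → Fm R B ⊆ Fm R S := by
    intro n
    induction n with
    | zero =>
      intro S hc hS hne
      have := Set.ncard_pos (hfin.subset hS) |>.mpr hne
      omega
    | succ n ih =>
      intro S hc hS hne B hB
      rcases eq_or_lt_of_le (show 1 ≤ _ from Set.ncard_pos (hfin.subset hS) |>.mpr hne) with h1 | h2
      · rw [fm_sing hR hfin hdis h1.symm] at hB
        rw [Set.mem_singleton_iff.mp hB]
      · rw [fm_unfold hR hfin hdis hS hne] at hB
        rcases Set.mem_insert_iff.mp hB with rfl | hB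
        · exact subset_rfl
        obtain ⟨x, hx, hBx⟩ := Set.mem_iUnion₂.mp hB
        have h1 : Fm R B ⊆ Fm R (cls R S x) :=
          ih (cls R S x) (by have := cls_card_lt hR hfin hdis hS h2 hx; omega)
            (cls_subset.trans hS) ⟨x, mem_cls_self hx⟩ B hBx
        have h2' : Fm R (cls R S x) ⊆ Fm R S := by
          rw [fm_unfold hR hfin hdis hS hne]
          exact fun C hC => Set.mem_insert_of_mem _ (Set.mem_iUnion₂.mpr ⟨x, hx, hC⟩)
        exact h1.trans h2'
  exact fun {B} hB => main S.ncard S le_rfl hS hne B hB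

lemma fm_localize {S : Set ℕ} (hS : S ⊆ S₀) (hne : S.Nonempty) :
    ∀ {A B : Set ℕ}, A ∈ Fm R S → B ∈ Fm R S → A ⊆ B → A ∈ Fm R B := by
  have main : ∀ n (S : Set ℕ), S.ncard ≤ n → S ⊆ S₀ → S.Nonempty →
      ∀ A B : Set ℕ, A ∈ Fm R S → B ∈ Fm R S → A ⊆ B → A ∈ Fm R B := by
    intro n
    induction n with
    | zero =>
      intro S hc hS hne
      have := Set.ncard_pos (hfin.subset hS) |>.mpr hne
      omega
    | succ n ih =>
      intro S hc hS hne A B hA hB hAB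
      rcases eq_or_lt_of_le (show 1 ≤ _ from Set.ncard_pos (hfin.subset hS) |>.mpr hne) with h1 | h2
      · rw [fm_sing hR hfin hdis h1.symm] at hA hB
        rw [Set.mem_singleton_iff.mp hA, Set.mem_singleton_iff.mp hB] at *
        exact fm_self
      · rw [fm_unfold hR hfin hdis hS hne] at hB
        rcases Set.mem_insert_iff.mp hB with rfl | hB
        · exact hA
        obtain ⟨y, hy, hBy⟩ := Set.mem_iUnion₂.mp hB
        have hBsub : B ⊆ cls R S y := (fm_subset ⟨y, mem_cls_self hy⟩ hBy).1
        rw [fm_unfold hR hfin hdis hS hne] at hA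
        rcases Set.mem_insert_iff.mp hA with rfl | hA
        · exact absurd (Set.Subset.antisymm cls_subset (hAB.trans hBsub))
            (cls_ne hR hfin hdis hS h2 hy)
        obtain ⟨x, hx, hAx⟩ := Set.mem_iUnion₂.mp hA
        have hAsub : A ⊆ cls R S x := (fm_subset ⟨x, mem_cls_self hx⟩ hAx).1
        have hAne : A.Nonempty := (fm_subset ⟨x, mem_cls_self hx⟩ hAx).2
        have hcxy : cls R S x = cls R S y := by
          rcases cls_eq_or_disjoint (R := R) (S := S) (x := x) (y := y) with h | h
          · exact h
          · obtain ⟨z, hz⟩ := hAne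
            rw [Set.eq_empty_iff_forall_notMem] at h
            exact absurd ⟨hAsub hz, hBsub (hAB hz)⟩ (h z)
        rw [hcxy] at hAx
        exact ih (cls R S y) (by have := cls_card_lt hR hfin hdis hS h2 hy; omega)
          (cls_subset.trans hS) ⟨y, mem_cls_self hy⟩ A B hAx hBy hAB
  exact fun {A B} hA hB hAB => main S.ncard S le_rfl hS hne A B hA hB hAB

lemma fm_children {B : Set ℕ} (hB : B ⊆ S₀) (hne : B.Nonempty) {x : ℕ} (hx : x ∈ B) :
    cls R B x ∈ Fm R B := by
  rw [fm_unfold hR hfin hdis hB hne]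
  exact Set.mem_insert_of_mem _ (Set.mem_iUnion₂.mpr ⟨x, hx, fam_self⟩)

lemma fm_step {B : Set ℕ} (hB : B ⊆ S₀) (hne : B.Nonempty) {A : Set ℕ}
    (hA : A ∈ Fm R B) (hAB : A ≠ B) : ∃ x ∈ B, A ∈ Fm R (cls R B x) := by
  rw [fm_unfold hR hfin hdis hB hne] at hA
  rcases Set.mem_insert_iff.mp hA with rfl | hA
  · exact absurd rfl hAB
  · obtain ⟨x, hx, h⟩ := Set.mem_iUnion₂.mp hA
    exact ⟨x, hx, h⟩

end BuildFam2
/-! ### The tree built from the laminar family -/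

def isChild (R : Set (Sym2 ℕ × ℕ)) (A B : Set ℕ) : Prop :=
  2 ≤ B.ncard ∧ A ≠ B ∧ ∃ x ∈ B, A = cls R B x

def bG (R : Set (Sym2 ℕ × ℕ)) (S₀ : Set ℕ) : SimpleGraph ↥(Fm R S₀) where
  Adj u v := isChild R u.1 v.1 ∨ isChild R v.1 u.1
  symm := ⟨fun u v (h : isChild R u.1 v.1 ∨ isChild R v.1 u.1) => h.symm⟩
  loopless := ⟨fun u (h : isChild R u.1 u.1 ∨ isChild R u.1 u.1) => by
    rcases h with ⟨-, hne, -⟩ | ⟨-, hne, -⟩ <;> exact hne rfl⟩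

lemma child_ssub {R : Set (Sym2 ℕ × ℕ)} {A B : Set ℕ} (h : isChild R A B) : A ⊂ B := by
  obtain ⟨-, hne, x, hx, rfl⟩ := h
  exact HasSubset.Subset.ssubset_of_ne cls_subset hne

lemma two_le_ncard_of_mem {α : Type*} {s : Set α} {a b : α} (ha : a ∈ s) (hb : b ∈ s)
    (hab : a ≠ b) (hfin : s.Finite) : 2 ≤ s.ncard := by
  calc 2 = ({a, b} : Set α).ncard := (Set.ncard_pair hab).symm
    _ ≤ s.ncard := Set.ncard_le_ncard (by
        intro z hz
        rcases Set.mem_insert_iff.mp hz with rfl | hz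
        · exact ha
        · rw [Set.mem_singleton_iff] at hz; subst hz; exact hb) hfin

lemma three_le_ncard_of_mem {α : Type*} {s : Set α} {a b c : α} (ha : a ∈ s) (hb : b ∈ s)
    (hc : c ∈ s) (hab : a ≠ b) (hac : a ≠ c) (hbc : b ≠ c) (hfin : s.Finite) :
    3 ≤ s.ncard := by
  have h1 : ({a, b, c} : Set α).ncard = 3 := by
    rw [Set.ncard_insert_of_notMem (by
      intro h
      rcases Set.mem_insert_iff.mp h with h | h
      · exact hab h
      · rw [Set.mem_singleton_iff] at h; exact hac h) (Set.toFinite _), Set.ncard_pair hbc]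
  calc 3 = ({a, b, c} : Set α).ncard := h1.symm
    _ ≤ s.ncard := Set.ncard_le_ncard (by
        intro z hz
        rcases Set.mem_insert_iff.mp hz with rfl | hz
        · exact ha
        rcases Set.mem_insert_iff.mp hz with rfl | hz
        · exact hb
        · rw [Set.mem_singleton_iff] at hz; subst hz; exact hc) hfin

section BuildTree

variable {R : Set (Sym2 ℕ × ℕ)} {S₀ : Set ℕ}
variable (hR : ∀ t ∈ R, IsTriplet t) (hfin : S₀.Finite)
  (hdis : ∀ S' ⊆ S₀, 3 ≤ S'.ncard → ∃ a ∈ S', ∃ b ∈ S', ¬ (tripGraph R S').Reachable a b)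
  (h3 : 3 ≤ S₀.ncard)

include hR hfin hdis h3

lemma S₀_nonempty : S₀.Nonempty := by
  rcases Set.eq_empty_or_nonempty S₀ with rfl | h
  · simp at h3
  · exact h

omit hR hdis h3 in
lemma fm_finite (hne : S₀.Nonempty) : (Fm R S₀).Finite :=
  hfin.finite_subsets.subset (fun B hB => (fm_subset hne hB).1)

lemma fm_singleton_mem : ∀ {S : Set ℕ}, S ⊆ S₀ → ∀ x ∈ S, {x} ∈ Fm R S := by
  have main : ∀ n (S : Set ℕ), S.ncard ≤ n → S ⊆ S₀ → ∀ x ∈ S, {x} ∈ Fm R S := by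
    intro n
    induction n with
    | zero =>
      intro S hc hS x hx
      have := Set.ncard_pos (hfin.subset hS) |>.mpr ⟨x, hx⟩
      omega
    | succ n ih =>
      intro S hc hS x hx
      rcases eq_or_lt_of_le (show 1 ≤ _ from Set.ncard_pos (hfin.subset hS) |>.mpr ⟨x, hx⟩) with h1 | h2
      · rw [fm_sing hR hfin hdis h1.symm]
        obtain ⟨y, rfl⟩ := Set.ncard_eq_one.mp h1.symm
        rw [Set.mem_singleton_iff.mp hx]
        rfl
      · rw [fm_unfold hR hfin hdis hS ⟨x, hx⟩]
        refine Set.mem_insert_of_mem _ (Set.mem_iUnion₂.mpr ⟨x, hx, ?_⟩)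
        exact ih (cls R S x) (by have := cls_card_lt hR hfin hdis hS h2 hx; omega)
          (cls_subset.trans hS) x (mem_cls_self hx)
  exact fun {S} hS x hx => main S.ncard S le_rfl hS x hx

/-- existence of the parent, with minimality -/
lemma parent_exists {B : Set ℕ} (hB : B ∈ Fm R S₀) (hBne : B ≠ S₀) :
    ∃ P, P ∈ Fm R S₀ ∧ isChild R B P ∧ ∀ C ∈ Fm R S₀, B ⊂ C → P ⊆ C := by
  have hS₀ne : S₀.Nonempty := S₀_nonempty hR hfin hdis h3
  have hBsub : B ⊆ S₀ := (fm_subset hS₀ne hB).1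
  have hBnem : B.Nonempty := (fm_subset hS₀ne hB).2
  set 𝒞 : Set (Set ℕ) := {C | C ∈ Fm R S₀ ∧ B ⊂ C} with h𝒞
  have h𝒞ne : 𝒞.Nonempty := ⟨S₀, fm_self, HasSubset.Subset.ssubset_of_ne hBsub hBne⟩
  have h𝒞fin : 𝒞.Finite := (fm_finite hfin hS₀ne).subset (fun C hC => hC.1)
  obtain ⟨P, hP𝒞, hPmin⟩ := Set.exists_min_image 𝒞 Set.ncard h𝒞fin h𝒞ne
  obtain ⟨hPF, hBP⟩ := hP𝒞
  have hPsub : P ⊆ S₀ := (fm_subset hS₀ne hPF).1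
  have hmin : ∀ C ∈ Fm R S₀, B ⊂ C → P ⊆ C := by
    intro C hCF hBC
    rcases fm_laminar hR hfin hdis subset_rfl hS₀ne hPF hCF with h | h | h
    · exact h
    · have : P.ncard ≤ C.ncard := hPmin C ⟨hCF, hBC⟩
      rw [Set.eq_of_subset_of_ncard_le h this (hfin.subset hPsub)]
    · exfalso
      obtain ⟨z, hz⟩ := hBnem
      rw [Set.eq_empty_iff_forall_notMem] at h
      exact h z ⟨hBP.1 hz, hBC.1 hz⟩
  refine ⟨P, hPF, ⟨?_, hBP.ne, ?_⟩, hmin⟩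
  · obtain ⟨z, hz⟩ := hBnem
    obtain ⟨p, hpP, hpB⟩ := Set.exists_of_ssubset hBP
    exact two_le_ncard_of_mem (hBP.1 hz) hpP (fun h => hpB (h ▸ hz)) (hfin.subset hPsub)
  · have hBFP : B ∈ Fm R P := fm_localize hR hfin hdis subset_rfl hS₀ne hB hPF hBP.1
    obtain ⟨x, hx, hBx⟩ := fm_step hR hfin hdis hPsub ⟨_, hBP.1 hBnem.choose_spec⟩ hBFP hBP.ne
    have hclsF : cls R P x ∈ Fm R S₀ :=
      fm_subtree hR hfin hdis subset_rfl hS₀ne hPF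
        (fm_children hR hfin hdis hPsub ⟨_, hBP.1 hBnem.choose_spec⟩ hx)
    have hBsubcls : B ⊆ cls R P x :=
      (fm_subset ⟨x, mem_cls_self hx⟩ hBx).1
    refine ⟨x, hx, ?_⟩
    by_contra hne
    have hss : B ⊂ cls R P x := HasSubset.Subset.ssubset_of_ne hBsubcls hne
    have h2P : 2 ≤ P.ncard := by
      obtain ⟨z, hz⟩ := hBnem
      obtain ⟨p, hpP, hpB⟩ := Set.exists_of_ssubset hBP
      exact two_le_ncard_of_mem (hBP.1 hz) hpP (fun h => hpB (h ▸ hz)) (hfin.subset hPsub)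
    have hlt : (cls R P x).ncard < P.ncard := cls_card_lt hR hfin hdis hPsub h2P hx
    have := hPmin (cls R P x) ⟨hclsF, hss⟩
    omega

/-- uniqueness of the parent -/
lemma parent_unique {B P₁ P₂ : Set ℕ} (hBne : B.Nonempty)
    (hP₁ : P₁ ∈ Fm R S₀) (hP₂ : P₂ ∈ Fm R S₀)
    (h1 : isChild R B P₁) (h2 : isChild R B P₂) : P₁ = P₂ := by
  have hS₀ne : S₀.Nonempty := S₀_nonempty hR hfin hdis h3
  have key : ∀ Q₁ Q₂ : Set ℕ, Q₁ ∈ Fm R S₀ → Q₂ ∈ Fm R S₀ → isChild R B Q₁ →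
      isChild R B Q₂ → Q₁ ⊆ Q₂ → Q₁ = Q₂ := by
    intro Q₁ Q₂ hQ₁F hQ₂F hc1 hc2 hsub
    by_contra hne
    have hQ₁s : Q₁ ⊂ Q₂ := HasSubset.Subset.ssubset_of_ne hsub hne
    have hQ₂sub : Q₂ ⊆ S₀ := (fm_subset hS₀ne hQ₂F).1
    have hQ₂ne : Q₂.Nonempty := (fm_subset hS₀ne hQ₂F).2
    have hQ₁FQ₂ : Q₁ ∈ Fm R Q₂ :=
      fm_localize hR hfin hdis subset_rfl hS₀ne hQ₁F hQ₂F hsub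
    obtain ⟨z, hz, hQ₁z⟩ := fm_step hR hfin hdis hQ₂sub hQ₂ne hQ₁FQ₂ hQ₁s.ne
    have hQ₁subcls : Q₁ ⊆ cls R Q₂ z := (fm_subset ⟨z, mem_cls_self hz⟩ hQ₁z).1
    obtain ⟨-, hBneQ₂, x₂, hx₂, hBeq⟩ := hc2
    have hclseq : cls R Q₂ x₂ = cls R Q₂ z := by
      rcases cls_eq_or_disjoint (R := R) (S := Q₂) (x := x₂) (y := z) with h | h
      · exact h
      · exfalso
        obtain ⟨b, hb⟩ := hBne
        rw [Set.eq_empty_iff_forall_notMem] at h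
        exact h b ⟨hBeq ▸ hb, hQ₁subcls ((child_ssub hc1).1 hb)⟩
    have : Q₁ ⊆ B := hBeq ▸ hclseq ▸ hQ₁subcls
    exact absurd ((child_ssub hc1).2 this) (fun h => h)
  rcases fm_laminar hR hfin hdis subset_rfl hS₀ne hP₁ hP₂ with h | h | h
  · exact key _ _ hP₁ hP₂ h1 h2 h
  · exact (key _ _ hP₂ hP₁ h2 h1 h).symm
  · exfalso
    obtain ⟨b, hb⟩ := hBne
    rw [Set.eq_empty_iff_forall_notMem] at h
    exact h b ⟨(child_ssub h1).1 hb, (child_ssub h2).1 hb⟩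

end BuildTree
lemma walk_last_edge {V : Type} {G : SimpleGraph V} :
    ∀ {u v : V} (q : G.Walk u v), u ≠ v →
      ∃ w, G.Adj w v ∧ s(w, v) ∈ q.edges ∧ w ∈ q.support := by
  intro u v q
  induction q with
  | nil => intro h; exact absurd rfl h
  | @cons u a v h q ih =>
    intro huv
    by_cases hav : a = v
    · subst hav
      exact ⟨u, h, by simp, by simp⟩
    · obtain ⟨w, hadj, he, hs⟩ := ih hav
      exact ⟨w, hadj, by simp [he], by simp [hs]⟩

section BuildTree2

variable {R : Set (Sym2 ℕ × ℕ)} {S₀ : Set ℕ}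
variable (hR : ∀ t ∈ R, IsTriplet t) (hfin : S₀.Finite)
  (hdis : ∀ S' ⊆ S₀, 3 ≤ S'.ncard → ∃ a ∈ S', ∃ b ∈ S', ¬ (tripGraph R S').Reachable a b)
  (h3 : 3 ≤ S₀.ncard)

include hR hfin hdis h3

lemma chain_exists : ∀ (B : Set ℕ) (hB : B ∈ Fm R S₀),
    ∃ p : (bG R S₀).Walk ⟨S₀, fam_self⟩ ⟨B, hB⟩, p.IsPath ∧
      ∀ C : ↥(Fm R S₀), C ∈ p.support ↔ B ⊆ C.1 := by
  have hS₀ne : S₀.Nonempty := S₀_nonempty hR hfin hdis h3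
  have main : ∀ (k : ℕ) (B : Set ℕ) (hB : B ∈ Fm R S₀), S₀.ncard - B.ncard ≤ k →
      ∃ p : (bG R S₀).Walk ⟨S₀, fam_self⟩ ⟨B, hB⟩, p.IsPath ∧
      ∀ C : ↥(Fm R S₀), C ∈ p.support ↔ B ⊆ C.1 := by
    intro k
    induction k with
    | zero =>
      intro B hB hc
      have hBsub : B ⊆ S₀ := (fm_subset hS₀ne hB).1
      have hcard : B.ncard ≤ S₀.ncard := Set.ncard_le_ncard hBsub hfin
      have hBS₀ : B = S₀ := Set.eq_of_subset_of_ncard_le hBsub (by omega) hfin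
      subst hBS₀
      refine ⟨SimpleGraph.Walk.nil, SimpleGraph.Walk.IsPath.nil, ?_⟩
      intro C
      simp only [SimpleGraph.Walk.support_nil, List.mem_singleton]
      constructor
      · rintro rfl; exact subset_rfl
      · intro h
        exact Subtype.ext (Set.Subset.antisymm (fm_subset hS₀ne C.2).1 h)
    | succ k ih =>
      intro B hB hc
      by_cases hBS₀ : B = S₀
      · subst hBS₀
        refine ⟨SimpleGraph.Walk.nil, SimpleGraph.Walk.IsPath.nil, ?_⟩
        intro C
        simp only [SimpleGraph.Walk.support_nil, List.mem_singleton]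
        constructor
        · rintro rfl; exact subset_rfl
        · intro h
          exact Subtype.ext (Set.Subset.antisymm (fm_subset hS₀ne C.2).1 h)
      · obtain ⟨P, hPF, hchild, hmin⟩ := parent_exists hR hfin hdis h3 hB hBS₀
        have hBsub : B ⊆ S₀ := (fm_subset hS₀ne hB).1
        have hPsub : P ⊆ S₀ := (fm_subset hS₀ne hPF).1
        have hBP : B ⊂ P := child_ssub hchild
        have hlt1 : B.ncard < P.ncard := Set.ncard_lt_ncard hBP (hfin.subset hPsub)
        have hlt2 : P.ncard ≤ S₀.ncard := Set.ncard_le_ncard hPsub hfin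
        have hlt3 : B.ncard < S₀.ncard :=
          Set.ncard_lt_ncard (HasSubset.Subset.ssubset_of_ne hBsub hBS₀) hfin
        obtain ⟨p', hp'path, hp'supp⟩ := ih P hPF (by omega)
        have hAdj : (bG R S₀).Adj ⟨P, hPF⟩ ⟨B, hB⟩ := Or.inr hchild
        have hBnotin : (⟨B, hB⟩ : ↥(Fm R S₀)) ∉ p'.support := by
          intro h
          exact absurd ((hp'supp _).mp h) (fun hs => hBP.2 hs)
        refine ⟨p'.concat hAdj, ?_, ?_⟩
        · rw [SimpleGraph.Walk.isPath_def, SimpleGraph.Walk.support_concat,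
            List.nodup_append]
          refine ⟨hp'path.support_nodup, List.nodup_singleton _, ?_⟩
          intro a ha b hb
          rw [List.mem_singleton] at hb
          subst hb
          intro hab
          subst hab
          exact hBnotin ha
        · intro C
          rw [SimpleGraph.Walk.support_concat, List.mem_append,
            List.mem_singleton]
          constructor
          · rintro (h | rfl)
            · exact hBP.1.trans ((hp'supp _).mp h)
            · exact subset_rfl
          · intro h
            by_cases hCB : C.1 = B
            · exact Or.inr (Subtype.ext hCB)
            · exact Or.inl ((hp'supp _).mpr
                (hmin C.1 C.2 (HasSubset.Subset.ssubset_of_ne h (fun hh => hCB hh.symm))))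
  exact fun B hB => main (S₀.ncard - B.ncard) B hB le_rfl

lemma bG_connected : (bG R S₀).Connected := by
  have hreach : ∀ u : ↥(Fm R S₀), (bG R S₀).Reachable ⟨S₀, fam_self⟩ u := by
    rintro ⟨B, hB⟩
    obtain ⟨p, -, -⟩ := chain_exists hR hfin hdis h3 B hB
    exact ⟨p⟩
  haveI : Nonempty ↥(Fm R S₀) := ⟨⟨S₀, fam_self⟩⟩
  exact SimpleGraph.Connected.mk (fun u v => (hreach u).symm.trans (hreach v))

lemma adj_min_child {u v : ↥(Fm R S₀)} (h : (bG R S₀).Adj u v)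
    (hle : u.1.ncard ≤ v.1.ncard) : isChild R u.1 v.1 := by
  have hS₀ne : S₀.Nonempty := S₀_nonempty hR hfin hdis h3
  rcases h with h | h
  · exact h
  · exfalso
    have : v.1.ncard < u.1.ncard :=
      Set.ncard_lt_ncard (child_ssub h) (hfin.subset (fm_subset hS₀ne u.2).1)
    omega

lemma bG_acyclic : (bG R S₀).IsAcyclic := by
  classical
  have hS₀ne : S₀.Nonempty := S₀_nonempty hR hfin hdis h3
  intro v c hc
  obtain ⟨B, hBmem, hBmin⟩ := Finset.exists_min_image c.support.toFinset
    (fun C => C.1.ncard) ⟨v, List.mem_toFinset.mpr c.start_mem_support⟩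
  have hB : B ∈ c.support := List.mem_toFinset.mp hBmem
  have hmin : ∀ z ∈ c.support, B.1.ncard ≤ z.1.ncard := by
    intro z hz
    exact hBmin z (List.mem_toFinset.mpr hz)
  have hc' : (c.rotate B hB).IsCycle := hc.rotate hB
  have hsupp : ∀ z, z ∈ (c.rotate B hB).support → z ∈ c.support := by
    intro z hz
    have hperm := SimpleGraph.Walk.support_rotate c B hB
    rw [SimpleGraph.Walk.support_eq_cons (c.rotate B hB), List.mem_cons] at hz
    rcases hz with rfl | hz
    · exact hB
    · rw [SimpleGraph.Walk.support_eq_cons c, List.mem_cons]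
      exact Or.inr (hperm.mem_iff.mp hz)
  revert hc' hsupp
  generalize c.rotate B hB = c'
  intro hc' hsupp
  cases c' with
  | nil => exact SimpleGraph.Walk.IsCycle.not_of_nil hc'
  | @cons _ u _ hadj q =>
    have hcyc := hc'
    rw [SimpleGraph.Walk.cons_isCycle_iff] at hc'
    obtain ⟨hqpath, hedge⟩ := hc'
    have hBu : B ≠ u := (bG R S₀).ne_of_adj hadj
    obtain ⟨w, hwadj, hwe, hws⟩ := walk_last_edge q (fun h => hBu h.symm)
    -- u and w are both parents of B
    have huS : u ∈ c.support := by
      apply hsupp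
      rw [SimpleGraph.Walk.support_cons, List.mem_cons]
      exact Or.inr q.start_mem_support
    have hwS : w ∈ c.support := by
      apply hsupp
      rw [SimpleGraph.Walk.support_cons, List.mem_cons]
      exact Or.inr hws
    have hchild1 : isChild R B.1 u.1 := adj_min_child hR hfin hdis h3 hadj (hmin u huS)
    have hchild2 : isChild R B.1 w.1 := adj_min_child hR hfin hdis h3 hwadj.symm (hmin w hwS)
    have hBne : B.1.Nonempty := (fm_subset hS₀ne B.2).2
    have huw : u = w := Subtype.ext
      (parent_unique hR hfin hdis h3 hBne u.2 w.2 hchild1 hchild2)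
    have h1 : s(B, u) = s(w, B) := by rw [Sym2.eq_swap, huw]
    exact hedge (by rw [h1]; exact hwe)

end BuildTree2
section BuildTree3

variable {R : Set (Sym2 ℕ × ℕ)} {S₀ : Set ℕ}
variable (hR : ∀ t ∈ R, IsTriplet t) (hfin : S₀.Finite)
  (hdis : ∀ S' ⊆ S₀, 3 ≤ S'.ncard → ∃ a ∈ S', ∃ b ∈ S', ¬ (tripGraph R S').Reachable a b)
  (h3 : 3 ≤ S₀.ncard)

include hR hfin hdis h3

lemma two_classes {B : Set ℕ} (hBsub : B ⊆ S₀) (h2 : 2 ≤ B.ncard) :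
    ∃ a ∈ B, ∃ b ∈ B, cls R B a ≠ cls R B b := by
  by_cases h3' : 3 ≤ B.ncard
  · obtain ⟨a, ha, b, hb, hnr⟩ := hdis B hBsub h3'
    refine ⟨a, ha, b, hb, fun h => hnr ?_⟩
    have : b ∈ cls R B a := h ▸ mem_cls_self hb
    exact this.2
  · have hBfin : B.Finite := hfin.subset hBsub
    have hne : B.Nonempty := by
      rw [← Set.ncard_pos hBfin]; omega
    obtain ⟨b₀, hb₀⟩ := hne
    obtain ⟨a, ha, hab⟩ : ∃ a ∈ B, a ≠ b₀ := by
      obtain ⟨a, h⟩ := Set.exists_ne_of_one_lt_ncard (by omega : 1 < B.ncard) b₀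
      exact ⟨a, h.1, h.2⟩
    refine ⟨a, ha, b₀, hb₀, fun h => hab ?_⟩
    have : b₀ ∈ cls R B a := h ▸ mem_cls_self hb₀
    exact (reach_eq_of_no_adj (no_adj_two hR hBfin (by omega)) this.2.symm).symm

lemma singleton_nbhd {x : ℕ} (hx : x ∈ S₀)
    (hmem : ({x} : Set ℕ) ∈ Fm R S₀) :
    ((bG R S₀).neighborSet ⟨{x}, hmem⟩).ncard = 1 := by
  have hS₀ne : S₀.Nonempty := S₀_nonempty hR hfin hdis h3
  have hsne : ({x} : Set ℕ) ≠ S₀ := by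
    intro h
    rw [← h, Set.ncard_singleton] at h3
    omega
  obtain ⟨P, hPF, hchild, -⟩ := parent_exists hR hfin hdis h3 hmem hsne
  have heq : (bG R S₀).neighborSet ⟨{x}, hmem⟩ = {⟨P, hPF⟩} := by
    ext u
    constructor
    · intro hu
      rcases hu with h | h
      · exact Set.mem_singleton_iff.mpr (Subtype.ext
          (parent_unique hR hfin hdis h3 (Set.singleton_nonempty x) u.2 hPF h hchild))
      · exfalso
        have := h.1
        rw [Set.ncard_singleton] at this
        omega
    · intro hu
      rw [Set.mem_singleton_iff] at hu
      subst hu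
      exact Or.inl hchild
  rw [heq, Set.ncard_singleton]

lemma nonsing_nbhd {B : Set ℕ} (hB : B ∈ Fm R S₀) (hBne : B ≠ S₀) (h2 : 2 ≤ B.ncard) :
    3 ≤ ((bG R S₀).neighborSet ⟨B, hB⟩).ncard := by
  have hS₀ne : S₀.Nonempty := S₀_nonempty hR hfin hdis h3
  have hBsub : B ⊆ S₀ := (fm_subset hS₀ne hB).1
  have hBnem : B.Nonempty := (fm_subset hS₀ne hB).2
  obtain ⟨a, ha, b, hb, hclsne⟩ := two_classes hR hfin hdis h3 hBsub h2
  obtain ⟨P, hPF, hchildP, -⟩ := parent_exists hR hfin hdis h3 hB hBne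
  have hclsaF : cls R B a ∈ Fm R S₀ :=
    fm_subtree hR hfin hdis subset_rfl hS₀ne hB (fm_children hR hfin hdis hBsub hBnem ha)
  have hclsbF : cls R B b ∈ Fm R S₀ :=
    fm_subtree hR hfin hdis subset_rfl hS₀ne hB (fm_children hR hfin hdis hBsub hBnem hb)
  have hchilda : isChild R (cls R B a) B := ⟨h2, cls_ne hR hfin hdis hBsub h2 ha, a, ha, rfl⟩
  have hchildb : isChild R (cls R B b) B := ⟨h2, cls_ne hR hfin hdis hBsub h2 hb, b, hb, rfl⟩
  haveI : Finite ↥(Fm R S₀) := (fm_finite hfin hS₀ne).to_subtype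
  refine three_le_ncard_of_mem (a := ⟨cls R B a, hclsaF⟩) (b := ⟨cls R B b, hclsbF⟩)
    (c := ⟨P, hPF⟩) (Or.inr hchilda) (Or.inr hchildb) (Or.inl hchildP) ?_ ?_ ?_
    (Set.toFinite _)
  · exact fun h => hclsne (congrArg Subtype.val h)
  · intro h
    have h' : cls R B a = P := congrArg Subtype.val h
    exact (child_ssub hchildP).2 (h' ▸ (cls_subset (R := R) (S := B) (x := a)))
  · intro h
    have h' : cls R B b = P := congrArg Subtype.val h
    exact (child_ssub hchildP).2 (h' ▸ (cls_subset (R := R) (S := B) (x := b)))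

lemma minblock_exists {X : Set ℕ} (hX : X ⊆ S₀) (hXne : X.Nonempty) :
    ∃ m ∈ Fm R S₀, X ⊆ m ∧ ∀ C ∈ Fm R S₀, X ⊆ C → m ⊆ C := by
  have hS₀ne : S₀.Nonempty := S₀_nonempty hR hfin hdis h3
  set 𝒞 : Set (Set ℕ) := {C | C ∈ Fm R S₀ ∧ X ⊆ C} with h𝒞
  have h𝒞ne : 𝒞.Nonempty := ⟨S₀, fam_self, hX⟩
  have h𝒞fin : 𝒞.Finite := (fm_finite hfin hS₀ne).subset (fun C hC => hC.1)
  obtain ⟨m, hm𝒞, hmmin⟩ := Set.exists_min_image 𝒞 Set.ncard h𝒞fin h𝒞ne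
  refine ⟨m, hm𝒞.1, hm𝒞.2, ?_⟩
  intro C hCF hXC
  rcases fm_laminar hR hfin hdis subset_rfl hS₀ne hm𝒞.1 hCF with h | h | h
  · exact h
  · have : m.ncard ≤ C.ncard := hmmin C ⟨hCF, hXC⟩
    rw [Set.eq_of_subset_of_ncard_le h this (hfin.subset (fm_subset hS₀ne hm𝒞.1).1)]
  · exfalso
    obtain ⟨z, hz⟩ := hXne
    rw [Set.eq_empty_iff_forall_notMem] at h
    exact h z ⟨hm𝒞.2 hz, hXC hz⟩

theorem build_compat (hlab : tLabelSet R ⊆ S₀) :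
    ∃ T : RTree ℕ S₀, ∀ t ∈ R, T.displays t := by
  classical
  have hS₀ne : S₀.Nonempty := S₀_nonempty hR hfin hdis h3
  haveI hFin : Finite ↥(Fm R S₀) := (fm_finite hfin hS₀ne).to_subtype
  set lab : ↥S₀ → ↥(Fm R S₀) :=
    fun x => ⟨{x.1}, fm_singleton_mem hR hfin hdis h3 subset_rfl x.1 x.2⟩ with hlabdef
  have hlabelInj : Function.Injective lab := by
    intro x y h
    have h' : ({x.1} : Set ℕ) = {y.1} := congrArg Subtype.val h
    exact Subtype.ext (Set.singleton_eq_singleton_iff.mp h')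
  have hleafIff : ∀ v : ↥(Fm R S₀), (∃ l : ↥S₀, lab l = v) ↔
      (((bG R S₀).neighborSet v).ncard = 1 ∧ v ≠ ⟨S₀, fam_self⟩) := by
    intro v
    constructor
    · rintro ⟨l, rfl⟩
      refine ⟨singleton_nbhd hR hfin hdis h3 l.2 _, ?_⟩
      intro h
      have h' : ({l.1} : Set ℕ) = S₀ := congrArg Subtype.val h
      rw [← h', Set.ncard_singleton] at h3
      omega
    · rintro ⟨h1, hroot⟩
      have hBne : v.1 ≠ S₀ := fun h => hroot (Subtype.ext h)
      have hBnem : v.1.Nonempty := (fm_subset hS₀ne v.2).2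
      by_cases h2 : 2 ≤ v.1.ncard
      · exfalso
        have := nonsing_nbhd hR hfin hdis h3 v.2 hBne h2
        have heq : (⟨v.1, v.2⟩ : ↥(Fm R S₀)) = v := Subtype.eta _ _
        rw [heq] at this
        omega
      · have h1' : v.1.ncard = 1 := by
          have := Set.ncard_pos (hfin.subset (fm_subset hS₀ne v.2).1) |>.mpr hBnem
          omega
        obtain ⟨x, hx⟩ := Set.ncard_eq_one.mp h1'
        have hxS : x ∈ S₀ := (fm_subset hS₀ne v.2).1 (hx ▸ rfl)
        exact ⟨⟨x, hxS⟩, Subtype.ext hx.symm⟩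
  have hnoDeg2 : ∀ v : ↥(Fm R S₀), v ≠ ⟨S₀, fam_self⟩ →
      ((bG R S₀).neighborSet v).ncard ≠ 2 := by
    intro v hroot
    have hBne : v.1 ≠ S₀ := fun h => hroot (Subtype.ext h)
    have hBnem : v.1.Nonempty := (fm_subset hS₀ne v.2).2
    by_cases h2 : 2 ≤ v.1.ncard
    · have := nonsing_nbhd hR hfin hdis h3 v.2 hBne h2
      have heq : (⟨v.1, v.2⟩ : ↥(Fm R S₀)) = v := Subtype.eta _ _
      rw [heq] at this
      omega
    · have h1' : v.1.ncard = 1 := by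
        have := Set.ncard_pos (hfin.subset (fm_subset hS₀ne v.2).1) |>.mpr hBnem
        omega
      obtain ⟨x, hx⟩ := Set.ncard_eq_one.mp h1'
      have := singleton_nbhd hR hfin hdis h3
        ((fm_subset hS₀ne v.2).1 (hx ▸ rfl)) (hx ▸ v.2)
      have heq : (⟨{x}, hx ▸ v.2⟩ : ↥(Fm R S₀)) = v := Subtype.ext hx.symm
      rw [heq] at this
      omega
  set T : RTree ℕ S₀ := {
    V := ↥(Fm R S₀)
    fV := Fintype.ofFinite _
    G := bG R S₀
    isTree := ⟨bG_connected hR hfin hdis h3, bG_acyclic hR hfin hdis h3⟩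
    root := ⟨S₀, fam_self⟩
    label := lab
    labelInj := hlabelInj
    leafIff := hleafIff
    noDeg2 := hnoDeg2 } with hTdef
  have hanc : ∀ (u : T.V) (B : Set ℕ) (hB : B ∈ Fm R S₀),
      T.anc u ⟨B, hB⟩ ↔ B ⊆ u.1 := by
    intro u B hB
    obtain ⟨p, hp, hsupp⟩ := chain_exists hR hfin hdis h3 B hB
    rw [T.anc_iff_mem p hp]
    exact hsupp u
  have hCA : ∀ (z : ℕ) (hz : z ∈ S₀) (w : T.V), T.anc w (T.label ⟨z, hz⟩) ↔ z ∈ w.1 := by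
    intro z hz w
    have h := hanc w {z} (fm_singleton_mem hR hfin hdis h3 subset_rfl z hz)
    exact ⟨fun hh => Set.singleton_subset_iff.mp (h.mp hh),
      fun hh => h.mpr (Set.singleton_subset_iff.mpr hh)⟩
  refine ⟨T, ?_⟩
  intro t ht a b c htabc
  -- distinctness of a b c and membership in S₀
  obtain ⟨a', b', c', hab', hac', hbc', heq'⟩ := hR t ht
  rw [htabc] at heq'
  obtain ⟨hs, hcc⟩ := Prod.ext_iff.mp heq'
  subst hcc
  have hab : a ≠ b := by
    rcases Sym2.eq_iff.mp hs with ⟨rfl, rfl⟩ | ⟨rfl, rfl⟩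
    · exact hab'
    · exact fun h => hab' h.symm
  have haS : a ∈ S₀ := hlab ⟨t, ht, Or.inl (by rw [htabc]; exact Sym2.mem_mk_left a b)⟩
  have hbS : b ∈ S₀ := hlab ⟨t, ht, Or.inl (by rw [htabc]; exact Sym2.mem_mk_right a b)⟩
  have hcS : c ∈ S₀ := hlab ⟨t, ht, Or.inr (by rw [htabc])⟩
  -- minimal blocks
  have hXab : ({a, b} : Set ℕ) ⊆ S₀ := by
    intro z hz
    rcases Set.mem_insert_iff.mp hz with rfl | hz
    · exact haS
    · rw [Set.mem_singleton_iff] at hz; subst hz; exact hbS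
  have hXabc : ({a, b, c} : Set ℕ) ⊆ S₀ := by
    intro z hz
    rcases Set.mem_insert_iff.mp hz with rfl | hz
    · exact haS
    rcases Set.mem_insert_iff.mp hz with rfl | hz
    · exact hbS
    · rw [Set.mem_singleton_iff] at hz; subst hz; exact hcS
  obtain ⟨m, hmF, hXm, hmmin⟩ := minblock_exists hR hfin hdis h3 hXab ⟨a, Set.mem_insert _ _⟩
  obtain ⟨M, hMF, hXM, hMmin⟩ :=
    minblock_exists hR hfin hdis h3 hXabc ⟨a, Set.mem_insert _ _⟩
  have ham : a ∈ m := hXm (Set.mem_insert _ _)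
  have hbm : b ∈ m := hXm (Set.mem_insert_of_mem _ rfl)
  have hmsub : m ⊆ S₀ := (fm_subset hS₀ne hmF).1
  have hcm : c ∉ m := by
    intro hcm
    have h2m : 2 ≤ m.ncard := two_le_ncard_of_mem ham hbm hab (hfin.subset hmsub)
    have hadjab : (tripGraph R m).Adj a b := ⟨hab, ham, hbm, c, hcm, htabc ▸ ht⟩
    have hclssub : ({a, b} : Set ℕ) ⊆ cls R m a := by
      intro z hz
      rcases Set.mem_insert_iff.mp hz with rfl | hz
      · exact mem_cls_self ham
      · rw [Set.mem_singleton_iff] at hz; subst hz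
        exact ⟨hbm, hadjab.reachable⟩
    have hclsF : cls R m a ∈ Fm R S₀ :=
      fm_subtree hR hfin hdis subset_rfl hS₀ne hmF
        (fm_children hR hfin hdis hmsub ⟨a, ham⟩ ham)
    have hsub := hmmin _ hclsF hclssub
    exact cls_ne hR hfin hdis hmsub h2m ham
      (Set.Subset.antisymm cls_subset hsub)
  have hmM : m ⊆ M := hmmin M hMF (fun z hz => hXM (by
    rcases Set.mem_insert_iff.mp hz with rfl | hz
    · exact Set.mem_insert _ _
    · rw [Set.mem_singleton_iff] at hz; subst hz
      exact Set.mem_insert_of_mem _ (Set.mem_insert _ _)))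
  have hMmne : M ≠ m := fun h =>
    hcm (h ▸ hXM (Set.mem_insert_of_mem _ (Set.mem_insert_of_mem _ rfl)))
  refine ⟨haS, hbS, hcS, ⟨m, hmF⟩, ⟨M, hMF⟩, ?_, ?_, ?_, ?_⟩
  · constructor
    · intro v hv
      rcases Set.mem_insert_iff.mp hv with rfl | hv
      · exact (hCA a haS _).mpr ham
      · rw [Set.mem_singleton_iff] at hv; subst hv
        exact (hCA b hbS _).mpr hbm
    · intro w hw
      have hza : a ∈ w.1 := (hCA a haS w).mp (hw _ (Set.mem_insert _ _))
      have hzb : b ∈ w.1 := (hCA b hbS w).mp (hw _ (Set.mem_insert_of_mem _ rfl))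
      refine (hanc w m hmF).mpr (hmmin w.1 w.2 ?_)
      intro z hz
      rcases Set.mem_insert_iff.mp hz with rfl | hz
      · exact hza
      · rw [Set.mem_singleton_iff] at hz; subst hz; exact hzb
  · constructor
    · intro v hv
      rcases Set.mem_insert_iff.mp hv with rfl | hv
      · exact (hCA a haS _).mpr (hXM (Set.mem_insert _ _))
      rcases Set.mem_insert_iff.mp hv with rfl | hv
      · exact (hCA b hbS _).mpr (hXM (Set.mem_insert_of_mem _ (Set.mem_insert _ _)))
      · rw [Set.mem_singleton_iff] at hv; subst hv
        exact (hCA c hcS _).mpr (hXM (Set.mem_insert_of_mem _ (Set.mem_insert_of_mem _ rfl)))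
    · intro w hw
      have hza : a ∈ w.1 := (hCA a haS w).mp (hw _ (Set.mem_insert _ _))
      have hzb : b ∈ w.1 := (hCA b hbS w).mp
        (hw _ (Set.mem_insert_of_mem _ (Set.mem_insert _ _)))
      have hzc : c ∈ w.1 := (hCA c hcS w).mp
        (hw _ (Set.mem_insert_of_mem _ (Set.mem_insert_of_mem _ rfl)))
      refine (hanc w M hMF).mpr (hMmin w.1 w.2 ?_)
      intro z hz
      rcases Set.mem_insert_iff.mp hz with rfl | hz
      · exact hza
      rcases Set.mem_insert_iff.mp hz with rfl | hz
      · exact hzb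
      · rw [Set.mem_singleton_iff] at hz; subst hz; exact hzc
  · exact (hanc ⟨M, hMF⟩ m hmF).mpr hmM
  · intro h
    exact hMmne (congrArg Subtype.val h)

end BuildTree3
/-- for n ≥ 3, any incompatible set of more than n-1 rooted triplets over
n labels has an incompatible proper subset. -/
theorem incompatible_triplets_upper_bound (n : ℕ) (hn : 3 ≤ n)
    (R : Set (Sym2 ℕ × ℕ)) (hfin : R.Finite) (hR : ∀ t ∈ R, IsTriplet t)
    (hlab : (tLabelSet R).ncard = n)
    (hinc : ¬ RCompat (tLabelSet R) R)
    (hcard : n - 1 < R.ncard) :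
    ∃ R', R' ⊂ R ∧ ¬ RCompat (tLabelSet R') R' := by
  classical
  have hLfin : (tLabelSet R).Finite := by
    by_contra h
    rw [Set.Infinite.ncard h] at hlab; omega
  have h3 : 3 ≤ (tLabelSet R).ncard := by omega
  have hstep1 : ∃ S', S' ⊆ tLabelSet R ∧ 3 ≤ S'.ncard ∧
      (∀ x ∈ S', ∀ y ∈ S', (tripGraph R S').Reachable x y) := by
    by_contra hcon
    push_neg at hcon
    apply hinc
    exact build_compat hR hLfin
      (fun S' hS' h3' => hcon S' hS' h3') h3 subset_rfl
  obtain ⟨S', hS'L, hS'3, hS'conn⟩ := hstep1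
  have hS'fin := hLfin.subset hS'L
  obtain ⟨R₀, hR₀R, hR₀fin, hR₀card, hR₀conn, hS'lab⟩ := conn_extract hS'fin hS'3 hS'conn
  have hS'n : S'.ncard ≤ n := hlab ▸ Set.ncard_le_ncard hS'L hLfin
  have hR₀lt : R₀.ncard < R.ncard := by omega
  have hR₀ss : R₀ ⊂ R := HasSubset.Subset.ssubset_of_ne hR₀R
    (fun he => by rw [he] at hR₀lt; omega)
  refine ⟨R₀, hR₀ss, ?_⟩
  rintro ⟨T, hT⟩
  exact RTree.easy_disconnect T hT hS'lab hS'3 hR₀conn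
end
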